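/- arXiv:2005.10042 — 4 statements merged into one kernel-verified Lean document; each statement's English description precedes it below -/
import Mathlib

section
/- If y is a solution of the silicosis system on [0,T), then y : [0,T) → X is continuous in the norm of X, and the series Σ_{i≥1} i M_i(t) converges uniformly on compact subintervals of [0,T). -/
open MeasureTheory Set Filter
open Topology

noncomputable section

/-- A solution of the silicosis system (Definition 2.2) on the time domain `D`
(`D = Set.Ico 0 T` or `D = Set.Ici 0`): componentwise continuous, nonnegative,
with locally bounded norm `‖y(t)‖ = x(t) + ∑ (i+1) Mᵢ(t)`, the integrability
conditions, and the integrated versions of the equations. -/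
structure IsSol (k p q : ℕ → ℝ) (r α : ℝ) (D : Set ℝ) (x : ℝ → ℝ) (M : ℕ → ℝ → ℝ) : Prop where
  x_nonneg : ∀ t ∈ D, 0 ≤ x t
  M_nonneg : ∀ (i : ℕ), ∀ t ∈ D, 0 ≤ M i t
  x_cont : ContinuousOn x D
  M_cont : ∀ i : ℕ, ContinuousOn (M i) D
  summable_norm : ∀ t ∈ D, Summable (fun i : ℕ => ((i : ℝ) + 1) * M i t)
  norm_bdd : ∀ T' : ℝ, Icc (0:ℝ) T' ⊆ D →
    ∃ C : ℝ, ∀ t ∈ Icc (0:ℝ) T', x t + ∑' i : ℕ, ((i : ℝ) + 1) * M i t ≤ C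
  summable_mom : ∀ t ∈ D,
    Summable (fun i : ℕ => ((i : ℝ) * p i + (i : ℝ) * q i + k i) * M i t)
  x_int : ∀ t ∈ D, IntervalIntegrable x volume 0 t
  mom_int : ∀ t ∈ D,
    IntervalIntegrable (fun s => ∑' i : ℕ, ((i : ℝ) * p i + (i : ℝ) * q i + k i) * M i s)
      volume 0 t
  eq_M0 : ∀ t ∈ D,
    M 0 t = M 0 0 + r * t - ∫ s in (0:ℝ)..t, (k 0 * x s * M 0 s + (p 0 + q 0) * M 0 s)
  eq_M : ∀ i : ℕ, 1 ≤ i → ∀ t ∈ D,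
    M i t = M i 0 + ∫ s in (0:ℝ)..t,
      (k (i-1) * x s * M (i-1) s - k i * x s * M i s - (p i + q i) * M i s)
  eq_x : ∀ t ∈ D,
    x t = x 0 + α * t + ∫ s in (0:ℝ)..t,
      (-(x s * ∑' i : ℕ, k i * M i s) + ∑' i : ℕ, (i : ℝ) * q i * M i s)

theorem my_dini {F : ℕ → ℝ → ℝ} {f : ℝ → ℝ} {K : Set ℝ} (hK : IsCompact K)
    (hFc : ∀ n, ContinuousOn (F n) K) (hfc : ContinuousOn f K)
    (hmono : ∀ t ∈ K, Monotone fun n => F n t)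
    (hlim : ∀ t ∈ K, Tendsto (fun n => F n t) atTop (𝓝 (f t))) :
    TendstoUniformlyOn F f atTop K := by
  rw [Metric.tendstoUniformlyOn_iff]
  intro ε hε
  have hle : ∀ t ∈ K, ∀ n, F n t ≤ f t := fun t ht n =>
    Monotone.ge_of_tendsto (hmono t ht) (hlim t ht) n
  have key : ∀ t : ℝ, ∃ (n : ℕ) (O : Set ℝ), IsOpen O ∧ t ∈ O ∧
      (t ∈ K → ∀ s ∈ O ∩ K, f s - F n s < ε) := by
    intro t
    by_cases ht : t ∈ K
    · obtain ⟨n, hn⟩ : ∃ n, f t - F n t < ε / 2 := by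
        have := (hlim t ht).eventually
          (eventually_gt_nhds (show f t - ε/2 < f t by linarith))
        rcases this.exists with ⟨n, hn⟩
        exact ⟨n, by linarith⟩
      have hcont : ContinuousWithinAt (fun s => f s - F n s) K t :=
        ((hfc t ht).sub ((hFc n) t ht))
      have hmem : {s | f s - F n s < ε} ∈ nhdsWithin t K :=
        hcont (Iio_mem_nhds (show f t - F n t < ε by linarith))
      rw [mem_nhdsWithin] at hmem
      obtain ⟨O, hO, htO, hsub⟩ := hmem
      exact ⟨n, O, hO, htO, fun _ s hs => hsub ⟨hs.1, hs.2⟩⟩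
    · exact ⟨0, univ, isOpen_univ, mem_univ t, fun h => absurd h ht⟩
  choose n O hOopen hmem hprop using key
  obtain ⟨I, hIK, hI⟩ := hK.elim_nhds_subcover O (fun t _ => (hOopen t).mem_nhds (hmem t))
  set N := I.sup n with hN
  filter_upwards [eventually_ge_atTop N] with m hm t ht
  have : t ∈ ⋃ x ∈ I, O x := hI ht
  simp only [mem_iUnion] at this
  obtain ⟨u, huI, hOu⟩ := this
  have h1 : f t - F (n u) t < ε := hprop u (hIK u huI) t ⟨hOu, ht⟩
  have h2 : F (n u) t ≤ F m t := hmono t ht (le_trans (Finset.le_sup huI) hm)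
  have h3 : F m t ≤ f t := hle t ht m
  rw [Real.dist_eq, abs_of_nonneg (by linarith)]
  linarith

def silMom (k p q : ℕ → ℝ) (M : ℕ → ℝ → ℝ) (s : ℝ) : ℝ :=
  ∑' i : ℕ, ((i:ℝ) * p i + (i:ℝ) * q i + k i) * M i s
def silMomK (k : ℕ → ℝ) (M : ℕ → ℝ → ℝ) (s : ℝ) : ℝ := ∑' i : ℕ, k i * M i s
def silQ (q : ℕ → ℝ) (M : ℕ → ℝ → ℝ) (s : ℝ) : ℝ := ∑' i : ℕ, (i:ℝ) * q i * M i s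
def silS (M : ℕ → ℝ → ℝ) (t : ℝ) : ℝ := ∑' i : ℕ, ((i:ℝ)+1) * M i t
def silA (M : ℕ → ℝ → ℝ) (N : ℕ) (t : ℝ) : ℝ := ∑ i ∈ Finset.range N, ((i:ℝ)+1) * M i t
def silhx (k q : ℕ → ℝ) (x : ℝ → ℝ) (M : ℕ → ℝ → ℝ) (s : ℝ) : ℝ :=
  -(x s * silMomK k M s) + silQ q M s
def silh0 (k p q : ℕ → ℝ) (x : ℝ → ℝ) (M : ℕ → ℝ → ℝ) (s : ℝ) : ℝ :=
  -(k 0 * x s * M 0 s + (p 0 + q 0) * M 0 s)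
def silhM (k p q : ℕ → ℝ) (x : ℝ → ℝ) (M : ℕ → ℝ → ℝ) (i : ℕ) (s : ℝ) : ℝ :=
  k (i-1) * x s * M (i-1) s - k i * x s * M i s - (p i + q i) * M i s
def silPsi (k p q : ℕ → ℝ) (x : ℝ → ℝ) (M : ℕ → ℝ → ℝ) (N : ℕ) (s : ℝ) : ℝ :=
  silhx k q x M s + (silh0 k p q x M s + ∑ i ∈ Finset.Ico 1 N, ((i:ℝ)+1) * silhM k p q x M i s)
def silW (k p q : ℕ → ℝ) (M : ℕ → ℝ → ℝ) (s : ℝ) : ℝ :=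
  2 * silMom k p q M s + (p 0 + q 0) * M 0 s

theorem silPsi_eq (k p q : ℕ → ℝ) (x : ℝ → ℝ) (M : ℕ → ℝ → ℝ) (N : ℕ) (s : ℝ) :
    silPsi k p q x M (N+1) s
      = x s * (∑ j ∈ Finset.range N, k j * M j s) - x s * silMomK k M s
        - ((N:ℝ)+1) * (k N * x s * M N s)
        - (∑ i ∈ Finset.range (N+1), ((i:ℝ)+1) * ((p i + q i) * M i s))
        + silQ q M s := by
  induction N with
  | zero =>
    simp only [zero_add, silPsi, silhx, silh0, Finset.Ico_self, Finset.sum_empty,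
      Finset.range_zero, Finset.sum_range_one, Nat.cast_zero]
    ring
  | succ n ih =>
    have step : silPsi k p q x M (n+1+1) s
        = silPsi k p q x M (n+1) s + (((n+1:ℕ):ℝ)+1) * silhM k p q x M (n+1) s := by
      simp only [silPsi, Finset.sum_Ico_succ_top (Nat.succ_le_succ (Nat.zero_le n))]
      ring
    rw [step, ih, silhM]
    simp only [Nat.add_sub_cancel, Finset.sum_range_succ]
    push_cast
    ring

variable {k p q : ℕ → ℝ} {r α T : ℝ} {x : ℝ → ℝ} {M : ℕ → ℝ → ℝ}

section ptwise

set_option linter.unusedSectionVars false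

variable (hk : ∀ i, 0 ≤ k i) (hp : ∀ i, 0 ≤ p i) (hq : ∀ i, 0 ≤ q i)
  (hsol : IsSol k p q r α (Set.Ico 0 T) x M) {s : ℝ} (hs : s ∈ Set.Ico (0:ℝ) T)

include hk hp hq hsol hs

theorem sil_momterm_nonneg (i : ℕ) : 0 ≤ ((i:ℝ) * p i + (i:ℝ) * q i + k i) * M i s :=
  mul_nonneg (add_nonneg (add_nonneg (mul_nonneg i.cast_nonneg (hp i))
    (mul_nonneg i.cast_nonneg (hq i))) (hk i)) (hsol.M_nonneg i s hs)

theorem sil_summable_kM : Summable fun i => k i * M i s := by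
  refine Summable.of_nonneg_of_le (fun i => mul_nonneg (hk i) (hsol.M_nonneg i s hs))
    (fun i => ?_) (hsol.summable_mom s hs)
  have h1 : 0 ≤ (i:ℝ) * p i + (i:ℝ) * q i :=
    add_nonneg (mul_nonneg i.cast_nonneg (hp i)) (mul_nonneg i.cast_nonneg (hq i))
  nlinarith [hsol.M_nonneg i s hs]

theorem sil_summable_qM : Summable fun i : ℕ => (i:ℝ) * q i * M i s := by
  refine Summable.of_nonneg_of_le
    (fun i => mul_nonneg (mul_nonneg i.cast_nonneg (hq i)) (hsol.M_nonneg i s hs))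
    (fun i => ?_) (hsol.summable_mom s hs)
  have h1 : 0 ≤ (i:ℝ) * p i + k i := add_nonneg (mul_nonneg i.cast_nonneg (hp i)) (hk i)
  nlinarith [hsol.M_nonneg i s hs]

theorem sil_mom_nonneg : 0 ≤ silMom k p q M s :=
  tsum_nonneg (sil_momterm_nonneg hk hp hq hsol hs)

theorem sil_momK_nonneg : 0 ≤ silMomK k M s :=
  tsum_nonneg fun i => mul_nonneg (hk i) (hsol.M_nonneg i s hs)

theorem sil_Q_nonneg : 0 ≤ silQ q M s :=
  tsum_nonneg fun i => mul_nonneg (mul_nonneg i.cast_nonneg (hq i)) (hsol.M_nonneg i s hs)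

theorem sil_momK_le_mom : silMomK k M s ≤ silMom k p q M s := by
  refine Summable.tsum_le_tsum (fun i => ?_) (sil_summable_kM hk hp hq hsol hs) (hsol.summable_mom s hs)
  have h1 : 0 ≤ (i:ℝ) * p i + (i:ℝ) * q i :=
    add_nonneg (mul_nonneg i.cast_nonneg (hp i)) (mul_nonneg i.cast_nonneg (hq i))
  nlinarith [hsol.M_nonneg i s hs]

theorem sil_Q_le_mom : silQ q M s ≤ silMom k p q M s := by
  refine Summable.tsum_le_tsum (fun i => ?_) (sil_summable_qM hk hp hq hsol hs) (hsol.summable_mom s hs)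
  have h1 : 0 ≤ (i:ℝ) * p i + k i := add_nonneg (mul_nonneg i.cast_nonneg (hp i)) (hk i)
  nlinarith [hsol.M_nonneg i s hs]

theorem sil_partial_le_momK (N : ℕ) :
    ∑ j ∈ Finset.range N, k j * M j s ≤ silMomK k M s :=
  Summable.sum_le_tsum _ (fun i _ => mul_nonneg (hk i) (hsol.M_nonneg i s hs))
    (sil_summable_kM hk hp hq hsol hs)

theorem sil_S_nonneg : 0 ≤ silS M s :=
  tsum_nonneg fun i =>
    mul_nonneg (by positivity : (0:ℝ) ≤ (i:ℝ)+1) (hsol.M_nonneg i s hs)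

theorem sil_partial_le_S (N : ℕ) : silA M N s ≤ silS M s :=
  Summable.sum_le_tsum _ (fun i _ => mul_nonneg (by positivity : (0:ℝ) ≤ (i:ℝ)+1) (hsol.M_nonneg i s hs))
    (hsol.summable_norm s hs)

end ptwise

section bounds

set_option linter.unusedSectionVars false

variable (hk : ∀ i, 0 ≤ k i) (hp : ∀ i, 0 ≤ p i) (hq : ∀ i, 0 ≤ q i)
  (hsol : IsSol k p q r α (Set.Ico 0 T) x M) {s : ℝ} (hs : s ∈ Set.Ico (0:ℝ) T)

include hk hp hq hsol hs

theorem sil_pq_partial_le (N : ℕ) :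
    ∑ i ∈ Finset.range (N+1), ((i:ℝ)+1) * ((p i + q i) * M i s) ≤ silW k p q M s := by
  have peel : ∑ i ∈ Finset.range (N+1), ((i:ℝ)+1) * ((p i + q i) * M i s)
      = (∑ i ∈ Finset.range N, (((i+1:ℕ):ℝ)+1) * ((p (i+1) + q (i+1)) * M (i+1) s))
        + (p 0 + q 0) * M 0 s := by
    rw [Finset.sum_range_succ']
    norm_num
  have hterm : ∀ i ∈ Finset.range N, (((i+1:ℕ):ℝ)+1) * ((p (i+1) + q (i+1)) * M (i+1) s)
      ≤ 2 * ((((i+1:ℕ):ℝ)) * p (i+1) + ((i+1:ℕ):ℝ) * q (i+1) + k (i+1)) * M (i+1) s := by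
    intro i _
    have hM := hsol.M_nonneg (i+1) s hs
    have hk' := hk (i+1); have hp' := hp (i+1); have hq' := hq (i+1)
    have hi : (0:ℝ) ≤ (i:ℝ) := i.cast_nonneg
    push_cast
    nlinarith [mul_nonneg (mul_nonneg hi hp') hM, mul_nonneg (mul_nonneg hi hq') hM,
      mul_nonneg hk' hM]
  have hsum : ∑ i ∈ Finset.range N,
        ((((i+1:ℕ):ℝ)) * p (i+1) + ((i+1:ℕ):ℝ) * q (i+1) + k (i+1)) * M (i+1) s
      ≤ silMom k p q M s := by
    have h1 : ∑ i ∈ Finset.range (N+1), ((i:ℝ) * p i + (i:ℝ) * q i + k i) * M i s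
        ≤ silMom k p q M s :=
      Summable.sum_le_tsum _ (fun i _ => sil_momterm_nonneg hk hp hq hsol hs i) (hsol.summable_mom s hs)
    have h2 : ∑ i ∈ Finset.range (N+1), ((i:ℝ) * p i + (i:ℝ) * q i + k i) * M i s
        = (∑ i ∈ Finset.range N,
            ((((i+1:ℕ):ℝ)) * p (i+1) + ((i+1:ℕ):ℝ) * q (i+1) + k (i+1)) * M (i+1) s)
          + ((0:ℝ) * p 0 + (0:ℝ) * q 0 + k 0) * M 0 s := by
      rw [Finset.sum_range_succ']
      norm_num
    have h3 : 0 ≤ ((0:ℝ) * p 0 + (0:ℝ) * q 0 + k 0) * M 0 s := by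
      have := sil_momterm_nonneg hk hp hq hsol hs 0
      simpa using this
    simp only [h2] at h1
    linarith
  have h2 : (∑ i ∈ Finset.range N, (((i+1:ℕ):ℝ)+1) * ((p (i+1) + q (i+1)) * M (i+1) s))
      ≤ 2 * silMom k p q M s := by
    calc _ ≤ ∑ i ∈ Finset.range N,
          2 * ((((i+1:ℕ):ℝ)) * p (i+1) + ((i+1:ℕ):ℝ) * q (i+1) + k (i+1)) * M (i+1) s :=
        Finset.sum_le_sum hterm
      _ = 2 * ∑ i ∈ Finset.range N,
          ((((i+1:ℕ):ℝ)) * p (i+1) + ((i+1:ℕ):ℝ) * q (i+1) + k (i+1)) * M (i+1) s := by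
        rw [Finset.mul_sum]; congr 1; ext i; ring
      _ ≤ 2 * silMom k p q M s := by linarith
  rw [peel, silW]
  linarith

theorem silPsi_le_mom (N : ℕ) (hx0 : 0 ≤ x s) :
    silPsi k p q x M (N+1) s ≤ silMom k p q M s := by
  rw [silPsi_eq]
  have h1 : x s * (∑ j ∈ Finset.range N, k j * M j s) ≤ x s * silMomK k M s :=
    mul_le_mul_of_nonneg_left (sil_partial_le_momK hk hp hq hsol hs N) hx0
  have h2 : 0 ≤ ((N:ℝ)+1) * (k N * x s * M N s) := by
    have := hsol.M_nonneg N s hs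
    have := hk N
    positivity
  have h3 : 0 ≤ ∑ i ∈ Finset.range (N+1), ((i:ℝ)+1) * ((p i + q i) * M i s) :=
    Finset.sum_nonneg fun i _ => by
      have := hsol.M_nonneg i s hs; have := hp i; have := hq i
      positivity
  have h4 := sil_Q_le_mom hk hp hq hsol hs
  linarith

theorem silPsi_lb (N : ℕ) (hx0 : 0 ≤ x s) :
    -(x s * (silMomK k M s - ∑ j ∈ Finset.range N, k j * M j s))
      - ((N:ℝ)+1) * (k N * x s * M N s) - silW k p q M s
      ≤ silPsi k p q x M (N+1) s := by
  rw [silPsi_eq]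
  have h1 := sil_pq_partial_le hk hp hq hsol hs N
  have h4 := sil_Q_nonneg hk hp hq hsol hs
  linarith

end bounds

theorem sil_tsum_aesm {T' : ℝ} {f : ℕ → ℝ → ℝ}
    (hc : ∀ i, ContinuousOn (f i) (Icc (0:ℝ) T'))
    (hsum : ∀ s ∈ Ioc (0:ℝ) T', Summable fun i => f i s) :
    AEStronglyMeasurable (fun s => ∑' i, f i s) (volume.restrict (Ioc (0:ℝ) T')) := by
  apply aestronglyMeasurable_of_tendsto_ae atTop
    (f := fun n s => ∑ i ∈ Finset.range n, f i s)
  · intro n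
    exact ((continuousOn_finset_sum _ fun i _ => hc i).mono Ioc_subset_Icc_self
      ).aestronglyMeasurable measurableSet_Ioc
  · filter_upwards [ae_restrict_mem measurableSet_Ioc] with s hs
    exact (hsum s hs).hasSum.tendsto_sum_nat

section integ

set_option linter.unusedSectionVars false

variable (hk : ∀ i, 0 ≤ k i) (hp : ∀ i, 0 ≤ p i) (hq : ∀ i, 0 ≤ q i)
  (hsol : IsSol k p q r α (Set.Ico 0 T) x M) {T' : ℝ}
  (hK : Icc (0:ℝ) T' ⊆ Ico (0:ℝ) T) (h0T' : 0 ≤ T')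
  {C : ℝ} (hC : ∀ t ∈ Icc (0:ℝ) T', x t ≤ C) (hC0 : 0 ≤ C)

include hk hp hq hsol hK h0T'

theorem sil_mem_D {s : ℝ} (hs : s ∈ Icc (0:ℝ) T') : s ∈ Ico (0:ℝ) T := hK hs

theorem sil_x_contOn : ContinuousOn x (Icc (0:ℝ) T') := hsol.x_cont.mono hK

theorem sil_M_contOn (i : ℕ) : ContinuousOn (M i) (Icc (0:ℝ) T') := (hsol.M_cont i).mono hK

theorem sil_mom_intInt : IntervalIntegrable (silMom k p q M) volume 0 T' :=
  hsol.mom_int T' (hK ⟨h0T', le_rfl⟩)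

theorem sil_momK_aesm :
    AEStronglyMeasurable (silMomK k M) (volume.restrict (Ioc (0:ℝ) T')) :=
  sil_tsum_aesm (fun i => (continuousOn_const.mul (sil_M_contOn hk hp hq hsol hK h0T' i)))
    (fun s hs => sil_summable_kM hk hp hq hsol (hK ⟨le_of_lt hs.1, hs.2⟩))

theorem sil_Q_aesm :
    AEStronglyMeasurable (silQ q M) (volume.restrict (Ioc (0:ℝ) T')) :=
  sil_tsum_aesm (fun i => (continuousOn_const.mul (sil_M_contOn hk hp hq hsol hK h0T' i)))
    (fun s hs => sil_summable_qM hk hp hq hsol (hK ⟨le_of_lt hs.1, hs.2⟩))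

include hC hC0

theorem sil_hx_intInt : IntervalIntegrable (silhx k q x M) volume 0 T' := by
  rw [intervalIntegrable_iff, uIoc_of_le h0T']
  have hmomint : IntegrableOn (fun s => (C+1) * silMom k p q M s) (Ioc (0:ℝ) T') volume := by
    have h1 := (intervalIntegrable_iff.mp (sil_mom_intInt hk hp hq hsol hK h0T'))
    rw [uIoc_of_le h0T'] at h1
    exact h1.const_mul _
  apply Integrable.mono' hmomint
  · have hxm : AEStronglyMeasurable x (volume.restrict (Ioc (0:ℝ) T')) :=
      ((sil_x_contOn hk hp hq hsol hK h0T').mono Ioc_subset_Icc_self).aestronglyMeasurable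
        measurableSet_Ioc
    exact ((hxm.mul (sil_momK_aesm hk hp hq hsol hK h0T')).neg).add
      (sil_Q_aesm hk hp hq hsol hK h0T')
  · filter_upwards [ae_restrict_mem measurableSet_Ioc] with s hs
    have hsD : s ∈ Ico (0:ℝ) T := hK ⟨le_of_lt hs.1, hs.2⟩
    have h1 : x s * silMomK k M s ≤ C * silMom k p q M s :=
      mul_le_mul (hC s ⟨le_of_lt hs.1, hs.2⟩) (sil_momK_le_mom hk hp hq hsol hsD)
        (sil_momK_nonneg hk hp hq hsol hsD) hC0
    have h2 := sil_Q_le_mom hk hp hq hsol hsD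
    have h3 := sil_Q_nonneg hk hp hq hsol hsD
    have h4 := sil_mom_nonneg hk hp hq hsol hsD
    have h5 : 0 ≤ x s * silMomK k M s :=
      mul_nonneg (hsol.x_nonneg s hsD) (sil_momK_nonneg hk hp hq hsol hsD)
    rw [Real.norm_eq_abs, silhx, abs_le]
    constructor <;> nlinarith

omit hC hC0

theorem sil_hM_contOn (i : ℕ) : ContinuousOn (silhM k p q x M i) (Icc (0:ℝ) T') := by
  unfold silhM
  have hx' := sil_x_contOn hk hp hq hsol hK h0T'
  have hM' := sil_M_contOn hk hp hq hsol hK h0T'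
  exact (((continuousOn_const.mul hx').mul (hM' _)).sub
    ((continuousOn_const.mul hx').mul (hM' _))).sub (continuousOn_const.mul (hM' _))

theorem sil_h0_contOn : ContinuousOn (silh0 k p q x M) (Icc (0:ℝ) T') := by
  unfold silh0
  have hx' := sil_x_contOn hk hp hq hsol hK h0T'
  have hM' := sil_M_contOn hk hp hq hsol hK h0T'
  exact (((continuousOn_const.mul hx').mul (hM' 0)).add (continuousOn_const.mul (hM' 0))).neg

include hC hC0

theorem sil_Psi_intInt (N : ℕ) : IntervalIntegrable (silPsi k p q x M N) volume 0 T' := by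
  unfold silPsi
  apply (sil_hx_intInt hk hp hq hsol hK h0T' hC hC0).add
  apply ContinuousOn.intervalIntegrable
  rw [uIcc_of_le h0T']
  exact (sil_h0_contOn hk hp hq hsol hK h0T').add
    (continuousOn_finset_sum _ fun i _ =>
      continuousOn_const.mul (sil_hM_contOn hk hp hq hsol hK h0T' i))

end integ

section identity

set_option linter.unusedSectionVars false

variable (hk : ∀ i, 0 ≤ k i) (hp : ∀ i, 0 ≤ p i) (hq : ∀ i, 0 ≤ q i)
  (hsol : IsSol k p q r α (Set.Ico 0 T) x M) {T' : ℝ}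
  (hK : Icc (0:ℝ) T' ⊆ Ico (0:ℝ) T) (h0T' : 0 ≤ T')
  {C : ℝ} (hC : ∀ t ∈ Icc (0:ℝ) T', x t ≤ C) (hC0 : 0 ≤ C)

include hk hp hq hsol hK h0T' hC hC0

theorem sil_identity {t : ℝ} (ht : t ∈ Icc (0:ℝ) T') (N : ℕ) :
    x t + silA M (N+1) t
      = x 0 + silA M (N+1) 0 + (r + α) * t + ∫ s in (0:ℝ)..t, silPsi k p q x M (N+1) s := by
  have htD : t ∈ Ico (0:ℝ) T := hK ht
  have h0t : (0:ℝ) ≤ t := ht.1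
  have hsub : uIcc (0:ℝ) t ⊆ uIcc (0:ℝ) T' := by
    rw [uIcc_of_le h0t, uIcc_of_le h0T']; exact Icc_subset_Icc le_rfl ht.2
  have hsubK : Icc (0:ℝ) t ⊆ Icc (0:ℝ) T' := Icc_subset_Icc le_rfl ht.2
  have hhx_int : IntervalIntegrable (silhx k q x M) volume 0 t :=
    (sil_hx_intInt hk hp hq hsol hK h0T' hC hC0).mono_set hsub
  have hh0_int : IntervalIntegrable (silh0 k p q x M) volume 0 t := by
    apply ContinuousOn.intervalIntegrable
    rw [uIcc_of_le h0t]
    exact (sil_h0_contOn hk hp hq hsol hK h0T').mono hsubK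
  have hhM_int : ∀ i : ℕ, IntervalIntegrable (silhM k p q x M i) volume 0 t := by
    intro i
    apply ContinuousOn.intervalIntegrable
    rw [uIcc_of_le h0t]
    exact (sil_hM_contOn hk hp hq hsol hK h0T' i).mono hsubK
  have hsum_int : IntervalIntegrable
      (fun s => ∑ i ∈ Finset.Ico 1 (N+1), ((i:ℝ)+1) * silhM k p q x M i s) volume 0 t := by
    apply ContinuousOn.intervalIntegrable
    rw [uIcc_of_le h0t]
    exact continuousOn_finset_sum _ fun i _ =>
      continuousOn_const.mul ((sil_hM_contOn hk hp hq hsol hK h0T' i).mono hsubK)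
  have hsplit : (∫ s in (0:ℝ)..t, silPsi k p q x M (N+1) s)
      = (∫ s in (0:ℝ)..t, silhx k q x M s)
        + ((∫ s in (0:ℝ)..t, silh0 k p q x M s)
          + ∑ i ∈ Finset.Ico 1 (N+1), ((i:ℝ)+1) * ∫ s in (0:ℝ)..t, silhM k p q x M i s) := by
    rw [show (fun s => silPsi k p q x M (N+1) s) = fun s => silhx k q x M s
        + (silh0 k p q x M s
          + ∑ i ∈ Finset.Ico 1 (N+1), ((i:ℝ)+1) * silhM k p q x M i s) from rfl]
    rw [intervalIntegral.integral_add hhx_int (hh0_int.add hsum_int),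
      intervalIntegral.integral_add hh0_int hsum_int,
      intervalIntegral.integral_finset_sum (fun i _ => (hhM_int i).const_mul _)]
    simp_rw [intervalIntegral.integral_const_mul]
  have ex : x t = x 0 + α * t + ∫ s in (0:ℝ)..t, silhx k q x M s := hsol.eq_x t htD
  have e0 : M 0 t = M 0 0 + r * t + ∫ s in (0:ℝ)..t, silh0 k p q x M s := by
    have h := hsol.eq_M0 t htD
    have hneg : (∫ s in (0:ℝ)..t, silh0 k p q x M s)
        = -∫ s in (0:ℝ)..t, (k 0 * x s * M 0 s + (p 0 + q 0) * M 0 s) := by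
      rw [show (fun s => silh0 k p q x M s)
          = fun s => -(k 0 * x s * M 0 s + (p 0 + q 0) * M 0 s) from rfl,
        intervalIntegral.integral_neg]
    rw [hneg]; linarith
  have eM : ∀ i ∈ Finset.Ico 1 (N+1),
      ((i:ℝ)+1) * M i t
        = ((i:ℝ)+1) * M i 0 + ((i:ℝ)+1) * ∫ s in (0:ℝ)..t, silhM k p q x M i s := by
    intro i hi
    have h1 : 1 ≤ i := (Finset.mem_Ico.mp hi).1
    have h := hsol.eq_M i h1 t htD
    have hrfl : (∫ s in (0:ℝ)..t, silhM k p q x M i s)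
        = ∫ s in (0:ℝ)..t,
            (k (i-1) * x s * M (i-1) s - k i * x s * M i s - (p i + q i) * M i s) := rfl
    rw [hrfl, h]
    ring
  have hAsplit : ∀ u : ℝ, silA M (N+1) u
      = M 0 u + ∑ i ∈ Finset.Ico 1 (N+1), ((i:ℝ)+1) * M i u := by
    intro u
    rw [silA, Finset.range_eq_Ico, Finset.sum_eq_sum_Ico_succ_bot (Nat.succ_pos N)]
    norm_num
  rw [hsplit, hAsplit t, hAsplit 0, Finset.sum_congr rfl eM, Finset.sum_add_distrib]
  linarith

end identity

section limits

set_option linter.unusedSectionVars false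

variable (hk : ∀ i, 0 ≤ k i) (hp : ∀ i, 0 ≤ p i) (hq : ∀ i, 0 ≤ q i)
  (hsol : IsSol k p q r α (Set.Ico 0 T) x M) {T' : ℝ}
  (hK : Icc (0:ℝ) T' ⊆ Ico (0:ℝ) T) (h0T' : 0 ≤ T')
  {C : ℝ} (hC : ∀ t ∈ Icc (0:ℝ) T', x t ≤ C) (hC0 : 0 ≤ C)

include hk hp hq hsol hK h0T' hC hC0

theorem sil_J_lim {t : ℝ} (ht : t ∈ Icc (0:ℝ) T') :
    Tendsto (fun N => ∫ s in (0:ℝ)..t, silPsi k p q x M (N+1) s) atTop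
      (𝓝 (x t + silS M t - (x 0 + silS M 0) - (r + α) * t)) := by
  have h0K : (0:ℝ) ∈ Icc (0:ℝ) T' := ⟨le_rfl, h0T'⟩
  have hA_t : Tendsto (fun N : ℕ => silA M (N+1) t) atTop (𝓝 (silS M t)) :=
    ((hsol.summable_norm t (hK ht)).hasSum.tendsto_sum_nat).comp (tendsto_add_atTop_nat 1)
  have hA_0 : Tendsto (fun N : ℕ => silA M (N+1) 0) atTop (𝓝 (silS M 0)) :=
    ((hsol.summable_norm 0 (hK h0K)).hasSum.tendsto_sum_nat).comp (tendsto_add_atTop_nat 1)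
  have hmain : Tendsto (fun N : ℕ => x t + silA M (N+1) t - (x 0 + silA M (N+1) 0) - (r+α)*t)
      atTop (𝓝 (x t + silS M t - (x 0 + silS M 0) - (r + α) * t)) :=
    (((hA_t.const_add (x t)).sub (hA_0.const_add (x 0))).sub_const _)
  apply hmain.congr
  intro N
  have := sil_identity hk hp hq hsol hK h0T' hC hC0 ht N
  linarith

theorem sil_Psi_intInt_sub {t t0 : ℝ} (ht : t ∈ Icc (0:ℝ) T') (ht0 : t0 ∈ Icc (0:ℝ) T')
    (N : ℕ) : IntervalIntegrable (silPsi k p q x M N) volume t t0 :=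
  (sil_Psi_intInt hk hp hq hsol hK h0T' hC hC0 N).mono_set
    (uIcc_subset_uIcc (by rw [uIcc_of_le h0T']; exact ht)
      (by rw [uIcc_of_le h0T']; exact ht0))

end limits

section limits2

set_option linter.unusedSectionVars false

variable (hk : ∀ i, 0 ≤ k i) (hp : ∀ i, 0 ≤ p i) (hq : ∀ i, 0 ≤ q i)
  (hsol : IsSol k p q r α (Set.Ico 0 T) x M) {T' : ℝ}
  (hK : Icc (0:ℝ) T' ⊆ Ico (0:ℝ) T) (h0T' : 0 ≤ T')
  {C : ℝ} (hC : ∀ t ∈ Icc (0:ℝ) T', x t ≤ C) (hC0 : 0 ≤ C)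

include hk hp hq hsol hK h0T' hC hC0

theorem sil_J_diff_lim {t t0 : ℝ} (ht : t ∈ Icc (0:ℝ) T') (ht0 : t0 ∈ Icc (0:ℝ) T') :
    Tendsto (fun N => ∫ s in t..t0, silPsi k p q x M (N+1) s) atTop
      (𝓝 ((x t0 + silS M t0 - (x 0 + silS M 0) - (r + α) * t0)
        - (x t + silS M t - (x 0 + silS M 0) - (r + α) * t))) := by
  have h1 := (sil_J_lim hk hp hq hsol hK h0T' hC hC0 ht0).sub
    (sil_J_lim hk hp hq hsol hK h0T' hC hC0 ht)
  apply h1.congr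
  intro N
  exact intervalIntegral.integral_interval_sub_left
    (sil_Psi_intInt_sub hk hp hq hsol hK h0T' hC hC0 ⟨le_rfl, h0T'⟩ ht0 (N+1))
    (sil_Psi_intInt_sub hk hp hq hsol hK h0T' hC hC0 ⟨le_rfl, h0T'⟩ ht (N+1))

theorem sil_mom_intInt_sub {t t0 : ℝ} (ht : t ∈ Icc (0:ℝ) T') (ht0 : t0 ∈ Icc (0:ℝ) T') :
    IntervalIntegrable (silMom k p q M) volume t t0 :=
  (sil_mom_intInt hk hp hq hsol hK h0T').mono_set
    (uIcc_subset_uIcc (by rw [uIcc_of_le h0T']; exact ht) (by rw [uIcc_of_le h0T']; exact ht0))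

theorem sil_J_ub {t t0 : ℝ} (ht : t ∈ Icc (0:ℝ) T') (ht0 : t0 ∈ Icc (0:ℝ) T') (htt0 : t ≤ t0) :
    (x t0 + silS M t0 - (x 0 + silS M 0) - (r + α) * t0)
        - (x t + silS M t - (x 0 + silS M 0) - (r + α) * t)
      ≤ ∫ s in t..t0, silMom k p q M s := by
  apply le_of_tendsto (sil_J_diff_lim hk hp hq hsol hK h0T' hC hC0 ht ht0)
  filter_upwards with N
  apply intervalIntegral.integral_mono_on htt0
    (sil_Psi_intInt_sub hk hp hq hsol hK h0T' hC hC0 ht ht0 (N+1))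
    (sil_mom_intInt_sub hk hp hq hsol hK h0T' hC hC0 ht ht0)
  intro s hs
  have hsK : s ∈ Icc (0:ℝ) T' := ⟨ht.1.trans hs.1, hs.2.trans ht0.2⟩
  have hsD : s ∈ Ico (0:ℝ) T := hK hsK
  exact silPsi_le_mom hk hp hq hsol hsD N (hsol.x_nonneg s hsD)

theorem sil_a_summable :
    Summable (fun N => ∫ s in (0:ℝ)..T', k N * x s * M N s) := by
  apply summable_of_sum_range_le (c := ∫ s in (0:ℝ)..T', C * silMom k p q M s)
  · intro N
    apply intervalIntegral.integral_nonneg h0T'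
    intro u hu
    have huD : u ∈ Ico (0:ℝ) T := hK hu
    exact mul_nonneg (mul_nonneg (hk N) (hsol.x_nonneg u huD)) (hsol.M_nonneg N u huD)
  · intro m
    have hint : ∀ i : ℕ, IntervalIntegrable (fun s => k i * x s * M i s) volume 0 T' := by
      intro i
      apply ContinuousOn.intervalIntegrable
      rw [uIcc_of_le h0T']
      exact (continuousOn_const.mul (sil_x_contOn hk hp hq hsol hK h0T')).mul
        (sil_M_contOn hk hp hq hsol hK h0T' i)
    rw [← intervalIntegral.integral_finset_sum (fun i _ => hint i)]
    apply intervalIntegral.integral_mono_on h0T'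
      (ContinuousOn.intervalIntegrable (by
        rw [uIcc_of_le h0T']
        exact continuousOn_finset_sum _ fun i _ =>
          (continuousOn_const.mul (sil_x_contOn hk hp hq hsol hK h0T')).mul
            (sil_M_contOn hk hp hq hsol hK h0T' i)))
      ((sil_mom_intInt hk hp hq hsol hK h0T').const_mul C)
    intro s hs
    have hsD : s ∈ Ico (0:ℝ) T := hK hs
    have h1 : ∑ i ∈ Finset.range m, k i * x s * M i s
        = x s * ∑ i ∈ Finset.range m, k i * M i s := by
      rw [Finset.mul_sum]; congr 1; ext i; ring
    rw [h1]
    exact mul_le_mul (hC s hs)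
      ((sil_partial_le_momK hk hp hq hsol hsD m).trans (sil_momK_le_mom hk hp hq hsol hsD))
      (Finset.sum_nonneg fun i _ => mul_nonneg (hk i) (hsol.M_nonneg i s hsD)) hC0

end limits2

theorem sil_freq {a : ℕ → ℝ} (ha : Summable a) (hnn : ∀ n, 0 ≤ a n) {ε : ℝ} (hε : 0 < ε) :
    ∃ᶠ N : ℕ in atTop, ((N:ℝ)+1) * a N < ε := by
  by_contra hcon
  rw [Filter.not_frequently] at hcon
  simp only [not_lt] at hcon
  rw [Filter.eventually_atTop] at hcon
  obtain ⟨m, hm⟩ := hcon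
  have hshift : Summable (fun n : ℕ => a (n+m)) := (summable_nat_add_iff m).mpr ha
  have hsum1 : Summable (fun n : ℕ => ε * (1/(((n+m:ℕ):ℝ)+1))) := by
    apply Summable.of_nonneg_of_le (fun n => by positivity) (fun n => ?_) hshift
    have h1 := hm (n+m) (Nat.le_add_left m n)
    have h2 : (0:ℝ) < ((n+m:ℕ):ℝ)+1 := by positivity
    rw [mul_one_div, div_le_iff₀ h2]
    linarith
  have hsum2 : Summable (fun n : ℕ => ε * (1/((n:ℝ)+1))) := by
    exact (summable_nat_add_iff m).mp hsum1
  have hsum3 : Summable (fun n : ℕ => 1/((n:ℝ)+1)) := by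
    have h := hsum2.mul_left ε⁻¹
    apply h.congr
    intro n
    field_simp
  have hsum4 : Summable (fun n : ℕ => 1/(n:ℝ)) := by
    apply (summable_nat_add_iff 1).mp
    convert hsum3 using 2 with n
    rotate_left
    push_cast
    ring
    rfl
  exact Real.not_summable_one_div_natCast hsum4

section limits3

set_option linter.unusedSectionVars false

variable (hk : ∀ i, 0 ≤ k i) (hp : ∀ i, 0 ≤ p i) (hq : ∀ i, 0 ≤ q i)
  (hsol : IsSol k p q r α (Set.Ico 0 T) x M) {T' : ℝ}
  (hK : Icc (0:ℝ) T' ⊆ Ico (0:ℝ) T) (h0T' : 0 ≤ T')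
  {C : ℝ} (hC : ∀ t ∈ Icc (0:ℝ) T', x t ≤ C) (hC0 : 0 ≤ C)

include hk hp hq hsol hK h0T' hC hC0

theorem sil_dct {t t0 : ℝ} (ht : t ∈ Icc (0:ℝ) T') (ht0 : t0 ∈ Icc (0:ℝ) T') (htt0 : t ≤ t0) :
    Tendsto (fun N => ∫ s in t..t0,
        x s * (silMomK k M s - ∑ j ∈ Finset.range N, k j * M j s)) atTop (𝓝 0) := by
  have hIoc : Ioc t t0 ⊆ Ioc (0:ℝ) T' := Ioc_subset_Ioc ht.1 ht0.2
  have hsubK : ∀ s ∈ Ioc t t0, s ∈ Icc (0:ℝ) T' :=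
    fun s hs => ⟨ht.1.trans (le_of_lt hs.1), hs.2.trans ht0.2⟩
  have hxm : AEStronglyMeasurable x (volume.restrict (Ioc t t0)) :=
    (((sil_x_contOn hk hp hq hsol hK h0T').mono (fun s hs => hsubK s hs))).aestronglyMeasurable
      measurableSet_Ioc
  have hmomKm : AEStronglyMeasurable (silMomK k M) (volume.restrict (Ioc t t0)) :=
    (sil_momK_aesm hk hp hq hsol hK h0T').mono_measure (Measure.restrict_mono hIoc le_rfl)
  have hFm : ∀ N : ℕ, AEStronglyMeasurable
      (fun s => x s * (silMomK k M s - ∑ j ∈ Finset.range N, k j * M j s))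
      (volume.restrict (Ioc t t0)) := by
    intro N
    apply hxm.mul
    apply hmomKm.sub
    exact ((continuousOn_finset_sum _ fun i _ =>
      continuousOn_const.mul ((sil_M_contOn hk hp hq hsol hK h0T' i).mono
        (fun s hs => hsubK s hs))).aestronglyMeasurable measurableSet_Ioc)
  have hbound : IntegrableOn (fun s => C * silMom k p q M s) (Ioc t t0) volume := by
    have h1 := intervalIntegrable_iff.mp
      (sil_mom_intInt_sub hk hp hq hsol hK h0T' hC hC0 ht ht0)
    rw [uIoc_of_le htt0] at h1
    exact h1.const_mul C
  have key : Tendsto (fun N => ∫ s in Ioc t t0,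
      x s * (silMomK k M s - ∑ j ∈ Finset.range N, k j * M j s)) atTop (𝓝 0) := by
    have h0 : (0:ℝ) = ∫ s in Ioc t t0, (0:ℝ) := by simp
    rw [h0]
    apply MeasureTheory.tendsto_integral_of_dominated_convergence
      (fun s => C * silMom k p q M s) hFm hbound
    · intro N
      filter_upwards [ae_restrict_mem measurableSet_Ioc] with s hs
      have hsK : s ∈ Icc (0:ℝ) T' := hsubK s hs
      have hsD : s ∈ Ico (0:ℝ) T := hK hsK
      have h1 := sil_partial_le_momK hk hp hq hsol hsD N
      have h2 := sil_momK_le_mom hk hp hq hsol hsD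
      have h3 := sil_momK_nonneg hk hp hq hsol hsD
      have h4 := hsol.x_nonneg s hsD
      have h5 := hC s hsK
      have h6 : 0 ≤ ∑ j ∈ Finset.range N, k j * M j s :=
        Finset.sum_nonneg fun i _ => mul_nonneg (hk i) (hsol.M_nonneg i s hsD)
      rw [Real.norm_eq_abs, abs_of_nonneg (by nlinarith)]
      nlinarith
    · filter_upwards [ae_restrict_mem measurableSet_Ioc] with s hs
      have hsD : s ∈ Ico (0:ℝ) T := hK (hsubK s hs)
      have h1 : Tendsto (fun N => ∑ j ∈ Finset.range N, k j * M j s) atTop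
          (𝓝 (silMomK k M s)) := (sil_summable_kM hk hp hq hsol hsD).hasSum.tendsto_sum_nat
      have h2 : Tendsto (fun N => x s * (silMomK k M s - ∑ j ∈ Finset.range N, k j * M j s))
          atTop (𝓝 (x s * (silMomK k M s - silMomK k M s))) :=
        (((tendsto_const_nhds.sub h1)).const_mul (x s))
      simpa using h2
  apply key.congr
  intro N
  rw [intervalIntegral.integral_of_le htt0]

end limits3

section limits4

set_option linter.unusedSectionVars false

variable (hk : ∀ i, 0 ≤ k i) (hp : ∀ i, 0 ≤ p i) (hq : ∀ i, 0 ≤ q i)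
  (hsol : IsSol k p q r α (Set.Ico 0 T) x M) {T' : ℝ}
  (hK : Icc (0:ℝ) T' ⊆ Ico (0:ℝ) T) (h0T' : 0 ≤ T')
  {C : ℝ} (hC : ∀ t ∈ Icc (0:ℝ) T', x t ≤ C) (hC0 : 0 ≤ C)

include hk hp hq hsol hK h0T'

theorem sil_W_intInt : IntervalIntegrable (silW k p q M) volume 0 T' := by
  unfold silW
  exact ((sil_mom_intInt hk hp hq hsol hK h0T').const_mul 2).add
    ((ContinuousOn.intervalIntegrable (by
      rw [uIcc_of_le h0T']
      exact continuousOn_const.mul (sil_M_contOn hk hp hq hsol hK h0T' 0))))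

theorem sil_W_intInt_sub {t t0 : ℝ} (ht : t ∈ Icc (0:ℝ) T') (ht0 : t0 ∈ Icc (0:ℝ) T') :
    IntervalIntegrable (silW k p q M) volume t t0 :=
  (sil_W_intInt hk hp hq hsol hK h0T').mono_set
    (uIcc_subset_uIcc (by rw [uIcc_of_le h0T']; exact ht) (by rw [uIcc_of_le h0T']; exact ht0))

include hC hC0

theorem sil_f1_intInt {t t0 : ℝ} (ht : t ∈ Icc (0:ℝ) T') (ht0 : t0 ∈ Icc (0:ℝ) T')
    (htt0 : t ≤ t0) (N : ℕ) :
    IntervalIntegrable (fun s => x s * (silMomK k M s - ∑ j ∈ Finset.range N, k j * M j s))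
      volume t t0 := by
  rw [intervalIntegrable_iff, uIoc_of_le htt0]
  have hIoc : Ioc t t0 ⊆ Ioc (0:ℝ) T' := Ioc_subset_Ioc ht.1 ht0.2
  have hsubK : ∀ s ∈ Ioc t t0, s ∈ Icc (0:ℝ) T' :=
    fun s hs => ⟨ht.1.trans (le_of_lt hs.1), hs.2.trans ht0.2⟩
  have hbound : IntegrableOn (fun s => C * silMom k p q M s) (Ioc t t0) volume := by
    have h1 := intervalIntegrable_iff.mp
      (sil_mom_intInt_sub hk hp hq hsol hK h0T' hC hC0 ht ht0)
    rw [uIoc_of_le htt0] at h1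
    exact h1.const_mul C
  apply Integrable.mono' hbound
  · have hxm : AEStronglyMeasurable x (volume.restrict (Ioc t t0)) :=
      (((sil_x_contOn hk hp hq hsol hK h0T').mono (fun s hs => hsubK s hs))).aestronglyMeasurable
        measurableSet_Ioc
    have hmomKm : AEStronglyMeasurable (silMomK k M) (volume.restrict (Ioc t t0)) :=
      (sil_momK_aesm hk hp hq hsol hK h0T').mono_measure (Measure.restrict_mono hIoc le_rfl)
    exact hxm.mul (hmomKm.sub ((continuousOn_finset_sum _ fun i _ =>
      continuousOn_const.mul ((sil_M_contOn hk hp hq hsol hK h0T' i).mono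
        (fun s hs => hsubK s hs))).aestronglyMeasurable measurableSet_Ioc))
  · filter_upwards [ae_restrict_mem measurableSet_Ioc] with s hs
    have hsK : s ∈ Icc (0:ℝ) T' := hsubK s hs
    have hsD : s ∈ Ico (0:ℝ) T := hK hsK
    have h1 := sil_partial_le_momK hk hp hq hsol hsD N
    have h2 := sil_momK_le_mom hk hp hq hsol hsD
    have h3 := sil_momK_nonneg hk hp hq hsol hsD
    have h4 := hsol.x_nonneg s hsD
    have h5 := hC s hsK
    have h6 : 0 ≤ ∑ j ∈ Finset.range N, k j * M j s :=
      Finset.sum_nonneg fun i _ => mul_nonneg (hk i) (hsol.M_nonneg i s hsD)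
    rw [Real.norm_eq_abs, abs_of_nonneg (by nlinarith)]
    nlinarith

theorem sil_J_lb {t t0 : ℝ} (ht : t ∈ Icc (0:ℝ) T') (ht0 : t0 ∈ Icc (0:ℝ) T') (htt0 : t ≤ t0) :
    -(∫ s in t..t0, silW k p q M s)
      ≤ (x t0 + silS M t0 - (x 0 + silS M 0) - (r + α) * t0)
        - (x t + silS M t - (x 0 + silS M 0) - (r + α) * t) := by
  set Jd := (x t0 + silS M t0 - (x 0 + silS M 0) - (r + α) * t0)
    - (x t + silS M t - (x 0 + silS M 0) - (r + α) * t) with hJd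
  have hmain : ∀ ε : ℝ, 0 < ε → -(∫ s in t..t0, silW k p q M s) ≤ Jd + ε := by
    intro ε hε
    have hε3 : 0 < ε/3 := by linarith
    have hev1 : ∀ᶠ N : ℕ in atTop,
        dist (∫ s in t..t0, silPsi k p q x M (N+1) s) Jd < ε/3 :=
      (Metric.tendsto_nhds.mp (sil_J_diff_lim hk hp hq hsol hK h0T' hC hC0 ht ht0)) _ hε3
    have hev2 : ∀ᶠ N : ℕ in atTop,
        dist (∫ s in t..t0, x s * (silMomK k M s - ∑ j ∈ Finset.range N, k j * M j s)) 0
          < ε/3 :=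
      (Metric.tendsto_nhds.mp (sil_dct hk hp hq hsol hK h0T' hC hC0 ht ht0 htt0)) _ hε3
    have hfreq : ∃ᶠ N : ℕ in atTop,
        ((N:ℝ)+1) * (∫ s in (0:ℝ)..T', k N * x s * M N s) < ε/3 :=
      sil_freq (sil_a_summable hk hp hq hsol hK h0T' hC hC0)
        (fun N => intervalIntegral.integral_nonneg h0T' (fun u hu =>
          mul_nonneg (mul_nonneg (hk N) (hsol.x_nonneg u (hK hu))) (hsol.M_nonneg N u (hK hu))))
        hε3
    obtain ⟨N, ⟨h1, h2⟩, h3⟩ := ((hev1.and hev2).and_frequently hfreq).exists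
    -- integrability of pieces on t..t0
    have hf1 := sil_f1_intInt hk hp hq hsol hK h0T' hC hC0 ht ht0 htt0 N
    have hf2 : IntervalIntegrable (fun s => k N * x s * M N s) volume t t0 := by
      apply ContinuousOn.intervalIntegrable
      apply ContinuousOn.mono (s := Icc (0:ℝ) T')
      · exact (continuousOn_const.mul (sil_x_contOn hk hp hq hsol hK h0T')).mul
          (sil_M_contOn hk hp hq hsol hK h0T' N)
      · rw [uIcc_of_le htt0]; exact Icc_subset_Icc ht.1 ht0.2
    have hW := sil_W_intInt_sub hk hp hq hsol hK h0T' ht ht0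
    have hf1n : IntervalIntegrable
        (fun s => -(x s * (silMomK k M s - ∑ j ∈ Finset.range N, k j * M j s))) volume t t0 :=
      hf1.neg
    -- lower bound the integral of Psi (N+1)
    have hlb : (∫ s in t..t0, (-(x s * (silMomK k M s - ∑ j ∈ Finset.range N, k j * M j s))
          - ((N:ℝ)+1) * (k N * x s * M N s) - silW k p q M s))
        ≤ ∫ s in t..t0, silPsi k p q x M (N+1) s := by
      apply intervalIntegral.integral_mono_on htt0
        (((hf1n.sub (hf2.const_mul _)).sub hW))
        (sil_Psi_intInt_sub hk hp hq hsol hK h0T' hC hC0 ht ht0 (N+1))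
      intro s hs
      have hsD : s ∈ Ico (0:ℝ) T := hK ⟨ht.1.trans hs.1, hs.2.trans ht0.2⟩
      exact silPsi_lb hk hp hq hsol hsD N (hsol.x_nonneg s hsD)
    have hsplit : (∫ s in t..t0, (-(x s * (silMomK k M s - ∑ j ∈ Finset.range N, k j * M j s))
          - ((N:ℝ)+1) * (k N * x s * M N s) - silW k p q M s))
        = -(∫ s in t..t0, x s * (silMomK k M s - ∑ j ∈ Finset.range N, k j * M j s))
          - ((N:ℝ)+1) * (∫ s in t..t0, k N * x s * M N s)
          - ∫ s in t..t0, silW k p q M s := by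
      rw [intervalIntegral.integral_sub (hf1n.sub (hf2.const_mul _)) hW,
        intervalIntegral.integral_sub hf1n (hf2.const_mul _),
        intervalIntegral.integral_neg, intervalIntegral.integral_const_mul]
    have hb1 : -(∫ s in t..t0, x s * (silMomK k M s - ∑ j ∈ Finset.range N, k j * M j s))
        > -(ε/3) := by
      rw [Real.dist_eq, sub_zero] at h2
      have := abs_lt.mp h2
      linarith [this.1]
    have hb2 : ((N:ℝ)+1) * (∫ s in t..t0, k N * x s * M N s) < ε/3 := by
      have hmono : (∫ s in t..t0, k N * x s * M N s)
          ≤ ∫ s in (0:ℝ)..T', k N * x s * M N s := by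
        apply intervalIntegral.integral_mono_interval ht.1 htt0 ht0.2
        · filter_upwards [ae_restrict_mem measurableSet_Ioc] with u hu
          exact mul_nonneg (mul_nonneg (hk N)
            (hsol.x_nonneg u (hK ⟨le_of_lt hu.1, hu.2⟩)))
            (hsol.M_nonneg N u (hK ⟨le_of_lt hu.1, hu.2⟩))
        · apply ContinuousOn.intervalIntegrable
          rw [uIcc_of_le h0T']
          exact (continuousOn_const.mul (sil_x_contOn hk hp hq hsol hK h0T')).mul
            (sil_M_contOn hk hp hq hsol hK h0T' N)
      have hN0 : (0:ℝ) ≤ (N:ℝ)+1 := by positivity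
      calc ((N:ℝ)+1) * (∫ s in t..t0, k N * x s * M N s)
          ≤ ((N:ℝ)+1) * (∫ s in (0:ℝ)..T', k N * x s * M N s) :=
            mul_le_mul_of_nonneg_left hmono hN0
        _ < ε/3 := h3
    have hd1 : (∫ s in t..t0, silPsi k p q x M (N+1) s) < Jd + ε/3 := by
      rw [Real.dist_eq] at h1
      have := abs_lt.mp h1
      linarith [this.2]
    rw [hsplit] at hlb
    linarith
  by_contra hcon
  push_neg at hcon
  have : 0 < (-(∫ s in t..t0, silW k p q M s) - Jd) := by linarith
  have h := hmain _ (by linarith : (0:ℝ) < (-(∫ s in t..t0, silW k p q M s) - Jd)/2)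
  linarith

end limits4

section cont

set_option linter.unusedSectionVars false

variable (hk : ∀ i, 0 ≤ k i) (hp : ∀ i, 0 ≤ p i) (hq : ∀ i, 0 ≤ q i)
  (hsol : IsSol k p q r α (Set.Ico 0 T) x M) {T' : ℝ}
  (hK : Icc (0:ℝ) T' ⊆ Ico (0:ℝ) T) (h0T' : 0 ≤ T')
  {C : ℝ} (hC : ∀ t ∈ Icc (0:ℝ) T', x t ≤ C) (hC0 : 0 ≤ C)

include hk hp hq hsol hK h0T' hC hC0

theorem sil_J_ub_W {t t0 : ℝ} (ht : t ∈ Icc (0:ℝ) T') (ht0 : t0 ∈ Icc (0:ℝ) T')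
    (htt0 : t ≤ t0) :
    (x t0 + silS M t0 - (x 0 + silS M 0) - (r + α) * t0)
        - (x t + silS M t - (x 0 + silS M 0) - (r + α) * t)
      ≤ ∫ s in t..t0, silW k p q M s := by
  refine (sil_J_ub hk hp hq hsol hK h0T' hC hC0 ht ht0 htt0).trans ?_
  apply intervalIntegral.integral_mono_on htt0
    (sil_mom_intInt_sub hk hp hq hsol hK h0T' hC hC0 ht ht0)
    (sil_W_intInt_sub hk hp hq hsol hK h0T' ht ht0)
  intro s hs
  have hsD : s ∈ Ico (0:ℝ) T := hK ⟨ht.1.trans hs.1, hs.2.trans ht0.2⟩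
  have h1 := sil_mom_nonneg hk hp hq hsol hsD
  have h2 : 0 ≤ (p 0 + q 0) * M 0 s :=
    mul_nonneg (add_nonneg (hp 0) (hq 0)) (hsol.M_nonneg 0 s hsD)
  rw [silW]
  linarith

theorem sil_S_contOn : ContinuousOn (silS M) (Icc (0:ℝ) T') := by
  set V : ℝ → ℝ := fun u => ∫ s in (0:ℝ)..u, silW k p q M s with hV
  have hVc : ContinuousOn V (Icc (0:ℝ) T') := by
    have h1 : IntegrableOn (silW k p q M) (uIcc (0:ℝ) T') volume := by
      rw [uIcc_of_le h0T']
      rw [integrableOn_Icc_iff_integrableOn_Ioc]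
      have h2 := intervalIntegrable_iff.mp (sil_W_intInt hk hp hq hsol hK h0T')
      rwa [uIoc_of_le h0T'] at h2
    have := intervalIntegral.continuousOn_primitive_interval h1
    rwa [uIcc_of_le h0T'] at this
  have hG : ∀ a ∈ Icc (0:ℝ) T', ∀ b ∈ Icc (0:ℝ) T',
      |(x b + silS M b - (r+α)*b) - (x a + silS M a - (r+α)*a)| ≤ |V b - V a| := by
    have main : ∀ a ∈ Icc (0:ℝ) T', ∀ b ∈ Icc (0:ℝ) T', a ≤ b →
        |(x b + silS M b - (r+α)*b) - (x a + silS M a - (r+α)*a)| ≤ |V b - V a| := by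
      intro a ha b hb hab
      have hVd : V b - V a = ∫ s in a..b, silW k p q M s :=
        intervalIntegral.integral_interval_sub_left
          (sil_W_intInt_sub hk hp hq hsol hK h0T' ⟨le_rfl, h0T'⟩ hb)
          (sil_W_intInt_sub hk hp hq hsol hK h0T' ⟨le_rfl, h0T'⟩ ha)
      have hub := sil_J_ub_W hk hp hq hsol hK h0T' hC hC0 ha hb hab
      have hlb := sil_J_lb hk hp hq hsol hK h0T' hC hC0 ha hb hab
      have hVnn : 0 ≤ V b - V a := by
        rw [hVd]
        apply intervalIntegral.integral_nonneg hab
        intro u hu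
        have huD : u ∈ Ico (0:ℝ) T := hK ⟨ha.1.trans hu.1, hu.2.trans hb.2⟩
        have h1 := sil_mom_nonneg hk hp hq hsol huD
        have h2 : 0 ≤ (p 0 + q 0) * M 0 u :=
          mul_nonneg (add_nonneg (hp 0) (hq 0)) (hsol.M_nonneg 0 u huD)
        rw [silW]; linarith
      rw [abs_of_nonneg hVnn, abs_le]
      rw [hVd]
      constructor <;> linarith
    intro a ha b hb
    rcases le_total a b with hab | hba
    · exact main a ha b hb hab
    · have := main b hb a ha hba
      rw [abs_sub_comm, abs_sub_comm (V a)] at this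
      exact this
  intro u hu
  have hGc : ContinuousWithinAt (fun t => x t + silS M t - (r+α)*t) (Icc (0:ℝ) T') u := by
    rw [Metric.continuousWithinAt_iff]
    intro ε hε
    have hVu : ContinuousWithinAt V (Icc (0:ℝ) T') u := hVc u hu
    rw [Metric.continuousWithinAt_iff] at hVu
    obtain ⟨δ, hδ, hVδ⟩ := hVu (ε/2) (by linarith)
    refine ⟨δ, hδ, fun {t} htK hdist => ?_⟩
    have h1 := hG u hu t htK
    have h2 := hVδ htK hdist
    rw [Real.dist_eq] at *
    calc |(x t + silS M t - (r+α)*t) - (x u + silS M u - (r+α)*u)| ≤ |V t - V u| := h1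
      _ < ε := by linarith
  have hxc : ContinuousWithinAt x (Icc (0:ℝ) T') u := sil_x_contOn hk hp hq hsol hK h0T' u hu
  have hlin : ContinuousWithinAt (fun t : ℝ => (r+α)*t) (Icc (0:ℝ) T') u :=
    (continuous_const.mul continuous_id).continuousWithinAt
  have : ContinuousWithinAt
      (fun t => (x t + silS M t - (r+α)*t) - x t + (r+α)*t) (Icc (0:ℝ) T') u :=
    (hGc.sub hxc).add hlin
  apply this.congr
  · intro t _; ring
  · ring

theorem sil_uniformA :
    TendstoUniformlyOn (fun N t => silA M N t) (silS M) atTop (Icc (0:ℝ) T') := by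
  apply my_dini isCompact_Icc
  · intro N
    exact continuousOn_finset_sum _ fun i _ =>
      continuousOn_const.mul (sil_M_contOn hk hp hq hsol hK h0T' i)
  · exact sil_S_contOn hk hp hq hsol hK h0T' hC hC0
  · intro t ht N1 N2 h12
    apply Finset.sum_le_sum_of_subset_of_nonneg (Finset.range_subset_range.mpr h12)
    intro i _ _
    exact mul_nonneg (by positivity) (hsol.M_nonneg i t (hK ht))
  · intro t ht
    exact (hsol.summable_norm t (hK ht)).hasSum.tendsto_sum_nat

end cont

section final

set_option linter.unusedSectionVars false

variable (hk : ∀ i, 0 ≤ k i) (hp : ∀ i, 0 ≤ p i) (hq : ∀ i, 0 ≤ q i)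
  (hsol : IsSol k p q r α (Set.Ico 0 T) x M)

include hk hp hq hsol

theorem sil_main_uniform (T' : ℝ) (hK : Icc (0:ℝ) T' ⊆ Ico (0:ℝ) T) :
    TendstoUniformlyOn (fun N t => silA M N t) (silS M) atTop (Icc (0:ℝ) T') := by
  rcases le_or_gt 0 T' with h0T' | hneg
  · obtain ⟨C, hC⟩ := hsol.norm_bdd T' hK
    have h0K : (0:ℝ) ∈ Icc (0:ℝ) T' := ⟨le_rfl, h0T'⟩
    have hxC : ∀ t ∈ Icc (0:ℝ) T', x t ≤ C := by
      intro t ht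
      have h1 := hC t ht
      have h2 : 0 ≤ silS M t := sil_S_nonneg hk hp hq hsol (hK ht)
      have h3 : silS M t = ∑' i : ℕ, ((i:ℝ)+1) * M i t := rfl
      linarith [h3 ▸ h2]
    have hC0 : 0 ≤ C := by
      have h1 := hC 0 h0K
      have h2 : 0 ≤ silS M 0 := sil_S_nonneg hk hp hq hsol (hK h0K)
      have h3 : silS M 0 = ∑' i : ℕ, ((i:ℝ)+1) * M i 0 := rfl
      have h4 := hsol.x_nonneg 0 (hK h0K)
      linarith [h3 ▸ h2]
    exact sil_uniformA hk hp hq hsol hK h0T' hxC hC0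
  · rw [Icc_eq_empty (by linarith)]
    exact tendstoUniformlyOn_empty

theorem sil_tailS {u : ℝ} (hu : u ∈ Ico (0:ℝ) T) (N : ℕ) :
    ∑' j : ℕ, (((j+N:ℕ):ℝ)+1) * M (j+N) u = silS M u - silA M N u := by
  have h := Summable.sum_add_tsum_nat_add N (hsol.summable_norm u hu)
  have h2 : silA M N u = ∑ i ∈ Finset.range N, ((i:ℝ)+1) * M i u := rfl
  have h3 : silS M u = ∑' i : ℕ, ((i:ℝ)+1) * M i u := rfl
  rw [h2, h3]
  linarith [h]

theorem sil_part2 (T' : ℝ) (hK : Icc (0:ℝ) T' ⊆ Ico (0:ℝ) T) :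
    TendstoUniformlyOn (fun (N : ℕ) (t : ℝ) => ∑ i ∈ Finset.range N, (i : ℝ) * M i t)
      (fun t => ∑' i : ℕ, (i : ℝ) * M i t) atTop (Icc (0:ℝ) T') := by
  rw [Metric.tendstoUniformlyOn_iff]
  intro ε hε
  have huni := sil_main_uniform hk hp hq hsol T' hK
  rw [Metric.tendstoUniformlyOn_iff] at huni
  filter_upwards [huni (ε/2) (by linarith)] with N hN t ht
  have htD : t ∈ Ico (0:ℝ) T := hK ht
  have hsum1 : Summable (fun i : ℕ => (i:ℝ) * M i t) := by
    refine Summable.of_nonneg_of_le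
      (fun i => mul_nonneg i.cast_nonneg (hsol.M_nonneg i t htD))
      (fun i => ?_) (hsol.summable_norm t htD)
    have := hsol.M_nonneg i t htD
    nlinarith [(Nat.cast_nonneg i : (0:ℝ) ≤ (i:ℝ))]
  have htail : (∑' i : ℕ, (i:ℝ) * M i t) - ∑ i ∈ Finset.range N, (i:ℝ) * M i t
      = ∑' j : ℕ, ((j+N:ℕ):ℝ) * M (j+N) t := by
    have h := Summable.sum_add_tsum_nat_add N hsum1
    linarith [h]
  have hShift : Summable (fun j : ℕ => (((j+N:ℕ)):ℝ) * M (j+N) t) :=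
    ((summable_nat_add_iff N).mpr hsum1)
  have hShift1 : Summable (fun j : ℕ => (((j+N:ℕ):ℝ)+1) * M (j+N) t) :=
    ((summable_nat_add_iff N).mpr (hsol.summable_norm t htD))
  have htail_nonneg : 0 ≤ ∑' j : ℕ, ((j+N:ℕ):ℝ) * M (j+N) t :=
    tsum_nonneg fun j => mul_nonneg (j+N).cast_nonneg (hsol.M_nonneg (j+N) t htD)
  have htail_le : (∑' j : ℕ, ((j+N:ℕ):ℝ) * M (j+N) t)
      ≤ ∑' j : ℕ, (((j+N:ℕ):ℝ)+1) * M (j+N) t := by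
    refine Summable.tsum_le_tsum (fun j => ?_) hShift hShift1
    have := hsol.M_nonneg (j+N) t htD
    nlinarith
  have hA_le_S : silA M N t ≤ silS M t := sil_partial_le_S hk hp hq hsol htD N
  have hdistN := hN t ht
  rw [Real.dist_eq, abs_of_nonneg (by linarith)] at hdistN
  rw [Real.dist_eq, abs_of_nonneg (by rw [htail]; exact htail_nonneg), htail]
  calc (∑' j : ℕ, ((j+N:ℕ):ℝ) * M (j+N) t)
      ≤ ∑' j : ℕ, (((j+N:ℕ):ℝ)+1) * M (j+N) t := htail_le
    _ = silS M t - silA M N t := sil_tailS hk hp hq hsol htD N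
    _ < ε := by linarith

end final

section part1

set_option linter.unusedSectionVars false

variable (hk : ∀ i, 0 ≤ k i) (hp : ∀ i, 0 ≤ p i) (hq : ∀ i, 0 ≤ q i)
  (hsol : IsSol k p q r α (Set.Ico 0 T) x M)

include hk hp hq hsol

set_option maxHeartbeats 1000000 in
theorem sil_part1 : ∀ t0 ∈ Set.Ico (0:ℝ) T,
    Filter.Tendsto (fun t => |x t - x t0| + ∑' i : ℕ, ((i : ℝ) + 1) * |M i t - M i t0|)
      (nhdsWithin t0 (Set.Ico 0 T)) (nhds 0) := by
  intro t0 ht0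
  set T'' : ℝ := (t0 + T)/2 with hT''
  have h1 : t0 < T'' := by rw [hT'']; linarith [ht0.2]
  have h2 : T'' < T := by rw [hT'']; linarith [ht0.2]
  have h3 : (0:ℝ) ≤ t0 := ht0.1
  have hK'' : Icc (0:ℝ) T'' ⊆ Ico (0:ℝ) T :=
    fun s hs => ⟨hs.1, lt_of_le_of_lt hs.2 h2⟩
  have ht0K : t0 ∈ Icc (0:ℝ) T'' := ⟨h3, le_of_lt h1⟩
  rw [Metric.tendsto_nhdsWithin_nhds]
  intro ε hε
  have huni := sil_main_uniform hk hp hq hsol T'' hK''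
  rw [Metric.tendstoUniformlyOn_iff] at huni
  obtain ⟨N, hN⟩ := (huni (ε/4) (by linarith)).exists
  set g : ℝ → ℝ :=
    fun t => |x t - x t0| + ∑ i ∈ Finset.range N, ((i:ℝ)+1) * |M i t - M i t0| with hg
  have hgc : ContinuousOn g (Ico (0:ℝ) T) :=
    ((hsol.x_cont.sub continuousOn_const).abs).add
      (continuousOn_finset_sum _ fun i _ =>
        continuousOn_const.mul (((hsol.M_cont i).sub continuousOn_const).abs))
  have hg0 : g t0 = 0 := by simp [hg]
  have hgca := hgc t0 ht0
  rw [Metric.continuousWithinAt_iff] at hgca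
  obtain ⟨δ1, hδ1, hg1⟩ := hgca (ε/4) (by linarith)
  refine ⟨min δ1 (T'' - t0), lt_min hδ1 (by linarith), fun {t} htD hdist => ?_⟩
  have hdist1 : dist t t0 < δ1 := lt_of_lt_of_le hdist (min_le_left _ _)
  have htK : t ∈ Icc (0:ℝ) T'' := by
    constructor
    · exact htD.1
    · have h4 : dist t t0 < T'' - t0 := lt_of_lt_of_le hdist (min_le_right _ _)
      rw [Real.dist_eq] at h4
      have := abs_lt.mp h4
      linarith [this.1]
  -- summability facts
  have hMnn : ∀ i : ℕ, 0 ≤ M i t := fun i => hsol.M_nonneg i t htD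
  have hMnn0 : ∀ i : ℕ, 0 ≤ M i t0 := fun i => hsol.M_nonneg i t0 ht0
  have hΔsum : Summable (fun i : ℕ => ((i:ℝ)+1) * |M i t - M i t0|) := by
    refine Summable.of_nonneg_of_le (fun i => by positivity) (fun i => ?_)
      ((hsol.summable_norm t htD).add (hsol.summable_norm t0 ht0))
    have habs : |M i t - M i t0| ≤ M i t + M i t0 :=
      abs_le.mpr ⟨by linarith [hMnn i, hMnn0 i], by linarith [hMnn i, hMnn0 i]⟩
    have hpos : (0:ℝ) ≤ (i:ℝ)+1 := by positivity
    calc ((i:ℝ)+1) * |M i t - M i t0| ≤ ((i:ℝ)+1) * (M i t + M i t0) :=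
          mul_le_mul_of_nonneg_left habs hpos
      _ = ((i:ℝ)+1) * M i t + ((i:ℝ)+1) * M i t0 := by ring
  have hsplit : (∑' i : ℕ, ((i:ℝ)+1) * |M i t - M i t0|)
      = (∑ i ∈ Finset.range N, ((i:ℝ)+1) * |M i t - M i t0|)
        + ∑' j : ℕ, (((j+N:ℕ):ℝ)+1) * |M (j+N) t - M (j+N) t0| :=
    (Summable.sum_add_tsum_nat_add N hΔsum).symm
  have hShift1t : Summable (fun j : ℕ => (((j+N:ℕ):ℝ)+1) * M (j+N) t) :=
    (summable_nat_add_iff N).mpr (hsol.summable_norm t htD)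
  have hShift1t0 : Summable (fun j : ℕ => (((j+N:ℕ):ℝ)+1) * M (j+N) t0) :=
    (summable_nat_add_iff N).mpr (hsol.summable_norm t0 ht0)
  have htail_le : (∑' j : ℕ, (((j+N:ℕ):ℝ)+1) * |M (j+N) t - M (j+N) t0|)
      ≤ (silS M t - silA M N t) + (silS M t0 - silA M N t0) := by
    have step1 : (∑' j : ℕ, (((j+N:ℕ):ℝ)+1) * |M (j+N) t - M (j+N) t0|)
        ≤ ∑' j : ℕ, ((((j+N:ℕ):ℝ)+1) * M (j+N) t + (((j+N:ℕ):ℝ)+1) * M (j+N) t0) := by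
      refine Summable.tsum_le_tsum (fun j => ?_) ((summable_nat_add_iff N).mpr hΔsum)
        (hShift1t.add hShift1t0)
      have habs : |M (j+N) t - M (j+N) t0| ≤ M (j+N) t + M (j+N) t0 :=
        abs_le.mpr ⟨by linarith [hMnn (j+N), hMnn0 (j+N)], by linarith [hMnn (j+N), hMnn0 (j+N)]⟩
      have hpos : (0:ℝ) ≤ ((j+N:ℕ):ℝ)+1 := by positivity
      calc (((j+N:ℕ):ℝ)+1) * |M (j+N) t - M (j+N) t0|
          ≤ (((j+N:ℕ):ℝ)+1) * (M (j+N) t + M (j+N) t0) := mul_le_mul_of_nonneg_left habs hpos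
        _ = (((j+N:ℕ):ℝ)+1) * M (j+N) t + (((j+N:ℕ):ℝ)+1) * M (j+N) t0 := by ring
    have step2 : (∑' j : ℕ, ((((j+N:ℕ):ℝ)+1) * M (j+N) t + (((j+N:ℕ):ℝ)+1) * M (j+N) t0))
        = (silS M t - silA M N t) + (silS M t0 - silA M N t0) := by
      rw [Summable.tsum_add hShift1t hShift1t0, sil_tailS hk hp hq hsol htD N,
        sil_tailS hk hp hq hsol ht0 N]
    linarith
  have hNt := hN t htK
  have hNt0 := hN t0 ht0K
  rw [Real.dist_eq, abs_of_nonneg (by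
    linarith [sil_partial_le_S hk hp hq hsol (hK'' htK) N])] at hNt
  rw [Real.dist_eq, abs_of_nonneg (by
    linarith [sil_partial_le_S hk hp hq hsol (hK'' ht0K) N])] at hNt0
  have hgsmall := hg1 htD hdist1
  have hgnn : 0 ≤ g t := by
    have h5 : (0:ℝ) ≤ ∑ i ∈ Finset.range N, ((i:ℝ)+1) * |M i t - M i t0| :=
      Finset.sum_nonneg fun i _ => mul_nonneg (by positivity) (abs_nonneg _)
    have h6 : (0:ℝ) ≤ |x t - x t0| := abs_nonneg _
    rw [hg]
    exact add_nonneg h6 h5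
  rw [Real.dist_eq, hg0, sub_zero, abs_of_nonneg hgnn] at hgsmall
  have hFnn : (0:ℝ) ≤ |x t - x t0| + ∑' i : ℕ, ((i:ℝ)+1) * |M i t - M i t0| :=
    add_nonneg (abs_nonneg _) (tsum_nonneg fun i => mul_nonneg (by positivity) (abs_nonneg _))
  rw [Real.dist_eq, sub_zero, abs_of_nonneg hFnn]
  rw [hsplit]
  have hgdef : g t = |x t - x t0| + ∑ i ∈ Finset.range N, ((i:ℝ)+1) * |M i t - M i t0| := rfl
  linarith

theorem sil_main :
    (∀ t0 ∈ Set.Ico (0:ℝ) T,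
      Filter.Tendsto (fun t => |x t - x t0| + ∑' i : ℕ, ((i : ℝ) + 1) * |M i t - M i t0|)
        (nhdsWithin t0 (Set.Ico 0 T)) (nhds 0)) ∧
    (∀ T' : ℝ, Set.Icc (0:ℝ) T' ⊆ Set.Ico (0:ℝ) T →
      TendstoUniformlyOn (fun (N : ℕ) (t : ℝ) => ∑ i ∈ Finset.range N, (i : ℝ) * M i t)
        (fun t => ∑' i : ℕ, (i : ℝ) * M i t) Filter.atTop (Set.Icc (0:ℝ) T')) :=
  ⟨sil_part1 hk hp hq hsol, fun T' hK => sil_part2 hk hp hq hsol T' hK⟩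

end part1

/-- every solution `y` on `[0,T)` is continuous as a map into the Banach
space `X` (with norm `‖y‖ = |x| + ∑(i+1)|Mᵢ|`), and the series `∑_{i≥1} i Mᵢ(t)`
converges uniformly on compact subintervals of `[0,T)`. -/
theorem silicosis_norm_continuity_and_uniform_convergence
    (k p q : ℕ → ℝ)
    (hk : ∀ i, 0 ≤ k i) (hp : ∀ i, 0 ≤ p i) (hq : ∀ i, 0 ≤ q i)
    (r α : ℝ) (hr : 0 ≤ r) (hα : 0 ≤ α)
    (T : ℝ) (x : ℝ → ℝ) (M : ℕ → ℝ → ℝ)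
    (hsol : IsSol k p q r α (Set.Ico 0 T) x M) :
    -- continuity of `t ↦ y(t)` in the norm of `X`
    (∀ t0 ∈ Set.Ico (0:ℝ) T,
      Filter.Tendsto (fun t => |x t - x t0| + ∑' i : ℕ, ((i : ℝ) + 1) * |M i t - M i t0|)
        (nhdsWithin t0 (Set.Ico 0 T)) (nhds 0)) ∧
    -- uniform convergence of `∑ i Mᵢ(t)` on compact subintervals of `[0,T)`
    (∀ T' : ℝ, Set.Icc (0:ℝ) T' ⊆ Set.Ico (0:ℝ) T →
      TendstoUniformlyOn (fun (N : ℕ) (t : ℝ) => ∑ i ∈ Finset.range N, (i : ℝ) * M i t)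
        (fun t => ∑' i : ℕ, (i : ℝ) * M i t) Filter.atTop (Set.Icc (0:ℝ) T')) := by
  exact sil_main hk hp hq hsol
end
end

section
/- Suppose (k_i) and (q_i) satisfy (i+1)q_{i+1} ≥ i q_i for sufficiently large i and ((i+1)q_{i+1} − i q_i)k_i = O(i q_i). Then for every solution y of the silicosis system on [0,T), the function Q(t) = Σ_{i≥1} i q_i M_i(t) is absolutely continuous on each compact subinterval of the open interval (0,T). -/
open MeasureTheory Set Filter Topology

noncomputable section

/-- A real function is absolutely continuous on `[a,b]` iff it is an indefinite
integral of a Lebesgue-integrable function. -/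
def AbsContOn (f : ℝ → ℝ) (a b : ℝ) : Prop :=
  ∃ h : ℝ → ℝ, IntervalIntegrable h volume a b ∧
    ∀ t ∈ Set.Icc a b, f t = f a + ∫ s in a..t, h s

/-- Abel summation for the silicosis flux terms. -/
private lemma abel_sum (w J : ℕ → ℝ) (m : ℕ) :
    ∑ j ∈ Finset.range m, w (j+1) * (J j - J (j+1))
      = ∑ j ∈ Finset.range m, (w (j+1) - w j) * J j + (w 0 * J 0 - w m * J m) := by
  induction m with
  | zero => simp
  | succ m ih =>
      rw [Finset.sum_range_succ, Finset.sum_range_succ _ m, ih]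
      ring

/-- Continuity of finite sums of continuous-on functions. -/
private lemma contOn_sum {ι : Type*} (s : Finset ι) (f : ι → ℝ → ℝ) (u : Set ℝ)
    (h : ∀ i ∈ s, ContinuousOn (f i) u) :
    ContinuousOn (fun x => ∑ i ∈ s, f i x) u := by
  classical
  induction s using Finset.induction with
  | empty => simpa using continuousOn_const
  | @insert i s his ih =>
      simp only [Finset.sum_insert his]
      exact (h i (Finset.mem_insert_self i s)).add
        (ih fun j hj => h j (Finset.mem_insert_of_mem hj))

/-- If `f n j` is nonnegative, dominated by a summable `F`, and equals `F j` for `j < n`,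
then `∑' j, f n j → ∑' j, F j`. -/
private lemma tendsto_tsum_trunc {f : ℕ → ℕ → ℝ} {F : ℕ → ℝ} (hF : Summable F)
    (h0 : ∀ n j, 0 ≤ f n j) (h2 : ∀ n j, f n j ≤ F j) (h3 : ∀ n j, j < n → f n j = F j) :
    Tendsto (fun n => ∑' j, f n j) atTop (𝓝 (∑' j, F j)) := by
  have hfs : ∀ n, Summable (f n) := fun n => hF.of_nonneg_of_le (h0 n) (h2 n)
  have hdiff : ∀ n, Summable (fun j => F j - f n j) := fun n => hF.sub (hfs n)
  have hkey : ∀ n, ∑' j, F j - ∑' j, f n j ≤ ∑' j, F (j + n) := by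
    intro n
    rw [← Summable.tsum_sub hF (hfs n)]
    have hzero : ∑ j ∈ Finset.range n, (F j - f n j) = 0 :=
      Finset.sum_eq_zero fun j hj => by
        rw [h3 n j (Finset.mem_range.1 hj), sub_self]
    have hsplit := Summable.sum_add_tsum_nat_add n (hdiff n)
    rw [hzero, zero_add] at hsplit
    rw [← hsplit]
    exact Summable.tsum_le_tsum (fun j => by linarith [h0 n (j + n), h2 n (j + n)])
      ((summable_nat_add_iff n).2 (hdiff n)) ((summable_nat_add_iff n).2 hF)
  have hnn : ∀ n, 0 ≤ ∑' j, F j - ∑' j, f n j := fun n =>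
    sub_nonneg.2 (Summable.tsum_le_tsum (h2 n) (hfs n) hF)
  have hT : Tendsto (fun n => ∑' j, F j - ∑' j, f n j) atTop (𝓝 0) := by
    have htail : Tendsto (fun n => ∑' j, F (j + n)) atTop (𝓝 0) := tendsto_sum_nat_add F
    exact squeeze_zero hnn hkey htail
  have := Tendsto.const_sub (∑' j, F j) hT
  simpa using this

set_option maxHeartbeats 2000000 in
/-- Proposition 5.5: if `(i+1)q_{i+1} ≥ i qᵢ` for sufficiently large `i`
and `((i+1)q_{i+1} − i qᵢ)kᵢ = O(i qᵢ)`, then `Q(t) = ∑_{i≥1} i qᵢ Mᵢ(t)` is absolutely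
continuous on each compact subinterval of the open interval `(0,T)`. -/
theorem silicosis_Q_absolutely_continuous_open
    (k p q : ℕ → ℝ)
    (hk : ∀ i, 0 ≤ k i) (hp : ∀ i, 0 ≤ p i) (hq : ∀ i, 0 ≤ q i)
    (r α : ℝ) (hr : 0 ≤ r) (hα : 0 ≤ α)
    (N : ℕ) (hmono : ∀ i ≥ N, (i : ℝ) * q i ≤ ((i : ℝ) + 1) * q (i+1))
    (C : ℝ) (hO : ∀ i ≥ N, (((i : ℝ) + 1) * q (i+1) - (i : ℝ) * q i) * k i ≤ C * ((i : ℝ) * q i))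
    (T : ℝ) (x : ℝ → ℝ) (M : ℕ → ℝ → ℝ)
    (hsol : IsSol k p q r α (Set.Ico 0 T) x M) :
    ∀ a b : ℝ, 0 < a → a ≤ b → b < T →
      AbsContOn (fun t => ∑' i : ℕ, (i : ℝ) * q i * M i t) a b := by
  intro a b ha hab hbT
  have hb0 : (0:ℝ) ≤ b := ha.le.trans hab
  have hsub : Icc (0:ℝ) b ⊆ Ico 0 T := fun t ht => ⟨ht.1, lt_of_le_of_lt ht.2 hbT⟩
  have h0b : (0:ℝ) ∈ Icc (0:ℝ) b := ⟨le_rfl, hb0⟩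
  have hb : b ∈ Icc (0:ℝ) b := ⟨hb0, le_rfl⟩
  have hIoc_sub : ∀ t ∈ Icc (0:ℝ) b, Ioc (0:ℝ) t ⊆ Icc (0:ℝ) b :=
    fun t ht s hs => ⟨hs.1.le, hs.2.trans ht.2⟩
  have haeOn : ∀ (t : ℝ) (P : ℝ → Prop), (∀ s ∈ Ioc (0:ℝ) t, P s) →
      (∀ᵐ s ∂(volume.restrict (Ioc (0:ℝ) t)), P s) := by
    intro t P hP
    exact (ae_restrict_iff' measurableSet_Ioc).2 (ae_of_all _ hP)
  -- nonnegativity and bound for x and M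
  have hM0 : ∀ (i : ℕ), ∀ t ∈ Icc (0:ℝ) b, 0 ≤ M i t := fun i t ht => hsol.M_nonneg i t (hsub ht)
  have hx0 : ∀ t ∈ Icc (0:ℝ) b, 0 ≤ x t := fun t ht => hsol.x_nonneg t (hsub ht)
  obtain ⟨C0, hC0⟩ := hsol.norm_bdd b hsub
  set X : ℝ := max C0 0 with hXdef
  have hX0 : 0 ≤ X := le_max_right _ _
  have hxX : ∀ t ∈ Icc (0:ℝ) b, x t ≤ X := by
    intro t ht
    have h1 := hC0 t ht
    have h2 : 0 ≤ ∑' i : ℕ, ((i : ℝ) + 1) * M i t :=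
      tsum_nonneg fun i => mul_nonneg (by positivity) (hM0 i t ht)
    have h3 : C0 ≤ X := le_max_left _ _
    linarith
  -- the weight sequence g
  set g : ℕ → ℝ := fun i => (i : ℝ) * q i with hgdef
  have hg0 : ∀ i, 0 ≤ g i := fun i => mul_nonneg (Nat.cast_nonneg i) (hq i)
  have hgzero : g 0 = 0 := by simp [hgdef]
  have hgm : ∀ i, N ≤ i → g i ≤ g (i+1) := by
    intro i hi
    have := hmono i hi
    simp only [hgdef]
    push_cast
    convert this using 2 <;> push_cast <;> ring
  have hgmle : ∀ n i : ℕ, N ≤ n → n ≤ i → g n ≤ g i := by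
    intro n i hn hni
    induction i, hni using Nat.le_induction with
    | base => exact le_rfl
    | succ m hm ih => exact ih.trans (hgm m (hn.trans hm))
  -- the moment function Φ
  set Φ : ℝ → ℝ := fun s => ∑' i : ℕ, ((i : ℝ) * p i + (i : ℝ) * q i + k i) * M i s with hΦdef
  have hmom : ∀ t ∈ Icc (0:ℝ) b,
      Summable (fun i : ℕ => ((i : ℝ) * p i + (i : ℝ) * q i + k i) * M i t) :=
    fun t ht => hsol.summable_mom t (hsub ht)
  have hmomnn : ∀ (i : ℕ), ∀ t ∈ Icc (0:ℝ) b,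
      0 ≤ ((i : ℝ) * p i + (i : ℝ) * q i + k i) * M i t := by
    intro i t ht
    have h1 : 0 ≤ (i : ℝ) * p i := mul_nonneg (Nat.cast_nonneg i) (hp i)
    have h2 : 0 ≤ (i : ℝ) * q i := mul_nonneg (Nat.cast_nonneg i) (hq i)
    exact mul_nonneg (by linarith [hk i]) (hM0 i t ht)
  have hΦ0 : ∀ t ∈ Icc (0:ℝ) b, 0 ≤ Φ t :=
    fun t ht => tsum_nonneg fun i => hmomnn i t ht
  have hΦint : ∀ t ∈ Icc (0:ℝ) b, IntegrableOn Φ (Ioc 0 t) volume := by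
    intro t ht
    have h1 := hsol.mom_int t (hsub ht)
    rw [intervalIntegrable_iff_integrableOn_Ioc_of_le ht.1] at h1
    exact h1
  -- comparison bounds
  have hgM_le : ∀ (i : ℕ), ∀ t ∈ Icc (0:ℝ) b,
      g i * M i t ≤ ((i : ℝ) * p i + (i : ℝ) * q i + k i) * M i t := by
    intro i t ht
    apply mul_le_mul_of_nonneg_right _ (hM0 i t ht)
    have h1 : 0 ≤ (i : ℝ) * p i := mul_nonneg (Nat.cast_nonneg i) (hp i)
    simp only [hgdef]
    linarith [hk i]
  have hkM_le : ∀ (i : ℕ), ∀ t ∈ Icc (0:ℝ) b,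
      k i * M i t ≤ ((i : ℝ) * p i + (i : ℝ) * q i + k i) * M i t := by
    intro i t ht
    apply mul_le_mul_of_nonneg_right _ (hM0 i t ht)
    have h1 : 0 ≤ (i : ℝ) * p i := mul_nonneg (Nat.cast_nonneg i) (hp i)
    have h2 : 0 ≤ (i : ℝ) * q i := mul_nonneg (Nat.cast_nonneg i) (hq i)
    linarith
  have hgMsum : ∀ t ∈ Icc (0:ℝ) b, Summable (fun i => g i * M i t) := fun t ht =>
    (hmom t ht).of_nonneg_of_le (fun i => mul_nonneg (hg0 i) (hM0 i t ht))
      (fun i => hgM_le i t ht)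
  have hkMsum : ∀ t ∈ Icc (0:ℝ) b, Summable (fun i => k i * M i t) := fun t ht =>
    (hmom t ht).of_nonneg_of_le (fun i => mul_nonneg (hk i) (hM0 i t ht))
      (fun i => hkM_le i t ht)
  have hgMtsum_le : ∀ t ∈ Icc (0:ℝ) b, ∑' i, g i * M i t ≤ Φ t := fun t ht =>
    Summable.tsum_le_tsum (fun i => hgM_le i t ht) (hgMsum t ht) (hmom t ht)
  have hkM_le_Φ : ∀ (i : ℕ), ∀ t ∈ Icc (0:ℝ) b, k i * M i t ≤ Φ t := by
    intro i t ht
    exact (hkM_le i t ht).trans (Summable.le_tsum (hmom t ht) i fun j _ => hmomnn j t ht)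
  -- shifted summability
  have hmom' : ∀ t ∈ Icc (0:ℝ) b,
      Summable (fun j : ℕ =>
        (((j+1 : ℕ) : ℝ) * p (j+1) + ((j+1 : ℕ) : ℝ) * q (j+1) + k (j+1)) * M (j+1) t) :=
    fun t ht => (summable_nat_add_iff 1).2 (hmom t ht)
  have hLle : ∀ (j : ℕ), ∀ t ∈ Icc (0:ℝ) b,
      (p (j+1) + q (j+1)) * M (j+1) t
        ≤ (((j+1 : ℕ) : ℝ) * p (j+1) + ((j+1 : ℕ) : ℝ) * q (j+1) + k (j+1)) * M (j+1) t := by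
    intro j t ht
    apply mul_le_mul_of_nonneg_right _ (hM0 (j+1) t ht)
    have h1 : (1:ℝ) ≤ ((j+1 : ℕ) : ℝ) := by exact_mod_cast Nat.one_le_iff_ne_zero.2 (Nat.succ_ne_zero j)
    nlinarith [hp (j+1), hq (j+1), hk (j+1)]
  have hL0 : ∀ (j : ℕ), ∀ t ∈ Icc (0:ℝ) b, 0 ≤ (p (j+1) + q (j+1)) * M (j+1) t :=
    fun j t ht => mul_nonneg (by linarith [hp (j+1), hq (j+1)]) (hM0 (j+1) t ht)
  have hLsum : ∀ t ∈ Icc (0:ℝ) b, Summable (fun j : ℕ => (p (j+1) + q (j+1)) * M (j+1) t) :=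
    fun t ht => (hmom' t ht).of_nonneg_of_le (fun j => hL0 j t ht) (fun j => hLle j t ht)
  have hLtsum_le : ∀ t ∈ Icc (0:ℝ) b, ∑' j : ℕ, (p (j+1) + q (j+1)) * M (j+1) t ≤ Φ t := by
    intro t ht
    have h1 : ∑' j : ℕ, (p (j+1) + q (j+1)) * M (j+1) t
        ≤ ∑' j : ℕ, (((j+1 : ℕ) : ℝ) * p (j+1) + ((j+1 : ℕ) : ℝ) * q (j+1) + k (j+1)) * M (j+1) t :=
      Summable.tsum_le_tsum (fun j => hLle j t ht) (hLsum t ht) (hmom' t ht)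
    have h2 := Summable.tsum_eq_zero_add (hmom t ht)
    have h3 : 0 ≤ ((0 : ℕ) : ℝ) * p 0 + ((0 : ℕ) : ℝ) * q 0 + k 0 := by
      simp; exact hk 0
    have h4 : 0 ≤ (((0 : ℕ) : ℝ) * p 0 + ((0 : ℕ) : ℝ) * q 0 + k 0) * M 0 t := hmomnn 0 t ht
    simp only [hΦdef]
    rw [h2]
    push_cast at h1 h2 h4 ⊢
    linarith
  have hMsum : ∀ t ∈ Icc (0:ℝ) b, Summable (fun j : ℕ => M (j+1) t) := by
    intro t ht
    have h1 : Summable (fun j : ℕ => (((j+1 : ℕ) : ℝ) + 1) * M (j+1) t) :=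
      (summable_nat_add_iff 1).2 (hsol.summable_norm t (hsub ht))
    apply h1.of_nonneg_of_le (fun j => hM0 (j+1) t ht)
    intro j
    have h2 : (1:ℝ) ≤ ((j+1 : ℕ) : ℝ) + 1 := by
      have := Nat.cast_nonneg (α := ℝ) (j+1)
      linarith
    nlinarith [hM0 (j+1) t ht]
  have hgMsum' : ∀ t ∈ Icc (0:ℝ) b, Summable (fun j : ℕ => g (j+1) * M (j+1) t) :=
    fun t ht => (summable_nat_add_iff 1).2 (hgMsum t ht)
  -- continuity
  have hJcont : ∀ j : ℕ, ContinuousOn (fun s => k j * x s * M j s) (Icc 0 b) := fun j =>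
    (continuousOn_const.mul (hsol.x_cont.mono hsub)).mul ((hsol.M_cont j).mono hsub)
  have hLcont : ∀ j : ℕ, ContinuousOn (fun s => (p (j+1) + q (j+1)) * M (j+1) s) (Icc 0 b) :=
    fun j => continuousOn_const.mul ((hsol.M_cont (j+1)).mono hsub)
  have hII : ∀ (f : ℝ → ℝ), ContinuousOn f (Icc 0 b) → ∀ t ∈ Icc (0:ℝ) b,
      IntervalIntegrable f volume 0 t := by
    intro f hf t ht
    apply (hf.mono _).intervalIntegrable
    rw [uIcc_of_le ht.1]
    exact Icc_subset_Icc le_rfl ht.2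
  have hmeasC : ∀ (f : ℝ → ℝ), ContinuousOn f (Icc 0 b) → ∀ t ∈ Icc (0:ℝ) b,
      AEStronglyMeasurable f (volume.restrict (Ioc 0 t)) := by
    intro f hf t ht
    exact (hf.mono (hIoc_sub t ht)).aestronglyMeasurable measurableSet_Ioc
  have hIntC : ∀ (f : ℝ → ℝ), ContinuousOn f (Icc 0 b) → ∀ t ∈ Icc (0:ℝ) b,
      IntegrableOn f (Ioc 0 t) volume := by
    intro f hf t ht
    have h1 := hII f hf t ht
    rwa [intervalIntegrable_iff_integrableOn_Ioc_of_le ht.1] at h1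
  -- the truncated weights
  set w : ℕ → ℕ → ℝ := fun n i => if i ≤ n then g i else g n with hwdef
  have hw0 : ∀ n i, 0 ≤ w n i := by
    intro n i
    simp only [hwdef]
    split <;> exact hg0 _
  have hweq : ∀ n i, i ≤ n → w n i = g i := by
    intro n i h; simp [hwdef, h]
  have hwle : ∀ n i, N ≤ n → w n i ≤ g i := by
    intro n i hn
    by_cases h : i ≤ n
    · simp [hwdef, h]
    · push_neg at h
      simp only [hwdef, if_neg (not_le.2 h)]
      exact hgmle n i hn h.le
  set G : ℕ → ℝ := fun n => ∑ j ∈ Finset.range (n+1), g j with hGdef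
  have hG0 : ∀ n, 0 ≤ G n := fun n => Finset.sum_nonneg fun j _ => hg0 j
  have hwbd : ∀ n i, w n i ≤ G n := by
    intro n i
    simp only [hwdef, hGdef]
    split_ifs with h
    · exact Finset.single_le_sum (fun j _ => hg0 j)
        (Finset.mem_range.2 (Nat.lt_succ_of_le h))
    · exact Finset.single_le_sum (fun j _ => hg0 j)
        (Finset.mem_range.2 (Nat.lt_succ_of_le le_rfl))
  set e : ℕ → ℝ := fun j => g (j+1) - g j with hedef
  have he0 : ∀ j, N ≤ j → 0 ≤ e j := fun j hj => sub_nonneg.2 (hgm j hj)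
  have heC : ∀ j, N ≤ j → e j * k j ≤ max C 0 * g j := by
    intro j hj
    have h1 := hO j hj
    have h2 : e j * k j ≤ C * g j := by
      simp only [hedef, hgdef]
      convert h1 using 2 <;> push_cast <;> ring
    calc e j * k j ≤ C * g j := h2
    _ ≤ max C 0 * g j := mul_le_mul_of_nonneg_right (le_max_left _ _) (hg0 j)
  have hwdiff : ∀ n j, w n (j+1) - w n j = if j < n then e j else 0 := by
    intro n j
    by_cases h : j < n
    · have h1 : j + 1 ≤ n := h
      have h2 : j ≤ n := h.le
      simp [hwdef, hedef, h1, h2, h]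
    · push_neg at h
      have h1 : ¬ (j + 1 ≤ n) := by omega
      by_cases h2 : j ≤ n
      · have h3 : j = n := le_antisymm h2 h
        subst h3
        simp [hwdef, h1]
      · simp [hwdef, h1, h2, if_neg (not_lt.2 h)]
  -- Step 1 : partial-sum identity
  have hId1 : ∀ (n m : ℕ), ∀ t ∈ Icc (0:ℝ) b,
      ∑ j ∈ Finset.range m, w n (j+1) * M (j+1) t
        = ∑ j ∈ Finset.range m, w n (j+1) * M (j+1) 0
          + (∫ s in (0:ℝ)..t, ∑ j ∈ Finset.range m, (w n (j+1) - w n j) * (k j * x s * M j s))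
          - (∫ s in (0:ℝ)..t, w n m * (k m * x s * M m s))
          - ∫ s in (0:ℝ)..t, ∑ j ∈ Finset.range m, w n (j+1) * ((p (j+1) + q (j+1)) * M (j+1) s) := by
    intro n m t ht
    have hterm : ∀ j : ℕ, w n (j+1) * M (j+1) t = w n (j+1) * M (j+1) 0
        + ∫ s in (0:ℝ)..t, w n (j+1) * (k j * x s * M j s - k (j+1) * x s * M (j+1) s
            - (p (j+1) + q (j+1)) * M (j+1) s) := by
      intro j
      have h1 := hsol.eq_M (j+1) (Nat.le_add_left 1 j) t (hsub ht)
      simp only [Nat.add_sub_cancel] at h1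
      rw [intervalIntegral.integral_const_mul, ← mul_add, ← h1]
    have hcontj : ∀ j : ℕ, ContinuousOn
        (fun s => w n (j+1) * (k j * x s * M j s - k (j+1) * x s * M (j+1) s
          - (p (j+1) + q (j+1)) * M (j+1) s)) (Icc 0 b) := fun j =>
      continuousOn_const.mul (((hJcont j).sub (hJcont (j+1))).sub (hLcont j))
    have hint : ∀ j ∈ Finset.range m, IntervalIntegrable
        (fun s => w n (j+1) * (k j * x s * M j s - k (j+1) * x s * M (j+1) s
          - (p (j+1) + q (j+1)) * M (j+1) s)) volume 0 t :=
      fun j _ => hII _ (hcontj j) t ht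
    have hsumeq := intervalIntegral.integral_finset_sum hint
    have hptw : ∀ s : ℝ,
        (∑ j ∈ Finset.range m, w n (j+1) * (k j * x s * M j s - k (j+1) * x s * M (j+1) s
          - (p (j+1) + q (j+1)) * M (j+1) s))
        = (∑ j ∈ Finset.range m, (w n (j+1) - w n j) * (k j * x s * M j s))
          - w n m * (k m * x s * M m s)
          - ∑ j ∈ Finset.range m, w n (j+1) * ((p (j+1) + q (j+1)) * M (j+1) s) := by
      intro s
      have h0 : w n 0 = 0 := by
        rw [hweq n 0 (Nat.zero_le n), hgzero]
      have h1 : ∑ j ∈ Finset.range m, w n (j+1) * (k j * x s * M j s - k (j+1) * x s * M (j+1) s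
            - (p (j+1) + q (j+1)) * M (j+1) s)
          = (∑ j ∈ Finset.range m, w n (j+1) * ((fun j => k j * x s * M j s) j
              - (fun j => k j * x s * M j s) (j+1)))
            - ∑ j ∈ Finset.range m, w n (j+1) * ((p (j+1) + q (j+1)) * M (j+1) s) := by
        rw [← Finset.sum_sub_distrib]
        exact Finset.sum_congr rfl fun j _ => by ring
      rw [h1, abel_sum (w n) (fun j => k j * x s * M j s) m, h0]
      ring
    have hI1 : IntervalIntegrable
        (fun s => ∑ j ∈ Finset.range m, (w n (j+1) - w n j) * (k j * x s * M j s)) volume 0 t :=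
      hII _ (contOn_sum _ _ _ fun j _ => continuousOn_const.mul (hJcont j)) t ht
    have hI2 : IntervalIntegrable (fun s => w n m * (k m * x s * M m s)) volume 0 t :=
      hII _ (continuousOn_const.mul (hJcont m)) t ht
    have hI3 : IntervalIntegrable
        (fun s => ∑ j ∈ Finset.range m, w n (j+1) * ((p (j+1) + q (j+1)) * M (j+1) s))
        volume 0 t :=
      hII _ (contOn_sum _ _ _ fun j _ => continuousOn_const.mul (hLcont j)) t ht
    calc ∑ j ∈ Finset.range m, w n (j+1) * M (j+1) t
        = ∑ j ∈ Finset.range m, (w n (j+1) * M (j+1) 0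
            + ∫ s in (0:ℝ)..t, w n (j+1) * (k j * x s * M j s - k (j+1) * x s * M (j+1) s
              - (p (j+1) + q (j+1)) * M (j+1) s)) :=
          Finset.sum_congr rfl fun j _ => hterm j
      _ = ∑ j ∈ Finset.range m, w n (j+1) * M (j+1) 0
          + ∑ j ∈ Finset.range m, ∫ s in (0:ℝ)..t,
              w n (j+1) * (k j * x s * M j s - k (j+1) * x s * M (j+1) s
                - (p (j+1) + q (j+1)) * M (j+1) s) := Finset.sum_add_distrib
      _ = ∑ j ∈ Finset.range m, w n (j+1) * M (j+1) 0
          + ∫ s in (0:ℝ)..t, ∑ j ∈ Finset.range m,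
              w n (j+1) * (k j * x s * M j s - k (j+1) * x s * M (j+1) s
                - (p (j+1) + q (j+1)) * M (j+1) s) := by rw [hsumeq]
      _ = ∑ j ∈ Finset.range m, w n (j+1) * M (j+1) 0
          + ∫ s in (0:ℝ)..t,
              ((∑ j ∈ Finset.range m, (w n (j+1) - w n j) * (k j * x s * M j s))
                - w n m * (k m * x s * M m s)
                - ∑ j ∈ Finset.range m, w n (j+1) * ((p (j+1) + q (j+1)) * M (j+1) s)) := by
          congr 1
          exact intervalIntegral.integral_congr fun s _ => hptw s
      _ = ∑ j ∈ Finset.range m, w n (j+1) * M (j+1) 0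
          + ((∫ s in (0:ℝ)..t, ∑ j ∈ Finset.range m, (w n (j+1) - w n j) * (k j * x s * M j s))
            - (∫ s in (0:ℝ)..t, w n m * (k m * x s * M m s))
            - ∫ s in (0:ℝ)..t, ∑ j ∈ Finset.range m,
                w n (j+1) * ((p (j+1) + q (j+1)) * M (j+1) s)) := by
          rw [intervalIntegral.integral_sub (hI1.sub hI2) hI3,
            intervalIntegral.integral_sub hI1 hI2]
      _ = _ := by ring
  -- Step 1.5 : gain-sum stabilization
  have hgain : ∀ n m : ℕ, n ≤ m → ∀ s : ℝ,
      (∑ j ∈ Finset.range m, (w n (j+1) - w n j) * (k j * x s * M j s))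
        = ∑ j ∈ Finset.range n, e j * (k j * x s * M j s) := by
    intro n m hnm s
    have h1 : ∀ j : ℕ, (w n (j+1) - w n j) * (k j * x s * M j s)
        = (if j < n then e j else 0) * (k j * x s * M j s) := fun j => by rw [hwdiff]
    simp only [h1]
    rw [← Finset.sum_subset (Finset.range_subset_range.2 hnm)
      (fun j _ hj => by rw [if_neg (by simpa using hj), zero_mul])]
    exact Finset.sum_congr rfl fun j hj => by rw [if_pos (Finset.mem_range.1 hj)]
  -- Step 2 : the m → ∞ limit
  set Tn : ℕ → ℝ → ℝ := fun n s => ∑ j ∈ Finset.range n, e j * (k j * x s * M j s) with hTndef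
  set Wn : ℕ → ℝ → ℝ :=
    fun n s => ∑' j : ℕ, w n (j+1) * ((p (j+1) + q (j+1)) * M (j+1) s) with hWndef
  set Pn : ℕ → ℝ → ℝ := fun n t => ∑' j : ℕ, w n (j+1) * M (j+1) t with hPndef
  have hWnsum : ∀ (n : ℕ), ∀ s ∈ Icc (0:ℝ) b,
      Summable (fun j : ℕ => w n (j+1) * ((p (j+1) + q (j+1)) * M (j+1) s)) := by
    intro n s hs
    apply ((hLsum s hs).mul_left (G n)).of_nonneg_of_le
    · intro j; exact mul_nonneg (hw0 n (j+1)) (hL0 j s hs)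
    · intro j; exact mul_le_mul_of_nonneg_right (hwbd n (j+1)) (hL0 j s hs)
  have hPnsum : ∀ (n : ℕ), ∀ t ∈ Icc (0:ℝ) b,
      Summable (fun j : ℕ => w n (j+1) * M (j+1) t) := by
    intro n t ht
    apply ((hMsum t ht).mul_left (G n)).of_nonneg_of_le
    · intro j; exact mul_nonneg (hw0 n (j+1)) (hM0 (j+1) t ht)
    · intro j; exact mul_le_mul_of_nonneg_right (hwbd n (j+1)) (hM0 (j+1) t ht)
  have hWn0 : ∀ (n : ℕ), ∀ s ∈ Icc (0:ℝ) b, 0 ≤ Wn n s := fun n s hs =>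
    tsum_nonneg fun j => mul_nonneg (hw0 n (j+1)) (hL0 j s hs)
  have hWnle : ∀ (n : ℕ), ∀ s ∈ Icc (0:ℝ) b, Wn n s ≤ G n * Φ s := by
    intro n s hs
    have h1 : Wn n s ≤ ∑' j : ℕ, G n * ((p (j+1) + q (j+1)) * M (j+1) s) :=
      Summable.tsum_le_tsum (fun j => mul_le_mul_of_nonneg_right (hwbd n (j+1)) (hL0 j s hs))
        (hWnsum n s hs) ((hLsum s hs).mul_left (G n))
    rw [tsum_mul_left] at h1
    exact h1.trans (mul_le_mul_of_nonneg_left (hLtsum_le s hs) (hG0 n))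
  have hWnpartial_le : ∀ (n m : ℕ), ∀ s ∈ Icc (0:ℝ) b,
      ∑ j ∈ Finset.range m, w n (j+1) * ((p (j+1) + q (j+1)) * M (j+1) s) ≤ Wn n s :=
    fun n m s hs => Summable.sum_le_tsum (Finset.range m)
      (fun j _ => mul_nonneg (hw0 n (j+1)) (hL0 j s hs)) (hWnsum n s hs)
  have hWnLcont : ∀ (n m : ℕ), ContinuousOn
      (fun s => ∑ j ∈ Finset.range m, w n (j+1) * ((p (j+1) + q (j+1)) * M (j+1) s))
      (Icc 0 b) :=
    fun n m => contOn_sum _ _ _ fun j _ => continuousOn_const.mul (hLcont j)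
  have hWnmeas : ∀ (n : ℕ), ∀ t ∈ Icc (0:ℝ) b,
      AEStronglyMeasurable (Wn n) (volume.restrict (Ioc 0 t)) := by
    intro n t ht
    apply aestronglyMeasurable_of_tendsto_ae atTop (fun m => hmeasC _ (hWnLcont n m) t ht)
    apply haeOn
    intro s hs
    exact (hWnsum n s (hIoc_sub t ht hs)).hasSum.tendsto_sum_nat
  have hWnint : ∀ (n : ℕ), ∀ t ∈ Icc (0:ℝ) b, IntegrableOn (Wn n) (Ioc 0 t) volume := by
    intro n t ht
    apply Integrable.mono' ((hΦint t ht).const_mul (G n)) (hWnmeas n t ht)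
    apply haeOn
    intro s hs
    have hs' := hIoc_sub t ht hs
    rw [Real.norm_eq_abs, abs_of_nonneg (hWn0 n s hs')]
    exact hWnle n s hs'
  have hId2 : ∀ n : ℕ, N ≤ n → ∀ t ∈ Icc (0:ℝ) b,
      Pn n t = Pn n 0 + (∫ s in Ioc (0:ℝ) t, Tn n s) - ∫ s in Ioc (0:ℝ) t, Wn n s := by
    intro n hn t ht
    have lim1 : Tendsto (fun m => ∑ j ∈ Finset.range m, w n (j+1) * M (j+1) t) atTop
        (𝓝 (Pn n t)) := (hPnsum n t ht).hasSum.tendsto_sum_nat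
    have lim0 : Tendsto (fun m => ∑ j ∈ Finset.range m, w n (j+1) * M (j+1) 0) atTop
        (𝓝 (Pn n 0)) := (hPnsum n 0 h0b).hasSum.tendsto_sum_nat
    have limW : Tendsto (fun m => ∫ s in Ioc (0:ℝ) t,
        ∑ j ∈ Finset.range m, w n (j+1) * ((p (j+1) + q (j+1)) * M (j+1) s)) atTop
        (𝓝 (∫ s in Ioc (0:ℝ) t, Wn n s)) := by
      apply tendsto_integral_of_dominated_convergence (fun s => G n * Φ s)
        (fun m => hmeasC _ (hWnLcont n m) t ht) ((hΦint t ht).const_mul (G n))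
      · intro m
        apply haeOn
        intro s hs
        have hs' := hIoc_sub t ht hs
        rw [Real.norm_eq_abs, abs_of_nonneg (Finset.sum_nonneg fun j _ =>
          mul_nonneg (hw0 n (j+1)) (hL0 j s hs'))]
        exact (hWnpartial_le n m s hs').trans (hWnle n s hs')
      · apply haeOn
        intro s hs
        exact (hWnsum n s (hIoc_sub t ht hs)).hasSum.tendsto_sum_nat
    have limB : Tendsto (fun m => ∫ s in Ioc (0:ℝ) t, w n m * (k m * x s * M m s)) atTop
        (𝓝 0) := by
      have h5 : Tendsto (fun m => ∫ s in Ioc (0:ℝ) t, w n m * (k m * x s * M m s)) atTop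
          (𝓝 (∫ s in Ioc (0:ℝ) t, (0:ℝ))) := by
        apply tendsto_integral_of_dominated_convergence (fun s => G n * (X * Φ s))
          (fun m => hmeasC _ (continuousOn_const.mul (hJcont m)) t ht)
          (((hΦint t ht).const_mul X).const_mul (G n))
        · intro m
          apply haeOn
          intro s hs
          have hs' := hIoc_sub t ht hs
          have h1 : 0 ≤ k m * x s * M m s :=
            mul_nonneg (mul_nonneg (hk m) (hx0 s hs')) (hM0 m s hs')
          rw [Real.norm_eq_abs]
          show |w n m * (k m * x s * M m s)| ≤ _
          rw [abs_of_nonneg (mul_nonneg (hw0 n m) h1)]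
          have h2 : k m * x s * M m s ≤ X * Φ s := by
            have h3 : k m * x s * M m s = x s * (k m * M m s) := by ring
            rw [h3]
            exact mul_le_mul (hxX s hs') (hkM_le_Φ m s hs')
              (mul_nonneg (hk m) (hM0 m s hs')) hX0
          calc w n m * (k m * x s * M m s) ≤ G n * (k m * x s * M m s) :=
                mul_le_mul_of_nonneg_right (hwbd n m) h1
            _ ≤ G n * (X * Φ s) := mul_le_mul_of_nonneg_left h2 (hG0 n)
        · apply haeOn
          intro s hs
          have hs' := hIoc_sub t ht hs
          have h1 : Tendsto (fun m => k m * M m s) atTop (𝓝 0) :=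
            (hkMsum s hs').tendsto_atTop_zero
          have h3 : Tendsto (fun m => (G n * X) * (k m * M m s)) atTop (𝓝 ((G n * X) * 0)) :=
            Tendsto.const_mul (G n * X) h1
          rw [mul_zero] at h3
          apply squeeze_zero_norm _ h3
          intro m
          have h4 : 0 ≤ k m * x s * M m s :=
            mul_nonneg (mul_nonneg (hk m) (hx0 s hs')) (hM0 m s hs')
          rw [Real.norm_eq_abs]
          show |w n m * (k m * x s * M m s)| ≤ _
          rw [abs_of_nonneg (mul_nonneg (hw0 n m) h4)]
          calc w n m * (k m * x s * M m s) ≤ G n * (k m * x s * M m s) :=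
                mul_le_mul_of_nonneg_right (hwbd n m) h4
            _ = G n * (x s * (k m * M m s)) := by ring
            _ ≤ G n * (X * (k m * M m s)) := mul_le_mul_of_nonneg_left
                (mul_le_mul_of_nonneg_right (hxX s hs') (mul_nonneg (hk m) (hM0 m s hs')))
                (hG0 n)
            _ = (G n * X) * (k m * M m s) := by ring
      simpa using h5
    have key : (fun m => ∑ j ∈ Finset.range m, w n (j+1) * M (j+1) t) =ᶠ[atTop]
        (fun m => ∑ j ∈ Finset.range m, w n (j+1) * M (j+1) 0
          + (∫ s in Ioc (0:ℝ) t, Tn n s)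
          - (∫ s in Ioc (0:ℝ) t, w n m * (k m * x s * M m s))
          - ∫ s in Ioc (0:ℝ) t,
              ∑ j ∈ Finset.range m, w n (j+1) * ((p (j+1) + q (j+1)) * M (j+1) s)) := by
      filter_upwards [eventually_ge_atTop n] with m hm
      have h1 := hId1 n m t ht
      rw [intervalIntegral.integral_of_le ht.1, intervalIntegral.integral_of_le ht.1,
        intervalIntegral.integral_of_le ht.1] at h1
      have h2 : (fun s => ∑ j ∈ Finset.range m, (w n (j+1) - w n j) * (k j * x s * M j s))
          = fun s => Tn n s := funext fun s => hgain n m hm s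
      rw [h2] at h1
      exact h1
    have lim3 : Tendsto (fun m => ∑ j ∈ Finset.range m, w n (j+1) * M (j+1) t) atTop
        (𝓝 (Pn n 0 + (∫ s in Ioc (0:ℝ) t, Tn n s) - 0 - ∫ s in Ioc (0:ℝ) t, Wn n s)) :=
      Tendsto.congr' key.symm (((lim0.add tendsto_const_nhds).sub limB).sub limW)
    have h4 := tendsto_nhds_unique lim1 lim3
    rw [h4]; ring
  -- Step 3 : the limit functions S and W and their integrability
  set S : ℝ → ℝ := fun s => ∑' j : ℕ, e j * (k j * x s * M j s) with hSdef
  set DD : ℝ → ℝ := fun s => ((∑ j ∈ Finset.range N, |e j|) + max C 0) * (X * Φ s) with hDDdef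
  have hmaxC0 : (0:ℝ) ≤ max C 0 := le_max_right _ _
  have hJ0 : ∀ (j : ℕ), ∀ s ∈ Icc (0:ℝ) b, 0 ≤ k j * x s * M j s := fun j s hs =>
    mul_nonneg (mul_nonneg (hk j) (hx0 s hs)) (hM0 j s hs)
  have hJle : ∀ (j : ℕ), ∀ s ∈ Icc (0:ℝ) b, k j * x s * M j s ≤ X * Φ s := by
    intro j s hs
    have h3 : k j * x s * M j s = x s * (k j * M j s) := by ring
    rw [h3]
    exact mul_le_mul (hxX s hs) (hkM_le_Φ j s hs) (mul_nonneg (hk j) (hM0 j s hs)) hX0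
  have hβ0 : ∀ (j : ℕ), ∀ s ∈ Icc (0:ℝ) b,
      0 ≤ (if j < N then |e j| else 0) * (X * Φ s) + max C 0 * (X * (g j * M j s)) := by
    intro j s hs
    have h1 : 0 ≤ X * Φ s := mul_nonneg hX0 (hΦ0 s hs)
    have h2 : (0:ℝ) ≤ (if j < N then |e j| else 0) := by
      split_ifs
      · exact abs_nonneg _
      · exact le_rfl
    have h3 : 0 ≤ X * (g j * M j s) := mul_nonneg hX0 (mul_nonneg (hg0 j) (hM0 j s hs))
    exact add_nonneg (mul_nonneg h2 h1) (mul_nonneg hmaxC0 h3)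
  have hterm_bd : ∀ (j : ℕ), ∀ s ∈ Icc (0:ℝ) b,
      |e j * (k j * x s * M j s)|
        ≤ (if j < N then |e j| else 0) * (X * Φ s) + max C 0 * (X * (g j * M j s)) := by
    intro j s hs
    by_cases hj : j < N
    · rw [if_pos hj, abs_mul, abs_of_nonneg (hJ0 j s hs)]
      have h1 : |e j| * (k j * x s * M j s) ≤ |e j| * (X * Φ s) :=
        mul_le_mul_of_nonneg_left (hJle j s hs) (abs_nonneg _)
      have h2 : 0 ≤ max C 0 * (X * (g j * M j s)) :=
        mul_nonneg hmaxC0 (mul_nonneg hX0 (mul_nonneg (hg0 j) (hM0 j s hs)))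
      linarith
    · rw [if_neg hj, zero_mul, zero_add]
      push_neg at hj
      rw [abs_mul, abs_of_nonneg (hJ0 j s hs), abs_of_nonneg (he0 j hj)]
      calc e j * (k j * x s * M j s) = (e j * k j) * (x s * M j s) := by ring
        _ ≤ (max C 0 * g j) * (x s * M j s) :=
            mul_le_mul_of_nonneg_right (heC j hj) (mul_nonneg (hx0 s hs) (hM0 j s hs))
        _ = max C 0 * (g j * (x s * M j s)) := by ring
        _ ≤ max C 0 * (g j * (X * M j s)) := by
            apply mul_le_mul_of_nonneg_left _ hmaxC0
            apply mul_le_mul_of_nonneg_left _ (hg0 j)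
            exact mul_le_mul_of_nonneg_right (hxX s hs) (hM0 j s hs)
        _ = max C 0 * (X * (g j * M j s)) := by ring
  have hifsum : ∀ s : ℝ, Summable (fun j : ℕ => (if j < N then |e j| else 0) * (X * Φ s)) := by
    intro s
    apply summable_of_ne_finset_zero (s := Finset.range N)
    intro j hj
    rw [if_neg (fun h => hj (Finset.mem_range.2 h)), zero_mul]
  have hβsum : ∀ s ∈ Icc (0:ℝ) b, Summable (fun j : ℕ =>
      (if j < N then |e j| else 0) * (X * Φ s) + max C 0 * (X * (g j * M j s))) := by
    intro s hs
    exact (hifsum s).add (((hgMsum s hs).mul_left X).mul_left (max C 0))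
  have hβtsum_le : ∀ s ∈ Icc (0:ℝ) b,
      ∑' j : ℕ, ((if j < N then |e j| else 0) * (X * Φ s)
        + max C 0 * (X * (g j * M j s))) ≤ DD s := by
    intro s hs
    have hs2 : Summable (fun j : ℕ => max C 0 * (X * (g j * M j s))) :=
      ((hgMsum s hs).mul_left X).mul_left (max C 0)
    rw [Summable.tsum_add (hifsum s) hs2, tsum_mul_right, tsum_mul_left, tsum_mul_left,
      tsum_eq_sum (s := Finset.range N)
        (fun j hj => by rw [if_neg (fun h => hj (Finset.mem_range.2 h))])]
    have h1 : ∑ j ∈ Finset.range N, (if j < N then |e j| else 0)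
        = ∑ j ∈ Finset.range N, |e j| :=
      Finset.sum_congr rfl fun j hj => by rw [if_pos (Finset.mem_range.1 hj)]
    rw [h1]
    have h2 : max C 0 * (X * ∑' j, g j * M j s) ≤ max C 0 * (X * Φ s) :=
      mul_le_mul_of_nonneg_left
        (mul_le_mul_of_nonneg_left (hgMtsum_le s hs) hX0) hmaxC0
    simp only [hDDdef]
    nlinarith [h2]
  have hSsumm : ∀ s ∈ Icc (0:ℝ) b, Summable (fun j : ℕ => e j * (k j * x s * M j s)) := by
    intro s hs
    apply Summable.of_norm_bounded (hβsum s hs)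
    intro j
    rw [Real.norm_eq_abs]
    exact hterm_bd j s hs
  have hTn_bd : ∀ (n : ℕ), ∀ s ∈ Icc (0:ℝ) b, |Tn n s| ≤ DD s := by
    intro n s hs
    calc |Tn n s| ≤ ∑ j ∈ Finset.range n, |e j * (k j * x s * M j s)| :=
          Finset.abs_sum_le_sum_abs _ _
      _ ≤ ∑ j ∈ Finset.range n, ((if j < N then |e j| else 0) * (X * Φ s)
            + max C 0 * (X * (g j * M j s))) :=
          Finset.sum_le_sum fun j _ => hterm_bd j s hs
      _ ≤ ∑' j : ℕ, ((if j < N then |e j| else 0) * (X * Φ s)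
            + max C 0 * (X * (g j * M j s))) :=
          Summable.sum_le_tsum _ (fun j _ => hβ0 j s hs) (hβsum s hs)
      _ ≤ DD s := hβtsum_le s hs
  have hS_bd : ∀ s ∈ Icc (0:ℝ) b, |S s| ≤ DD s := by
    intro s hs
    have hnorm : Summable (fun j : ℕ => |e j * (k j * x s * M j s)|) :=
      (hβsum s hs).of_nonneg_of_le (fun j => abs_nonneg _) (fun j => hterm_bd j s hs)
    have h1 : |S s| ≤ ∑' j : ℕ, |e j * (k j * x s * M j s)| := by
      rw [← Real.norm_eq_abs]
      have := norm_tsum_le_tsum_norm (f := fun j : ℕ => e j * (k j * x s * M j s))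
        (by simpa only [Real.norm_eq_abs] using hnorm)
      simpa only [Real.norm_eq_abs] using this
    exact h1.trans ((Summable.tsum_le_tsum (fun j => hterm_bd j s hs) hnorm (hβsum s hs)).trans
      (hβtsum_le s hs))
  have hTncont : ∀ n, ContinuousOn (Tn n) (Icc 0 b) := fun n =>
    contOn_sum _ _ _ fun j _ => continuousOn_const.mul (hJcont j)
  have hSmeas : ∀ t ∈ Icc (0:ℝ) b, AEStronglyMeasurable S (volume.restrict (Ioc 0 t)) := by
    intro t ht
    apply aestronglyMeasurable_of_tendsto_ae atTop (fun n => hmeasC _ (hTncont n) t ht)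
    apply haeOn
    intro s hs
    exact (hSsumm s (hIoc_sub t ht hs)).hasSum.tendsto_sum_nat
  have hDDint : ∀ t ∈ Icc (0:ℝ) b, IntegrableOn DD (Ioc 0 t) volume := fun t ht =>
    ((hΦint t ht).const_mul X).const_mul _
  have hSint : ∀ t ∈ Icc (0:ℝ) b, IntegrableOn S (Ioc 0 t) volume := by
    intro t ht
    apply Integrable.mono' (hDDint t ht) (hSmeas t ht)
    apply haeOn
    intro s hs
    rw [Real.norm_eq_abs]
    exact hS_bd s (hIoc_sub t ht hs)
  -- Pn n 0 is uniformly bounded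
  have hPn0 : ∀ n, N ≤ n → Pn n 0 ≤ Φ 0 := by
    intro n hn
    have h1 : Pn n 0 ≤ ∑' j : ℕ, g (j+1) * M (j+1) 0 :=
      Summable.tsum_le_tsum (fun j => mul_le_mul_of_nonneg_right (hwle n (j+1) hn) (hM0 (j+1) 0 h0b))
        (hPnsum n 0 h0b) (hgMsum' 0 h0b)
    have h2 := Summable.tsum_eq_zero_add (hgMsum 0 h0b)
    rw [hgzero, zero_mul, zero_add] at h2
    rw [← h2] at h1
    exact h1.trans (hgMtsum_le 0 h0b)
  -- Step 4 : integrability of the full loss term W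
  set W : ℝ → ℝ := fun s => ∑' j : ℕ, g (j+1) * ((p (j+1) + q (j+1)) * M (j+1) s) with hWdef
  set μb : Measure ℝ := volume.restrict (Ioc 0 b) with hμbdef
  set Λ : ℝ := (∫ s in Ioc (0:ℝ) b, DD s) + Φ 0 with hΛdef
  have hfjcont : ∀ j : ℕ,
      ContinuousOn (fun s => g (j+1) * ((p (j+1) + q (j+1)) * M (j+1) s)) (Icc 0 b) :=
    fun j => continuousOn_const.mul (hLcont j)
  have hfjnn : ∀ (j : ℕ), ∀ s ∈ Icc (0:ℝ) b,
      0 ≤ g (j+1) * ((p (j+1) + q (j+1)) * M (j+1) s) :=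
    fun j s hs => mul_nonneg (hg0 (j+1)) (hL0 j s hs)
  have hpartial_int_le : ∀ m : ℕ,
      (∫ s in Ioc (0:ℝ) b, ∑ j ∈ Finset.range m, g (j+1) * ((p (j+1) + q (j+1)) * M (j+1) s))
        ≤ Λ := by
    intro m
    set n : ℕ := max m N with hndef
    have hnN : N ≤ n := le_max_right _ _
    have hnm : m ≤ n := le_max_left _ _
    have h1 : ∀ s ∈ Icc (0:ℝ) b,
        ∑ j ∈ Finset.range m, g (j+1) * ((p (j+1) + q (j+1)) * M (j+1) s) ≤ Wn n s := by
      intro s hs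
      have h2 : ∀ j ∈ Finset.range m, g (j+1) * ((p (j+1) + q (j+1)) * M (j+1) s)
          = w n (j+1) * ((p (j+1) + q (j+1)) * M (j+1) s) := by
        intro j hj
        rw [hweq n (j+1) ((Nat.succ_le_of_lt (Finset.mem_range.1 hj)).trans hnm)]
      rw [Finset.sum_congr rfl h2]
      exact hWnpartial_le n m s hs
    have h3 : (∫ s in Ioc (0:ℝ) b,
          ∑ j ∈ Finset.range m, g (j+1) * ((p (j+1) + q (j+1)) * M (j+1) s))
        ≤ ∫ s in Ioc (0:ℝ) b, Wn n s := by
      apply integral_mono_ae (hIntC _ (contOn_sum _ _ _ fun j _ => hfjcont j) b hb)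
        (hWnint n b hb)
      exact haeOn b _ (fun s hs => h1 s (hIoc_sub b hb hs))
    have h5 := hId2 n hnN b hb
    have h7 : 0 ≤ Pn n b := tsum_nonneg fun j => mul_nonneg (hw0 n (j+1)) (hM0 (j+1) b hb)
    have h8 : (∫ s in Ioc (0:ℝ) b, Tn n s) ≤ ∫ s in Ioc (0:ℝ) b, DD s := by
      apply integral_mono_ae (hIntC _ (hTncont n) b hb) (hDDint b hb)
      exact haeOn b _ (fun s hs => (le_abs_self _).trans (hTn_bd n s (hIoc_sub b hb hs)))
    have h9 := hPn0 n hnN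
    have h10 : (∫ s in Ioc (0:ℝ) b, Wn n s) ≤ Λ := by
      simp only [hΛdef]
      linarith
    exact h3.trans h10
  have hfj_meas : ∀ j : ℕ, AEMeasurable
      (fun s => ENNReal.ofReal (g (j+1) * ((p (j+1) + q (j+1)) * M (j+1) s))) μb :=
    fun j => ((hmeasC _ (hfjcont j) b hb).aemeasurable).ennreal_ofReal
  have hlinsum : ∑' j : ℕ,
      ∫⁻ s, ENNReal.ofReal (g (j+1) * ((p (j+1) + q (j+1)) * M (j+1) s)) ∂μb
        ≤ ENNReal.ofReal Λ := by
    rw [ENNReal.tsum_eq_iSup_sum]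
    apply iSup_le
    intro F
    set m : ℕ := (F.sup id) + 1 with hmdef
    have hFsub : F ⊆ Finset.range m :=
      fun j hj => Finset.mem_range.2 (Nat.lt_succ_of_le (Finset.le_sup (f := id) hj))
    have h2 : ∀ j : ℕ,
        ∫⁻ s, ENNReal.ofReal (g (j+1) * ((p (j+1) + q (j+1)) * M (j+1) s)) ∂μb
          = ENNReal.ofReal (∫ s, g (j+1) * ((p (j+1) + q (j+1)) * M (j+1) s) ∂μb) :=
      fun j => (ofReal_integral_eq_lintegral_ofReal (hIntC _ (hfjcont j) b hb)
        (haeOn b _ (fun s hs => hfjnn j s (hIoc_sub b hb hs)))).symm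
    calc ∑ j ∈ F, ∫⁻ s, ENNReal.ofReal (g (j+1) * ((p (j+1) + q (j+1)) * M (j+1) s)) ∂μb
        ≤ ∑ j ∈ Finset.range m,
            ∫⁻ s, ENNReal.ofReal (g (j+1) * ((p (j+1) + q (j+1)) * M (j+1) s)) ∂μb :=
          Finset.sum_le_sum_of_subset hFsub
      _ = ENNReal.ofReal (∑ j ∈ Finset.range m,
            ∫ s, g (j+1) * ((p (j+1) + q (j+1)) * M (j+1) s) ∂μb) := by
          simp only [h2]
          rw [← ENNReal.ofReal_sum_of_nonneg]
          intro j _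
          exact integral_nonneg_of_ae (haeOn b _ (fun s hs => hfjnn j s (hIoc_sub b hb hs)))
      _ = ENNReal.ofReal (∫ s, ∑ j ∈ Finset.range m,
            g (j+1) * ((p (j+1) + q (j+1)) * M (j+1) s) ∂μb) := by
          rw [integral_finset_sum (Finset.range m) (fun j _ => hIntC _ (hfjcont j) b hb)]
      _ ≤ ENNReal.ofReal Λ := ENNReal.ofReal_le_ofReal (hpartial_int_le m)
  have hWlint : ∫⁻ s, (∑' j : ℕ,
      ENNReal.ofReal (g (j+1) * ((p (j+1) + q (j+1)) * M (j+1) s))) ∂μb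
        ≤ ENNReal.ofReal Λ := by
    rw [lintegral_tsum hfj_meas]
    exact hlinsum
  have hae_sum : ∀ᵐ s ∂μb,
      Summable (fun j : ℕ => g (j+1) * ((p (j+1) + q (j+1)) * M (j+1) s)) := by
    have h1 : ∀ᵐ s ∂μb,
        (∑' j : ℕ, ENNReal.ofReal (g (j+1) * ((p (j+1) + q (j+1)) * M (j+1) s))) < ⊤ :=
      ae_lt_top' (AEMeasurable.ennreal_tsum hfj_meas)
        (lt_of_le_of_lt hWlint ENNReal.ofReal_lt_top).ne
    filter_upwards [h1, ae_restrict_mem measurableSet_Ioc] with s hs1 hs2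
    have h2 := ENNReal.summable_toReal hs1.ne
    apply h2.congr
    intro j
    rw [ENNReal.toReal_ofReal (hfjnn j s (hIoc_sub b hb hs2))]
  have hWmeas : AEStronglyMeasurable W μb := by
    apply aestronglyMeasurable_of_tendsto_ae atTop
      (fun m => hmeasC _ (contOn_sum (Finset.range m) _ _ fun j _ => hfjcont j) b hb)
    filter_upwards [hae_sum] with s hs
    exact hs.hasSum.tendsto_sum_nat
  have hWint : IntegrableOn W (Ioc 0 b) volume := by
    refine ⟨hWmeas, ?_⟩
    rw [hasFiniteIntegral_iff_norm]
    apply lt_of_le_of_lt _ (lt_of_le_of_lt hWlint ENNReal.ofReal_lt_top)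
    apply lintegral_mono_ae
    filter_upwards [hae_sum, ae_restrict_mem measurableSet_Ioc] with s hs1 hs2
    have hs' := hIoc_sub b hb hs2
    have hWnn : 0 ≤ W s := tsum_nonneg fun j => hfjnn j s hs'
    rw [Real.norm_eq_abs, abs_of_nonneg hWnn]
    rw [ENNReal.ofReal_tsum_of_nonneg (fun j => hfjnn j s hs') hs1]
  -- Step 5 : limits as n → ∞
  have hWn_le_W : ∀ n, N ≤ n → ∀ᵐ s ∂μb, Wn n s ≤ W s := by
    intro n hn
    filter_upwards [hae_sum, ae_restrict_mem measurableSet_Ioc] with s hs1 hs2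
    exact Summable.tsum_le_tsum
      (fun j => mul_le_mul_of_nonneg_right (hwle n (j+1) hn) (hL0 j s (hIoc_sub b hb hs2)))
      (hWnsum n s (hIoc_sub b hb hs2)) hs1
  have hWn_tend : ∀ᵐ s ∂μb, Tendsto (fun n => Wn (n + N) s) atTop (𝓝 (W s)) := by
    filter_upwards [hae_sum, ae_restrict_mem measurableSet_Ioc] with s hs1 hs2
    have hs' := hIoc_sub b hb hs2
    simp only [hWndef, hWdef]
    apply tendsto_tsum_trunc hs1
    · intro n j; exact mul_nonneg (hw0 _ _) (hL0 j s hs')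
    · intro n j
      exact mul_le_mul_of_nonneg_right (hwle _ (j+1) (Nat.le_add_left N n)) (hL0 j s hs')
    · intro n j hj
      rw [hweq (n + N) (j+1) (by omega)]
  have hPn_tend : ∀ t ∈ Icc (0:ℝ) b,
      Tendsto (fun n => Pn (n + N) t) atTop (𝓝 (∑' j : ℕ, g (j+1) * M (j+1) t)) := by
    intro t ht
    simp only [hPndef]
    apply tendsto_tsum_trunc (hgMsum' t ht)
    · intro n j; exact mul_nonneg (hw0 _ _) (hM0 (j+1) t ht)
    · intro n j
      exact mul_le_mul_of_nonneg_right (hwle _ (j+1) (Nat.le_add_left N n)) (hM0 (j+1) t ht)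
    · intro n j hj
      rw [hweq (n + N) (j+1) (by omega)]
  have hTn_tend : ∀ t ∈ Icc (0:ℝ) b,
      Tendsto (fun n => ∫ s in Ioc (0:ℝ) t, Tn (n + N) s) atTop
        (𝓝 (∫ s in Ioc (0:ℝ) t, S s)) := by
    intro t ht
    apply tendsto_integral_of_dominated_convergence DD
      (fun n => hmeasC _ (hTncont (n + N)) t ht) (hDDint t ht)
    · intro n
      apply haeOn
      intro s hs
      rw [Real.norm_eq_abs]
      exact hTn_bd (n + N) s (hIoc_sub t ht hs)
    · apply haeOn
      intro s hs
      have h1 := (hSsumm s (hIoc_sub t ht hs)).hasSum.tendsto_sum_nat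
      have h2 := h1.comp (tendsto_add_atTop_nat N)
      exact h2
  have hWn_int_tend : ∀ t ∈ Icc (0:ℝ) b,
      Tendsto (fun n => ∫ s in Ioc (0:ℝ) t, Wn (n + N) s) atTop
        (𝓝 (∫ s in Ioc (0:ℝ) t, W s)) := by
    intro t ht
    have hsub2 : Ioc (0:ℝ) t ⊆ Ioc 0 b := Ioc_subset_Ioc le_rfl ht.2
    apply tendsto_integral_of_dominated_convergence W (fun n => hWnmeas (n + N) t ht)
      (IntegrableOn.mono_set hWint hsub2)
    · intro n
      have h1 := hWn_le_W (n + N) (Nat.le_add_left N n)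
      filter_upwards [ae_restrict_of_ae_restrict_of_subset hsub2 h1,
        haeOn t (fun s => s ∈ Icc (0:ℝ) b) (fun s hs => hIoc_sub t ht hs)] with s hs1 hs2
      rw [Real.norm_eq_abs, abs_of_nonneg (hWn0 (n + N) s hs2)]
      exact hs1
    · exact ae_restrict_of_ae_restrict_of_subset hsub2 hWn_tend
  have hKey : ∀ t ∈ Icc (0:ℝ) b, (∑' j : ℕ, g (j+1) * M (j+1) t)
      = (∑' j : ℕ, g (j+1) * M (j+1) 0)
        + ((∫ s in Ioc (0:ℝ) t, S s) - ∫ s in Ioc (0:ℝ) t, W s) := by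
    intro t ht
    have lim1 := hPn_tend t ht
    have lim2 : Tendsto (fun n => Pn (n + N) t) atTop
        (𝓝 ((∑' j : ℕ, g (j+1) * M (j+1) 0)
          + ((∫ s in Ioc (0:ℝ) t, S s) - ∫ s in Ioc (0:ℝ) t, W s))) := by
      have h1 : ∀ n : ℕ, Pn (n + N) t = Pn (n + N) 0
          + ((∫ s in Ioc (0:ℝ) t, Tn (n + N) s) - ∫ s in Ioc (0:ℝ) t, Wn (n + N) s) := by
        intro n
        have h2 := hId2 (n + N) (Nat.le_add_left N n) t ht
        linarith
      simp only [h1]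
      exact (hPn_tend 0 h0b).add ((hTn_tend t ht).sub (hWn_int_tend t ht))
    exact tendsto_nhds_unique lim1 lim2
  -- Step 6 : assembly
  have hQeq : ∀ t ∈ Icc (0:ℝ) b,
      (∑' i : ℕ, (i : ℝ) * q i * M i t) = ∑' j : ℕ, g (j+1) * M (j+1) t := by
    intro t ht
    have h1 := Summable.tsum_eq_zero_add (hgMsum t ht)
    rw [hgzero, zero_mul, zero_add] at h1
    simp only [hgdef] at h1 ⊢
    exact h1
  refine ⟨fun s => S s - W s, ?_, ?_⟩
  · rw [intervalIntegrable_iff_integrableOn_Ioc_of_le hab]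
    exact IntegrableOn.mono_set ((hSint b hb).sub hWint) (Ioc_subset_Ioc ha.le le_rfl)
  · intro t htab
    have ht : t ∈ Icc (0:ℝ) b := ⟨ha.le.trans htab.1, htab.2⟩
    have ha' : a ∈ Icc (0:ℝ) b := ⟨ha.le, hab⟩
    have hSWint : ∀ u ∈ Icc (0:ℝ) b, IntegrableOn (fun s => S s - W s) (Ioc 0 u) volume :=
      fun u hu => (hSint u hu).sub (IntegrableOn.mono_set hWint (Ioc_subset_Ioc le_rfl hu.2))
    have hI0a : IntervalIntegrable (fun s => S s - W s) volume 0 a := by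
      rw [intervalIntegrable_iff_integrableOn_Ioc_of_le ha.le]
      exact hSWint a ha'
    have hIat : IntervalIntegrable (fun s => S s - W s) volume a t := by
      rw [intervalIntegrable_iff_integrableOn_Ioc_of_le htab.1]
      exact IntegrableOn.mono_set (hSWint t ht) (Ioc_subset_Ioc ha.le le_rfl)
    have hadj := intervalIntegral.integral_add_adjacent_intervals hI0a hIat
    have hrep : ∀ u ∈ Icc (0:ℝ) b, (∑' i : ℕ, (i : ℝ) * q i * M i u)
        = (∑' j : ℕ, g (j+1) * M (j+1) 0) + ∫ s in (0:ℝ)..u, (S s - W s) := by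
      intro u hu
      rw [hQeq u hu, hKey u hu]
      congr 1
      rw [intervalIntegral.integral_of_le hu.1,
        integral_sub (hSint u hu) (IntegrableOn.mono_set hWint (Ioc_subset_Ioc le_rfl hu.2))]
    have h1 := hrep t ht
    have h2 := hrep a ha'
    show (∑' i : ℕ, (i : ℝ) * q i * M i t)
      = (∑' i : ℕ, (i : ℝ) * q i * M i a) + ∫ s in a..t, (S s - W s)
    rw [h1, h2, ← hadj]
    ring
end
end

section
/- If k_i = O(i) and (q_i) is bounded, then every solution y of the silicosis system on [0,T) has components x and M_i of class C¹ on [0,T), and the differential equations Ṁ_0 = r − k_0 x M_0 − (p_0+q_0)M_0, Ṁ_i = k_{i−1} x M_{i−1} − k_i x M_i − (p_i+q_i)M_i, ẋ = α − x Σ k_i M_i + Σ i q_i M_i hold in the classical pointwise sense for all t ∈ [0,T). -/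
open MeasureTheory Set Filter Topology

noncomputable section

private lemma aux_tel (a b : ℕ → ℝ) (m : ℕ) :
    ∑ i ∈ Finset.range (m+1), ((i:ℝ)+1) * ((if i = 0 then 0 else a (i-1)) - a i - b i)
      = ∑ j ∈ Finset.range m, a j - ((m:ℝ)+1) * a m
        - ∑ i ∈ Finset.range (m+1), ((i:ℝ)+1) * b i := by
  induction m with
  | zero => simp
  | succ n ih =>
      have hb : ∑ i ∈ Finset.range (n+1+1), ((i:ℝ)+1) * b i
          = (∑ i ∈ Finset.range (n+1), ((i:ℝ)+1) * b i) + ((n:ℝ)+1+1) * b (n+1) := by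
        rw [Finset.sum_range_succ]; push_cast; ring
      have ha : ∑ j ∈ Finset.range (n+1), a j = (∑ j ∈ Finset.range n, a j) + a n :=
        Finset.sum_range_succ a n
      rw [Finset.sum_range_succ, ih, if_neg (Nat.succ_ne_zero n), Nat.add_sub_cancel, hb, ha]
      push_cast
      ring

private lemma aux_freq {a : ℕ → ℝ} (h0 : ∀ n, 0 ≤ a n) (hs : Summable a) {ε : ℝ} (hε : 0 < ε) :
    ∃ᶠ n : ℕ in atTop, ((n:ℝ)+1) * a n < ε := by
  by_contra hcon
  rw [Filter.not_frequently] at hcon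
  obtain ⟨N, hN⟩ := Filter.eventually_atTop.1 hcon
  have key : ∀ n : ℕ, 1 / ((n:ℝ) + (N:ℝ) + 1) ≤ (1/ε) * a (n + N) := by
    intro n
    have h2 : ε ≤ (((n + N : ℕ):ℝ)+1) * a (n+N) := not_lt.1 (hN (n + N) (Nat.le_add_left N n))
    push_cast at h2
    have hpos : (0:ℝ) < (n:ℝ) + (N:ℝ) + 1 := by positivity
    rw [div_le_iff₀ hpos]
    calc (1:ℝ) ≤ (((n:ℝ) + (N:ℝ) + 1) * a (n+N)) / ε := (one_le_div hε).2 h2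
      _ = 1/ε * a (n+N) * ((n:ℝ) + (N:ℝ) + 1) := by ring
  have hsum2 : Summable (fun n : ℕ => (1/ε) * a (n + N)) :=
    ((summable_nat_add_iff N).2 hs).mul_left _
  have hcomp : Summable (fun n : ℕ => 1 / ((n:ℝ) + (N:ℝ) + 1)) :=
    hsum2.of_nonneg_of_le (fun n => by positivity) key
  have hcomp2 : Summable (fun n : ℕ => 1 / ((↑(n + (N+1)):ℝ))) :=
    hcomp.congr (fun n => by push_cast; ring_nf)
  exact Real.not_summable_one_div_natCast
    ((summable_nat_add_iff (f := fun m : ℕ => 1/(m:ℝ)) (N+1)).1 hcomp2)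

private lemma tsum_contOn_of_dom {D : Set ℝ} {f g : ℕ → ℝ → ℝ}
    (hfc : ∀ i, ContinuousOn (f i) D)
    (h0 : ∀ i, ∀ t ∈ D, 0 ≤ f i t)
    (hle : ∀ i, ∀ t ∈ D, f i t ≤ g i t)
    (hgs : ∀ t ∈ D, Summable (fun i => g i t))
    (hgic : ∀ i, ContinuousOn (g i) D)
    (hGc : ContinuousOn (fun t => ∑' i, g i t) D) :
    ContinuousOn (fun t => ∑' i, f i t) D := by
  have hfs : ∀ t ∈ D, Summable (fun i => f i t) := fun t ht =>
    (hgs t ht).of_nonneg_of_le (fun i => h0 i t ht) (fun i => hle i t ht)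
  intro t₀ ht₀
  rw [ContinuousWithinAt, Metric.tendsto_nhds]
  intro ε hε
  obtain ⟨N, hN⟩ : ∃ N, ∑' i, g (i + N) t₀ < ε/4 := by
    have h1 : Tendsto (fun N => ∑' i, g (i + N) t₀) atTop (𝓝 0) :=
      tendsto_sum_nat_add (fun m => g m t₀)
    exact ((h1.eventually (eventually_lt_nhds (by linarith : (0:ℝ) < ε/4))).exists)
  have hPc : ContinuousWithinAt (fun t => ∑ i ∈ Finset.range N, f i t) D t₀ :=
    (continuousOn_finset_sum _ (fun i _ => hfc i)) t₀ ht₀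
  have hPgc : ContinuousWithinAt (fun t => ∑ i ∈ Finset.range N, g i t) D t₀ :=
    (continuousOn_finset_sum _ (fun i _ => hgic i)) t₀ ht₀
  have htail : Tendsto (fun t => (∑' i, g i t) - ∑ i ∈ Finset.range N, g i t) (𝓝[D] t₀)
      (𝓝 ((∑' i, g i t₀) - ∑ i ∈ Finset.range N, g i t₀)) := (hGc t₀ ht₀).sub hPgc
  have htail₀ : (∑' i, g i t₀) - ∑ i ∈ Finset.range N, g i t₀ < ε/4 := by
    have h2 := Summable.sum_add_tsum_nat_add (f := fun i => g i t₀) N (hgs t₀ ht₀)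
    linarith
  have hev1 : ∀ᶠ t in 𝓝[D] t₀, (∑' i, g i t) - ∑ i ∈ Finset.range N, g i t < ε/4 :=
    htail (Iio_mem_nhds htail₀)
  have hev2 : ∀ᶠ t in 𝓝[D] t₀,
      |(∑ i ∈ Finset.range N, f i t) - ∑ i ∈ Finset.range N, f i t₀| < ε/4 := by
    have h3 := hPc
    rw [ContinuousWithinAt, Metric.tendsto_nhds] at h3
    have := h3 (ε/4) (by linarith)
    simpa [Real.dist_eq] using this
  filter_upwards [hev1, hev2, self_mem_nhdsWithin] with t h1 h2 h3
  rw [Real.dist_eq]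
  have hdec : ∀ u ∈ D, (∑' i, f i u)
      = (∑ i ∈ Finset.range N, f i u) + ∑' i, f (i + N) u := fun u hu =>
    (Summable.sum_add_tsum_nat_add (f := fun i => f i u) N (hfs u hu)).symm
  have htf : ∀ u ∈ D, 0 ≤ (∑' i, f (i+N) u) ∧
      (∑' i, f (i+N) u) ≤ (∑' i, g i u) - ∑ i ∈ Finset.range N, g i u := by
    intro u hu
    have hsf : Summable (fun i => f (i+N) u) := (summable_nat_add_iff N).2 (hfs u hu)
    have hsg : Summable (fun i => g (i+N) u) := (summable_nat_add_iff N).2 (hgs u hu)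
    refine ⟨tsum_nonneg (fun i => h0 _ u hu), ?_⟩
    have hl : (∑' i, f (i+N) u) ≤ (∑' i, g (i+N) u) :=
      Summable.tsum_le_tsum (fun i => hle _ u hu) hsf hsg
    have h2' := Summable.sum_add_tsum_nat_add (f := fun i => g i u) N (hgs u hu)
    linarith
  obtain ⟨a1, a2⟩ := htf t h3
  obtain ⟨b1, b2⟩ := htf t₀ ht₀
  rw [hdec t h3, hdec t₀ ht₀]
  have h2' := abs_lt.1 h2
  rw [abs_lt]
  exact ⟨by linarith [h2'.1], by linarith [h2'.2]⟩

/-- Proposition 6.1: if `kᵢ = O(i)` and `(qᵢ)` is bounded, then the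
components of every solution on `[0,T)` are `C¹` on `[0,T)` and satisfy the silicosis
equations in the classical (differential) sense for all `t ∈ [0,T)`. -/
theorem silicosis_C1_regularity
    (k p q : ℕ → ℝ)
    (hk : ∀ i, 0 ≤ k i) (hp : ∀ i, 0 ≤ p i) (hq : ∀ i, 0 ≤ q i)
    (r α : ℝ) (hr : 0 ≤ r) (hα : 0 ≤ α)
    (Ck : ℝ) (hkO : ∀ i : ℕ, k i ≤ Ck * ((i : ℝ) + 1))
    (Cq : ℝ) (hqB : ∀ i : ℕ, q i ≤ Cq)
    (T : ℝ) (x : ℝ → ℝ) (M : ℕ → ℝ → ℝ)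
    (hsol : IsSol k p q r α (Set.Ico 0 T) x M) :
    -- the equations hold in the classical differential sense on [0,T)
    (∀ t ∈ Set.Ico (0:ℝ) T,
      HasDerivWithinAt (M 0) (r - k 0 * x t * M 0 t - (p 0 + q 0) * M 0 t)
        (Set.Ico 0 T) t ∧
      (∀ i : ℕ, 1 ≤ i →
        HasDerivWithinAt (M i)
          (k (i-1) * x t * M (i-1) t - k i * x t * M i t - (p i + q i) * M i t)
          (Set.Ico 0 T) t) ∧
      HasDerivWithinAt x
        (α - x t * ∑' i : ℕ, k i * M i t + ∑' i : ℕ, (i : ℝ) * q i * M i t)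
        (Set.Ico 0 T) t) ∧
    -- the derivatives are continuous on [0,T)  (so the components are C¹)
    ContinuousOn (fun t => α - x t * ∑' i : ℕ, k i * M i t
      + ∑' i : ℕ, (i : ℝ) * q i * M i t) (Set.Ico 0 T) ∧
    (∀ i : ℕ, 1 ≤ i →
      ContinuousOn (fun t => k (i-1) * x t * M (i-1) t - k i * x t * M i t
        - (p i + q i) * M i t) (Set.Ico 0 T)) ∧
    ContinuousOn (fun t => r - k 0 * x t * M 0 t - (p 0 + q 0) * M 0 t) (Set.Ico 0 T) := by
  rcases le_or_gt T 0 with hTle | hTpos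
  · have he : Ico (0:ℝ) T = ∅ := Ico_eq_empty (not_lt.2 hTle)
    exact ⟨fun t htm => absurd (he ▸ htm) (notMem_empty t),
      by rw [he]; exact continuousOn_empty _,
      fun i _ => by rw [he]; exact continuousOn_empty _,
      by rw [he]; exact continuousOn_empty _⟩
  set D : Set ℝ := Ico (0:ℝ) T with hDdef
  have hDmeas : MeasurableSet D := measurableSet_Ico
  have h0D : (0:ℝ) ∈ D := ⟨le_refl 0, hTpos⟩
  have hIccD : ∀ {u : ℝ}, u ∈ D → Icc (0:ℝ) u ⊆ D :=
    fun {u} hu s hs => ⟨hs.1, lt_of_le_of_lt hs.2 hu.2⟩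
  have hIocD : ∀ {u : ℝ}, u ∈ D → Ioc (0:ℝ) u ⊆ D :=
    fun {u} hu s hs => ⟨hs.1.le, lt_of_le_of_lt hs.2 hu.2⟩
  have hCk0 : (0:ℝ) ≤ Ck := by have h := hkO 0; have h2 := hk 0; push_cast at h; linarith
  have hCq0 : (0:ℝ) ≤ Cq := le_trans (hq 0) (hqB 0)
  set W : ℝ → ℝ := fun s => ∑' i : ℕ, k i * M i s with hWset
  set V : ℝ → ℝ := fun s => ∑' i : ℕ, (i:ℝ) * q i * M i s with hVset
  set S : ℝ → ℝ := fun s => ∑' i : ℕ, ((i:ℝ)+1) * M i s with hSset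
  set mom : ℝ → ℝ := fun s => ∑' i : ℕ, ((i:ℝ) * p i + (i:ℝ) * q i + k i) * M i s with hmomset
  set Φ : ℝ → ℝ := fun s => ∑' i : ℕ, ((i:ℝ)+1) * ((p i + q i) * M i s) with hPhiset
  have hWdef : ∀ s, (∑' i : ℕ, k i * M i s) = W s := fun s => rfl
  have hVdef : ∀ s, (∑' i : ℕ, (i:ℝ) * q i * M i s) = V s := fun s => rfl
  have hMn := hsol.M_nonneg
  have hxn := hsol.x_nonneg
  have hsum1 := hsol.summable_norm
  have hsumMom := hsol.summable_mom
  have hxC := hsol.x_cont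
  have hMC := hsol.M_cont
  have hkM_nonneg : ∀ i : ℕ, ∀ s ∈ D, 0 ≤ k i * M i s :=
    fun i s hs => mul_nonneg (hk i) (hMn i s hs)
  have hkM_le : ∀ s ∈ D, ∀ i : ℕ,
      k i * M i s ≤ ((i:ℝ) * p i + (i:ℝ) * q i + k i) * M i s := by
    intro s hs i
    have h1 : k i ≤ (i:ℝ) * p i + (i:ℝ) * q i + k i := by
      have h2 := mul_nonneg (Nat.cast_nonneg (α := ℝ) i) (hp i)
      have h3 := mul_nonneg (Nat.cast_nonneg (α := ℝ) i) (hq i)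
      linarith
    exact mul_le_mul_of_nonneg_right h1 (hMn i s hs)
  have hsum_kM : ∀ s ∈ D, Summable (fun i : ℕ => k i * M i s) := fun s hs =>
    (hsumMom s hs).of_nonneg_of_le (fun i => hkM_nonneg i s hs) (hkM_le s hs)
  have hiqM_nonneg : ∀ i : ℕ, ∀ s ∈ D, 0 ≤ (i:ℝ) * q i * M i s := fun i s hs =>
    mul_nonneg (mul_nonneg (Nat.cast_nonneg i) (hq i)) (hMn i s hs)
  have hiqM_le : ∀ s ∈ D, ∀ i : ℕ,
      (i:ℝ) * q i * M i s ≤ ((i:ℝ) * p i + (i:ℝ) * q i + k i) * M i s := by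
    intro s hs i
    have h1 : (i:ℝ) * q i ≤ (i:ℝ) * p i + (i:ℝ) * q i + k i := by
      have h2 := mul_nonneg (Nat.cast_nonneg (α := ℝ) i) (hp i)
      linarith [hk i]
    exact mul_le_mul_of_nonneg_right h1 (hMn i s hs)
  have hsum_iqM : ∀ s ∈ D, Summable (fun i : ℕ => (i:ℝ) * q i * M i s) := fun s hs =>
    (hsumMom s hs).of_nonneg_of_le (fun i => hiqM_nonneg i s hs) (hiqM_le s hs)
  have hW_nonneg : ∀ s ∈ D, 0 ≤ W s := fun s hs => tsum_nonneg (fun i => hkM_nonneg i s hs)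
  have hW_le : ∀ s ∈ D, W s ≤ mom s := fun s hs =>
    Summable.tsum_le_tsum (hkM_le s hs) (hsum_kM s hs) (hsumMom s hs)
  have hV_nonneg : ∀ s ∈ D, 0 ≤ V s := fun s hs => tsum_nonneg (fun i => hiqM_nonneg i s hs)
  have hV_le : ∀ s ∈ D, V s ≤ mom s := fun s hs =>
    Summable.tsum_le_tsum (hiqM_le s hs) (hsum_iqM s hs) (hsumMom s hs)
  have hS_nonneg : ∀ s ∈ D, 0 ≤ S s := fun s hs =>
    tsum_nonneg (fun i => mul_nonneg (by positivity) (hMn i s hs))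
  have hBf_nonneg : ∀ i : ℕ, ∀ s ∈ D, 0 ≤ ((i:ℝ)+1) * ((p i + q i) * M i s) := fun i s hs =>
    mul_nonneg (by positivity) (mul_nonneg (add_nonneg (hp i) (hq i)) (hMn i s hs))
  have hBf_le : ∀ s ∈ D, ∀ i : ℕ, ((i:ℝ)+1) * ((p i + q i) * M i s)
      ≤ 2 * (((i:ℝ) * p i + (i:ℝ) * q i + k i) * M i s)
        + (if i = 0 then (p 0 + q 0) * M 0 s else 0) := by
    intro s hs i
    obtain _ | j := i
    · norm_num
      nlinarith [mul_nonneg (hk 0) (hMn 0 s hs)]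
    · rw [if_neg (Nat.succ_ne_zero j)]
      have h1 := mul_nonneg (mul_nonneg (Nat.cast_nonneg (α := ℝ) j)
        (add_nonneg (hp (j+1)) (hq (j+1)))) (hMn (j+1) s hs)
      have h2 := mul_nonneg (hk (j+1)) (hMn (j+1) s hs)
      push_cast
      nlinarith [h1, h2]
  have hsum_ite : ∀ s : ℝ, Summable (fun i : ℕ => if i = 0 then (p 0 + q 0) * M 0 s else 0) :=
    fun s => summable_of_ne_finset_zero (s := {0})
      (fun b hb => by rw [if_neg (by simpa using hb)])
  have hsum_bound2 : ∀ s ∈ D, Summable (fun i : ℕ =>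
      2 * (((i:ℝ) * p i + (i:ℝ) * q i + k i) * M i s)
        + (if i = 0 then (p 0 + q 0) * M 0 s else 0)) := fun s hs =>
    ((hsumMom s hs).mul_left 2).add (hsum_ite s)
  have hsumBf : ∀ s ∈ D, Summable (fun i : ℕ => ((i:ℝ)+1) * ((p i + q i) * M i s)) :=
    fun s hs => (hsum_bound2 s hs).of_nonneg_of_le (fun i => hBf_nonneg i s hs) (hBf_le s hs)
  have hΦ_nonneg : ∀ s ∈ D, 0 ≤ Φ s := fun s hs => tsum_nonneg (fun i => hBf_nonneg i s hs)
  have hΦ_le : ∀ s ∈ D, Φ s ≤ 2 * mom s + (p 0 + q 0) * M 0 s := by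
    intro s hs
    have h1 : Φ s ≤ ∑' i : ℕ, (2 * (((i:ℝ) * p i + (i:ℝ) * q i + k i) * M i s)
        + (if i = 0 then (p 0 + q 0) * M 0 s else 0)) :=
      Summable.tsum_le_tsum (hBf_le s hs) (hsumBf s hs) (hsum_bound2 s hs)
    rw [Summable.tsum_add ((hsumMom s hs).mul_left 2) (hsum_ite s), tsum_mul_left, tsum_ite_eq] at h1
    exact h1
  have hContA : ∀ j : ℕ, ContinuousOn (fun s => k j * x s * M j s) D := fun j =>
    (continuousOn_const.mul hxC).mul (hMC j)
  have hContB : ∀ i : ℕ, ContinuousOn (fun s => (p i + q i) * M i s) D := fun i =>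
    continuousOn_const.mul (hMC i)
  have hContBf : ∀ i : ℕ, ContinuousOn (fun s => ((i:ℝ)+1) * ((p i + q i) * M i s)) D :=
    fun i => continuousOn_const.mul (hContB i)
  have hContkM : ∀ i : ℕ, ContinuousOn (fun s => k i * M i s) D := fun i =>
    continuousOn_const.mul (hMC i)
  have hContiqM : ∀ i : ℕ, ContinuousOn (fun s => (i:ℝ) * q i * M i s) D := fun i =>
    continuousOn_const.mul (hMC i)
  have haesm : ∀ (g : ℕ → ℝ → ℝ) (f : ℝ → ℝ), (∀ i, ContinuousOn (g i) D) →
      (∀ s ∈ D, Tendsto (fun N => ∑ i ∈ Finset.range N, g i s) atTop (𝓝 (f s))) →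
      AEStronglyMeasurable f (volume.restrict D) := fun g f hg hlim =>
    aestronglyMeasurable_of_tendsto_ae atTop
      (fun N => (continuousOn_finset_sum _ (fun i _ => hg i)).aestronglyMeasurable hDmeas)
      ((ae_restrict_iff' hDmeas).2 (ae_of_all _ hlim))
  have hWaesm : AEStronglyMeasurable W (volume.restrict D) :=
    haesm _ _ hContkM (fun s hs => (hsum_kM s hs).hasSum.tendsto_sum_nat)
  have hVaesm : AEStronglyMeasurable V (volume.restrict D) :=
    haesm _ _ hContiqM (fun s hs => (hsum_iqM s hs).hasSum.tendsto_sum_nat)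
  have hΦaesm : AEStronglyMeasurable Φ (volume.restrict D) :=
    haesm _ _ hContBf (fun s hs => (hsumBf s hs).hasSum.tendsto_sum_nat)
  have hxaesm : AEStronglyMeasurable x (volume.restrict D) :=
    hxC.aestronglyMeasurable hDmeas
  have hrestr : ∀ {u : ℝ}, u ∈ D → volume.restrict (Ioc (0:ℝ) u) ≤ volume.restrict D :=
    fun {u} hu => Measure.restrict_mono (hIocD hu) le_rfl
  have hmomIntOn : ∀ {u : ℝ}, u ∈ D → IntegrableOn mom (Ioc (0:ℝ) u) volume :=
    fun {u} hu => (hsol.mom_int u hu).1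
  have hV_intOn : ∀ {u : ℝ}, u ∈ D → IntegrableOn V (Ioc (0:ℝ) u) volume := by
    intro u hu
    apply Integrable.mono' (hmomIntOn hu) (hVaesm.mono_measure (hrestr hu))
    rw [ae_restrict_iff' measurableSet_Ioc]
    refine ae_of_all _ (fun s hs => ?_)
    rw [Real.norm_eq_abs, abs_of_nonneg (hV_nonneg s (hIocD hu hs))]
    exact hV_le s (hIocD hu hs)
  have hV_ii : ∀ u ∈ D, IntervalIntegrable V volume 0 u := fun u hu =>
    (intervalIntegrable_iff_integrableOn_Ioc_of_le hu.1).2 (hV_intOn hu)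
  have hM0IntOn : ∀ {u : ℝ}, u ∈ D → IntegrableOn (M 0) (Ioc (0:ℝ) u) volume :=
    fun {u} hu => (((hMC 0).mono (hIccD hu)).integrableOn_Icc).mono_set Ioc_subset_Icc_self
  have hΦ_intOn : ∀ {u : ℝ}, u ∈ D → IntegrableOn Φ (Ioc (0:ℝ) u) volume := by
    intro u hu
    apply Integrable.mono' (((hmomIntOn hu).const_mul 2).add ((hM0IntOn hu).const_mul (p 0 + q 0)))
      (hΦaesm.mono_measure (hrestr hu))
    rw [ae_restrict_iff' measurableSet_Ioc]
    refine ae_of_all _ (fun s hs => ?_)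
    rw [Real.norm_eq_abs, abs_of_nonneg (hΦ_nonneg s (hIocD hu hs))]
    exact hΦ_le s (hIocD hu hs)
  have hΦ_ii : ∀ u ∈ D, IntervalIntegrable Φ volume 0 u := fun u hu =>
    (intervalIntegrable_iff_integrableOn_Ioc_of_le hu.1).2 (hΦ_intOn hu)
  have hxW_intOn : ∀ {u : ℝ}, u ∈ D →
      IntegrableOn (fun s => x s * W s) (Ioc (0:ℝ) u) volume := by
    intro u hu
    obtain ⟨C, hC⟩ := hsol.norm_bdd u (hIccD hu)
    have hxle : ∀ s ∈ Icc (0:ℝ) u, x s ≤ C := by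
      intro s hs
      have h1 := hC s hs
      have h2 : (0:ℝ) ≤ ∑' i : ℕ, ((i:ℝ)+1) * M i s := hS_nonneg s (hIccD hu hs)
      linarith
    have haesmul : AEStronglyMeasurable (fun s => x s * W s)
        (volume.restrict (Ioc (0:ℝ) u)) :=
      (hxaesm.mono_measure (hrestr hu)).mul (hWaesm.mono_measure (hrestr hu))
    apply Integrable.mono' ((hmomIntOn hu).const_mul C) haesmul
    rw [ae_restrict_iff' measurableSet_Ioc]
    refine ae_of_all _ (fun s hs => ?_)
    have hsD := hIocD hu hs
    have h1 : 0 ≤ x s := hxn s hsD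
    have h2 : 0 ≤ W s := hW_nonneg s hsD
    simp only [Real.norm_eq_abs]
    rw [abs_of_nonneg (mul_nonneg h1 h2)]
    exact mul_le_mul (hxle s (Ioc_subset_Icc_self hs)) (hW_le s hsD) h2
      (le_trans h1 (hxle s (Ioc_subset_Icc_self hs)))
  have hxW_ii : ∀ u ∈ D, IntervalIntegrable (fun s => x s * W s) volume 0 u := fun u hu =>
    (intervalIntegrable_iff_integrableOn_Ioc_of_le hu.1).2 (hxW_intOn hu)
  -- the key integral identity for the first moment
  have hkey : ∀ t ∈ D, S t = x 0 + S 0 + (r + α) * t - (∫ s in (0:ℝ)..t, Φ s)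
      + (∫ s in (0:ℝ)..t, V s) - x t := by
    intro t ht
    have ht0 : (0:ℝ) ≤ t := ht.1
    have hIccDt := hIccD ht
    have hIocDt := hIocD ht
    have hIntIcc : ∀ {f : ℝ → ℝ}, ContinuousOn f (Icc (0:ℝ) t) →
        IntervalIntegrable f volume 0 t :=
      fun {f} hf => ContinuousOn.intervalIntegrable (by rwa [uIcc_of_le ht0])
    have step1 : ∀ i : ℕ, ((i:ℝ)+1) * M i t = ((i:ℝ)+1) * M i 0 + (if i = 0 then r * t else 0)
        + ∫ s in (0:ℝ)..t, ((i:ℝ)+1) * ((if i = 0 then (0:ℝ) else k (i-1) * x s * M (i-1) s)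
            - k i * x s * M i s - (p i + q i) * M i s) := by
      intro i
      obtain _ | j := i
      · have he := hsol.eq_M0 t ht
        have hi : (∫ s in (0:ℝ)..t, (((0:ℕ):ℝ)+1) * ((if (0:ℕ) = 0 then (0:ℝ)
              else k (0-1) * x s * M (0-1) s) - k 0 * x s * M 0 s - (p 0 + q 0) * M 0 s))
            = - ∫ s in (0:ℝ)..t, (k 0 * x s * M 0 s + (p 0 + q 0) * M 0 s) := by
          rw [← intervalIntegral.integral_neg]
          apply intervalIntegral.integral_congr
          intro s _
          simp
          ring
        rw [if_pos rfl, hi]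
        push_cast
        linarith [he]
      · have he := hsol.eq_M (j+1) (Nat.succ_le_succ (Nat.zero_le j)) t ht
        simp only [Nat.add_sub_cancel] at he
        simp only [Nat.succ_ne_zero, if_false, Nat.add_sub_cancel]
        rw [intervalIntegral.integral_const_mul, he]
        ring
    have hContf : ∀ i : ℕ, ContinuousOn (fun s => ((i:ℝ)+1) *
        ((if i = 0 then (0:ℝ) else k (i-1) * x s * M (i-1) s)
          - k i * x s * M i s - (p i + q i) * M i s)) D := by
      intro i
      apply continuousOn_const.mul
      apply ContinuousOn.sub
      apply ContinuousOn.sub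
      · rcases Nat.eq_zero_or_pos i with h | h
        · subst h; simpa using (continuousOn_const : ContinuousOn (fun _ : ℝ => (0:ℝ)) D)
        · simp only [if_neg (Nat.pos_iff_ne_zero.1 h)]
          exact hContA (i-1)
      · exact hContA i
      · exact hContB i
    have hsum_eq : ∀ m : ℕ,
        ∑ i ∈ Finset.range (m+1), ((i:ℝ)+1) * M i t
          = (∑ i ∈ Finset.range (m+1), ((i:ℝ)+1) * M i 0) + r * t
            + ((∫ s in (0:ℝ)..t, ∑ j ∈ Finset.range m, k j * x s * M j s)
              - ((m:ℝ)+1) * (∫ s in (0:ℝ)..t, k m * x s * M m s)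
              - ∫ s in (0:ℝ)..t, ∑ i ∈ Finset.range (m+1),
                  ((i:ℝ)+1) * ((p i + q i) * M i s)) := by
      intro m
      rw [Finset.sum_congr rfl (fun i _ => step1 i)]
      rw [Finset.sum_add_distrib, Finset.sum_add_distrib]
      have hite : (∑ i ∈ Finset.range (m+1), if i = 0 then r * t else 0) = r * t := by
        have h1 := Finset.sum_eq_single_of_mem (s := Finset.range (m+1))
          (f := fun i => if i = 0 then r * t else 0) 0
          (Finset.mem_range.2 (Nat.succ_pos m)) (fun b _ hb => if_neg hb)
        simpa using h1
      rw [hite]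
      rw [← intervalIntegral.integral_finset_sum
        (fun i (_ : i ∈ Finset.range (m+1)) => hIntIcc ((hContf i).mono hIccDt))]
      have htel : (∫ s in (0:ℝ)..t, ∑ i ∈ Finset.range (m+1), ((i:ℝ)+1) *
            ((if i = 0 then (0:ℝ) else k (i-1) * x s * M (i-1) s)
              - k i * x s * M i s - (p i + q i) * M i s))
          = ∫ s in (0:ℝ)..t, ((∑ j ∈ Finset.range m, k j * x s * M j s)
              - ((m:ℝ)+1) * (k m * x s * M m s)
              - ∑ i ∈ Finset.range (m+1), ((i:ℝ)+1) * ((p i + q i) * M i s)) :=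
        intervalIntegral.integral_congr (fun s _ =>
          aux_tel (fun j => k j * x s * M j s) (fun i => (p i + q i) * M i s) m)
      rw [htel]
      have hIA : IntervalIntegrable (fun s => ∑ j ∈ Finset.range m, k j * x s * M j s)
          volume 0 t :=
        hIntIcc ((continuousOn_finset_sum _ (fun j _ => hContA j)).mono hIccDt)
      have hIB : IntervalIntegrable (fun s => ((m:ℝ)+1) * (k m * x s * M m s)) volume 0 t :=
        hIntIcc ((continuousOn_const.mul (hContA m)).mono hIccDt)
      have hIC : IntervalIntegrable (fun s => ∑ i ∈ Finset.range (m+1),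
          ((i:ℝ)+1) * ((p i + q i) * M i s)) volume 0 t :=
        hIntIcc ((continuousOn_finset_sum _ (fun i _ => hContBf i)).mono hIccDt)
      rw [intervalIntegral.integral_sub (hIA.sub hIB) hIC,
        intervalIntegral.integral_sub hIA hIB, intervalIntegral.integral_const_mul]
    have hxeq : x t = x 0 + α * t + (- (∫ s in (0:ℝ)..t, x s * W s)
        + ∫ s in (0:ℝ)..t, V s) := by
      have he := hsol.eq_x t ht
      simp only [hWdef, hVdef] at he
      have hnegii : IntervalIntegrable (fun s => -(x s * W s)) volume 0 t :=
        (hxW_ii t ht).neg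
      rw [intervalIntegral.integral_add hnegii (hV_ii t ht),
        intervalIntegral.integral_neg] at he
      exact he
    have step2 : ∀ m : ℕ, x t + ∑ i ∈ Finset.range (m+1), ((i:ℝ)+1) * M i t
        = (((((x 0 + ∑ i ∈ Finset.range (m+1), ((i:ℝ)+1) * M i 0) + (r + α) * t
          + (∫ s in (0:ℝ)..t, ∑ j ∈ Finset.range m, k j * x s * M j s))
          - ((m:ℝ)+1) * (∫ s in (0:ℝ)..t, k m * x s * M m s))
          - (∫ s in (0:ℝ)..t, ∑ i ∈ Finset.range (m+1), ((i:ℝ)+1) * ((p i + q i) * M i s)))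
          - (∫ s in (0:ℝ)..t, x s * W s)) + (∫ s in (0:ℝ)..t, V s) := by
      intro m
      rw [hsum_eq m, hxeq]
      ring
    set aj : ℕ → ℝ := fun j => ∫ s in (0:ℝ)..t, k j * x s * M j s with hajset
    have haj0 : ∀ j, 0 ≤ aj j := fun j => intervalIntegral.integral_nonneg ht0
      (fun s hs => mul_nonneg (mul_nonneg (hk j) (hxn s (hIccDt hs))) (hMn j s (hIccDt hs)))
    have hpartial_le : ∀ n : ℕ, ∀ s ∈ Icc (0:ℝ) t,
        ∑ j ∈ Finset.range n, k j * x s * M j s ≤ x s * W s := by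
      intro n s hs
      have hsD := hIccDt hs
      have h1 : ∑ j ∈ Finset.range n, k j * x s * M j s
          = x s * ∑ j ∈ Finset.range n, k j * M j s := by
        rw [Finset.mul_sum]; exact Finset.sum_congr rfl (fun j _ => by ring)
      rw [h1]
      exact mul_le_mul_of_nonneg_left
        (Summable.sum_le_tsum _ (fun i _ => hkM_nonneg i s hsD) (hsum_kM s hsD)) (hxn s hsD)
    have hajsum : Summable aj := by
      apply summable_of_sum_range_le haj0
      intro n
      have h2 : ∑ j ∈ Finset.range n, aj j
          = ∫ s in (0:ℝ)..t, ∑ j ∈ Finset.range n, k j * x s * M j s :=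
        (intervalIntegral.integral_finset_sum
          (fun j _ => hIntIcc ((hContA j).mono hIccDt))).symm
      rw [h2]
      exact intervalIntegral.integral_mono_on ht0
        (hIntIcc ((continuousOn_finset_sum _ (fun j _ => hContA j)).mono hIccDt))
        (hxW_ii t ht) (hpartial_le n)
    obtain ⟨φ, hφmono, hφ⟩ := Filter.extraction_forall_of_frequently
      (P := fun n N => ((N:ℝ)+1) * aj N < 1/((n:ℝ)+1))
      (fun n => aux_freq haj0 hajsum (by positivity))
    have hφtend : Tendsto (fun n => ((φ n : ℝ)+1) * aj (φ n)) atTop (𝓝 0) :=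
      squeeze_zero (fun n => mul_nonneg (by positivity) (haj0 _)) (fun n => (hφ n).le)
        tendsto_one_div_add_atTop_nhds_zero_nat
    have hDCT1 : Tendsto (fun m => ∫ s in (0:ℝ)..t, ∑ j ∈ Finset.range m, k j * x s * M j s)
        atTop (𝓝 (∫ s in (0:ℝ)..t, x s * W s)) := by
      simp only [intervalIntegral.integral_of_le ht0]
      apply tendsto_integral_of_dominated_convergence (fun s => x s * W s)
      · exact fun m => ((continuousOn_finset_sum _
          (fun j _ => hContA j)).aestronglyMeasurable hDmeas).mono_measure (hrestr ht)
      · exact hxW_intOn ht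
      · intro m
        rw [ae_restrict_iff' measurableSet_Ioc]
        refine ae_of_all _ (fun s hs => ?_)
        rw [Real.norm_eq_abs, abs_of_nonneg (Finset.sum_nonneg (fun j _ =>
          mul_nonneg (mul_nonneg (hk j) (hxn s (hIocDt hs))) (hMn j s (hIocDt hs))))]
        exact hpartial_le m s (Ioc_subset_Icc_self hs)
      · rw [ae_restrict_iff' measurableSet_Ioc]
        refine ae_of_all _ (fun s hs => ?_)
        have hsD := hIocDt hs
        have h := ((hsum_kM s hsD).hasSum.tendsto_sum_nat).const_mul (x s)
        exact h.congr (fun m => by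
          rw [Finset.mul_sum]; exact Finset.sum_congr rfl (fun j _ => by ring))
    have hDCT2 : Tendsto (fun m => ∫ s in (0:ℝ)..t, ∑ i ∈ Finset.range (m+1),
          ((i:ℝ)+1) * ((p i + q i) * M i s))
        atTop (𝓝 (∫ s in (0:ℝ)..t, Φ s)) := by
      simp only [intervalIntegral.integral_of_le ht0]
      apply tendsto_integral_of_dominated_convergence
        (fun s => 2 * mom s + (p 0 + q 0) * M 0 s)
      · exact fun m => ((continuousOn_finset_sum _
          (fun i _ => hContBf i)).aestronglyMeasurable hDmeas).mono_measure (hrestr ht)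
      · exact ((hmomIntOn ht).const_mul 2).add ((hM0IntOn ht).const_mul (p 0 + q 0))
      · intro m
        rw [ae_restrict_iff' measurableSet_Ioc]
        refine ae_of_all _ (fun s hs => ?_)
        have hsD := hIocDt hs
        rw [Real.norm_eq_abs, abs_of_nonneg (Finset.sum_nonneg (fun i _ =>
          hBf_nonneg i s hsD))]
        exact le_trans (Summable.sum_le_tsum _ (fun i _ => hBf_nonneg i s hsD) (hsumBf s hsD))
          (hΦ_le s hsD)
      · rw [ae_restrict_iff' measurableSet_Ioc]
        refine ae_of_all _ (fun s hs => ?_)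
        have hsD := hIocDt hs
        exact ((hsumBf s hsD).hasSum.tendsto_sum_nat).comp (tendsto_add_atTop_nat 1)
    have hT1 : Tendsto (fun m => ∑ i ∈ Finset.range (m+1), ((i:ℝ)+1) * M i t)
        atTop (𝓝 (S t)) :=
      ((hsum1 t ht).hasSum.tendsto_sum_nat).comp (tendsto_add_atTop_nat 1)
    have hT0 : Tendsto (fun m => ∑ i ∈ Finset.range (m+1), ((i:ℝ)+1) * M i 0)
        atTop (𝓝 (S 0)) :=
      ((hsum1 0 h0D).hasSum.tendsto_sum_nat).comp (tendsto_add_atTop_nat 1)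
    have hseq1 : Tendsto (fun n => x t + ∑ i ∈ Finset.range (φ n + 1), ((i:ℝ)+1) * M i t)
        atTop (𝓝 (x t + S t)) :=
      tendsto_const_nhds.add (hT1.comp hφmono.tendsto_atTop)
    have hseq2 : Tendsto (fun n => x t + ∑ i ∈ Finset.range (φ n + 1), ((i:ℝ)+1) * M i t)
        atTop (𝓝 ((((((x 0 + S 0) + (r + α) * t + (∫ s in (0:ℝ)..t, x s * W s)) - 0)
          - (∫ s in (0:ℝ)..t, Φ s)) - (∫ s in (0:ℝ)..t, x s * W s))
          + (∫ s in (0:ℝ)..t, V s))) := by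
      have hfn : (fun n => x t + ∑ i ∈ Finset.range (φ n + 1), ((i:ℝ)+1) * M i t)
          = fun n => (((((x 0 + ∑ i ∈ Finset.range (φ n + 1), ((i:ℝ)+1) * M i 0)
            + (r + α) * t
            + (∫ s in (0:ℝ)..t, ∑ j ∈ Finset.range (φ n), k j * x s * M j s))
            - ((φ n : ℝ)+1) * (∫ s in (0:ℝ)..t, k (φ n) * x s * M (φ n) s))
            - (∫ s in (0:ℝ)..t, ∑ i ∈ Finset.range (φ n + 1),
                ((i:ℝ)+1) * ((p i + q i) * M i s)))
            - (∫ s in (0:ℝ)..t, x s * W s)) + (∫ s in (0:ℝ)..t, V s) :=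
        funext (fun n => step2 (φ n))
      rw [hfn]
      exact ((((((tendsto_const_nhds.add (hT0.comp hφmono.tendsto_atTop)).add
        tendsto_const_nhds).add (hDCT1.comp hφmono.tendsto_atTop)).sub hφtend).sub
        (hDCT2.comp hφmono.tendsto_atTop)).sub tendsto_const_nhds).add tendsto_const_nhds
    have hEq := tendsto_nhds_unique hseq1 hseq2
    linarith [hEq]
  -- continuity of primitives
  have hprim : ∀ f : ℝ → ℝ, (∀ u ∈ D, IntervalIntegrable f volume 0 u) →
      ContinuousOn (fun v => ∫ s in (0:ℝ)..v, f s) D := by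
    intro f hf u hu
    have h1 : u < (u + T)/2 := by
      have := hu.2; simp only [hDdef, mem_Ico] at hu; linarith [hu.2]
    have h2 : (u + T)/2 < T := by
      simp only [hDdef, mem_Ico] at hu; linarith [hu.2]
    have h3 : (u + T)/2 ∈ D := by
      constructor
      · simp only [hDdef, mem_Ico] at hu; linarith [hu.1, hu.2]
      · exact h2
    have hint : IntervalIntegrable f volume (min 0 0) (max 0 ((u + T)/2)) := by
      rw [min_self, max_eq_right h3.1]
      exact hf _ h3
    have hc := intervalIntegral.continuousWithinAt_primitive (μ := volume)
      (b₀ := u) (b₁ := 0) (b₂ := (u + T)/2) (measure_singleton u) hint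
    exact ContinuousWithinAt.mono_of_mem_nhdsWithin hc (mem_nhdsWithin.2
      ⟨Iio ((u+T)/2), isOpen_Iio, h1, fun y hy => ⟨hy.2.1, hy.1.le⟩⟩)
  have hPrimΦ : ContinuousOn (fun u => ∫ s in (0:ℝ)..u, Φ s) D := hprim Φ hΦ_ii
  have hPrimV : ContinuousOn (fun u => ∫ s in (0:ℝ)..u, V s) D := hprim V hV_ii
  have hScont : ContinuousOn S D := by
    apply ContinuousOn.congr (f := fun u => x 0 + S 0 + (r + α) * u
      - (∫ s in (0:ℝ)..u, Φ s) + (∫ s in (0:ℝ)..u, V s) - x u)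
      ((((continuousOn_const.add (continuousOn_const.mul continuousOn_id)).sub
        hPrimΦ).add hPrimV).sub hxC)
    exact hkey
  have hWcont : ContinuousOn W D := by
    have hle : ∀ i : ℕ, ∀ s ∈ D, k i * M i s ≤ (Ck + Cq) * (((i:ℝ)+1) * M i s) := by
      intro i s hs
      have h1 : k i ≤ (Ck + Cq) * ((i:ℝ)+1) := by
        nlinarith [hkO i, mul_nonneg hCq0 (by positivity : (0:ℝ) ≤ (i:ℝ)+1)]
      calc k i * M i s ≤ ((Ck + Cq) * ((i:ℝ)+1)) * M i s :=
            mul_le_mul_of_nonneg_right h1 (hMn i s hs)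
        _ = (Ck + Cq) * (((i:ℝ)+1) * M i s) := by ring
    have hGc : ContinuousOn (fun s => ∑' i : ℕ, (Ck + Cq) * (((i:ℝ)+1) * M i s)) D := by
      apply ContinuousOn.congr (continuousOn_const.mul hScont)
      intro s _
      exact tsum_mul_left
    exact tsum_contOn_of_dom hContkM (fun i s hs => hkM_nonneg i s hs) hle
      (fun s hs => (hsum1 s hs).mul_left _)
      (fun i => continuousOn_const.mul (continuousOn_const.mul (hMC i))) hGc
  have hVcont : ContinuousOn V D := by
    have hle : ∀ i : ℕ, ∀ s ∈ D, (i:ℝ) * q i * M i s ≤ (Ck + Cq) * (((i:ℝ)+1) * M i s) := by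
      intro i s hs
      have h1 : (i:ℝ) * q i ≤ (Ck + Cq) * ((i:ℝ)+1) := by
        nlinarith [mul_le_mul_of_nonneg_left (hqB i) (Nat.cast_nonneg (α := ℝ) i),
          hCq0, hCk0, Nat.cast_nonneg (α := ℝ) i]
      calc (i:ℝ) * q i * M i s ≤ ((Ck + Cq) * ((i:ℝ)+1)) * M i s :=
            mul_le_mul_of_nonneg_right h1 (hMn i s hs)
        _ = (Ck + Cq) * (((i:ℝ)+1) * M i s) := by ring
    have hGc : ContinuousOn (fun s => ∑' i : ℕ, (Ck + Cq) * (((i:ℝ)+1) * M i s)) D := by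
      apply ContinuousOn.congr (continuousOn_const.mul hScont)
      intro s _
      exact tsum_mul_left
    exact tsum_contOn_of_dom hContiqM (fun i s hs => hiqM_nonneg i s hs) hle
      (fun s hs => (hsum1 s hs).mul_left _)
      (fun i => continuousOn_const.mul (continuousOn_const.mul (hMC i))) hGc
  -- FTC helper
  have hftc : ∀ f : ℝ → ℝ, ContinuousOn f D → ∀ u ∈ D,
      HasDerivWithinAt (fun v => ∫ s in (0:ℝ)..v, f s) (f u) D u := by
    intro f hf u hu
    have hu0 : (0:ℝ) ≤ u := hu.1
    have h1 : u < (u + T)/2 := by linarith [hu.2]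
    have h2 : (u + T)/2 < T := by linarith [hu.2]
    have hsub : Icc (0:ℝ) ((u + T)/2) ⊆ D := fun s hs => ⟨hs.1, lt_of_le_of_lt hs.2 h2⟩
    haveI : Fact (u ∈ Icc (0:ℝ) ((u + T)/2)) := ⟨⟨hu0, h1.le⟩⟩
    have hint : IntervalIntegrable f volume 0 u :=
      ContinuousOn.intervalIntegrable (by
        rw [uIcc_of_le hu0]; exact hf.mono (hIccD hu))
    have hmeas : StronglyMeasurableAtFilter f (𝓝[Icc (0:ℝ) ((u + T)/2)] u) volume :=
      (hf.mono hsub).stronglyMeasurableAtFilter_nhdsWithin measurableSet_Icc u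
    have hd := intervalIntegral.integral_hasDerivWithinAt_right (a := 0)
      (s := Icc (0:ℝ) ((u + T)/2)) hint hmeas
      ((hf.mono hsub) u ⟨hu0, h1.le⟩)
    exact HasDerivWithinAt.mono_of_mem_nhdsWithin hd (mem_nhdsWithin.2
      ⟨Iio ((u+T)/2), isOpen_Iio, h1, fun y hy => ⟨hy.2.1, hy.1.le⟩⟩)
  refine ⟨?_, ?_, ?_, ?_⟩
  · intro t ht
    refine ⟨?_, ?_, ?_⟩
    · have hf0c : ContinuousOn (fun s => k 0 * x s * M 0 s + (p 0 + q 0) * M 0 s) D :=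
        (hContA 0).add (hContB 0)
      have hd := hftc _ hf0c t ht
      have hlin : HasDerivWithinAt (fun u => M 0 0 + r * u) r D t := by
        simpa using (((hasDerivWithinAt_id t D).const_mul r).const_add (M 0 0))
      have hd2 := hlin.sub hd
      have hd3 : HasDerivWithinAt (M 0) (r - (k 0 * x t * M 0 t + (p 0 + q 0) * M 0 t)) D t :=
        hd2.congr (fun y hy => hsol.eq_M0 y hy) (hsol.eq_M0 t ht)
      convert hd3 using 1
      ring
    · intro i hi
      have hfic : ContinuousOn (fun s => k (i-1) * x s * M (i-1) s - k i * x s * M i s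
          - (p i + q i) * M i s) D := ((hContA (i-1)).sub (hContA i)).sub (hContB i)
      have hd := (hftc _ hfic t ht).const_add (M i 0)
      exact hd.congr (fun y hy => hsol.eq_M i hi y hy) (hsol.eq_M i hi t ht)
    · have hgxc : ContinuousOn (fun s => -(x s * W s) + V s) D :=
        ((hxC.mul hWcont).neg).add hVcont
      have hd := hftc _ hgxc t ht
      have hlin : HasDerivWithinAt (fun u => x 0 + α * u) α D t := by
        simpa using (((hasDerivWithinAt_id t D).const_mul α).const_add (x 0))
      have hd2 := hlin.add hd
      have hd3 : HasDerivWithinAt x (α + (-(x t * W t) + V t)) D t := by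
        apply hd2.congr
        · intro y hy
          have he := hsol.eq_x y hy
          simp only [hWdef, hVdef] at he
          exact he
        · have he := hsol.eq_x t ht
          simp only [hWdef, hVdef] at he
          exact he
      simp only [hWdef, hVdef]
      have hval : α - x t * W t + V t = α + (-(x t * W t) + V t) := by ring
      rw [hval]
      exact hd3
  · simp only [hWdef, hVdef]
    exact (continuousOn_const.sub (hxC.mul hWcont)).add hVcont
  · intro i _
    exact ((hContA (i-1)).sub (hContA i)).sub (hContB i)
  · exact (continuousOn_const.sub (hContA 0)).sub (hContB 0)
end
end

section
/- Let (p_i), (q_i), (k_i) be nonnegative with p_i = O(1), q_i = O(i), k_i = O(i^γ) for some γ ∈ [0,1]. If y_0 belongs to the weighted positive cone X_+^{1+γ} (i.e., y_0 ≥ 0 and |y_{01}| + Σ_{i≥2}(i−1)^{1+γ}|y_{0i}| < ∞), then the unique solution y of the silicosis system with y(0) = y_0 satisfies y(t) ∈ X_+^{1+γ} for all t > 0. Moreover the weighted norm satisfies the exponential bound y_1(t) + Σ_{i≥2}(i−1)^{1+γ} y_i(t) ≤ C_1 e^{C_2 t} on compacts, with constants depending only on T, the coefficients, and the initial data. -/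
open MeasureTheory Set Filter

noncomputable section

lemma rpow_succ_sub_le' {γ : ℝ} (hγ0 : 0 ≤ γ) (hγ1 : γ ≤ 1) (a : ℝ) (ha : 1 ≤ a) :
    (a + 1) ^ ((1:ℝ) + γ) - a ^ ((1:ℝ) + γ) ≤ 4 * a ^ γ := by
  have ha0 : (0:ℝ) < a := lt_of_lt_of_le one_pos ha
  have hder : ∀ y ∈ Icc a (a+1), HasDerivWithinAt (fun z : ℝ => z ^ ((1:ℝ)+γ))
      (((1:ℝ)+γ) * y ^ γ) (Icc a (a+1)) y := by
    intro y hy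
    have hy0 : y ≠ 0 := by nlinarith [hy.1]
    have h := (Real.hasDerivAt_rpow_const (x := y) (p := (1:ℝ)+γ) (Or.inl hy0))
    have h2 : (1:ℝ) + γ - 1 = γ := by ring
    rw [h2] at h
    exact h.hasDerivWithinAt
  have bnd : ∀ y ∈ Icc a (a+1), ‖((1:ℝ)+γ) * y ^ γ‖ ≤ 4 * a ^ γ := by
    intro y hy
    have hy0 : (0:ℝ) ≤ y := by nlinarith [hy.1]
    have h1 : y ^ γ ≤ (a+1) ^ γ := Real.rpow_le_rpow hy0 hy.2 hγ0
    have h2 : (a+1) ^ γ ≤ (2*a) ^ γ := Real.rpow_le_rpow (by linarith) (by linarith) hγ0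
    have h3 : (2*a) ^ γ = 2 ^ γ * a ^ γ := Real.mul_rpow (by norm_num) ha0.le
    have h4 : (2:ℝ) ^ γ ≤ 2 := by
      calc (2:ℝ) ^ γ ≤ (2:ℝ) ^ (1:ℝ) := Real.rpow_le_rpow_of_exponent_le one_le_two hγ1
        _ = 2 := Real.rpow_one 2
    have h5 : (0:ℝ) ≤ a ^ γ := Real.rpow_nonneg ha0.le γ
    have h6 : (0:ℝ) ≤ y ^ γ := Real.rpow_nonneg hy0 γ
    rw [Real.norm_eq_abs, abs_of_nonneg (by positivity)]
    nlinarith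
  have hmvt := Convex.norm_image_sub_le_of_norm_hasDerivWithin_le hder bnd (convex_Icc a (a+1))
    (left_mem_Icc.2 (by linarith)) (right_mem_Icc.2 (by linarith))
  rw [Real.norm_eq_abs, Real.norm_eq_abs] at hmvt
  have habs : |(a+1) - a| = 1 := by rw [add_sub_cancel_left]; norm_num
  rw [habs, mul_one] at hmvt
  calc (a + 1) ^ ((1:ℝ) + γ) - a ^ ((1:ℝ) + γ) ≤ |(a + 1) ^ ((1:ℝ) + γ) - a ^ ((1:ℝ) + γ)| :=
        le_abs_self _
    _ ≤ 4 * a ^ γ := hmvt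

/-- Proposition 8.1, invariance of `X₊^{1+γ}`: if `pᵢ = O(1)`,
`qᵢ = O(i)`, `kᵢ = O(i^γ)` with `γ ∈ [0,1]`, and the initial datum lies in the
weighted positive cone `X₊^{1+γ}`, then the (unique) solution stays in `X₊^{1+γ}` for
all `t > 0`, with the weighted norm bounded by `C₁ e^{C₂ t}` on compacts, the
constants depending only on `T`, the coefficients, and the initial data. -/
theorem silicosis_weighted_cone_invariance
    (k p q : ℕ → ℝ)
    (hk : ∀ i, 0 ≤ k i) (hp : ∀ i, 0 ≤ p i) (hq : ∀ i, 0 ≤ q i)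
    (r α : ℝ) (hr : 0 ≤ r) (hα : 0 ≤ α)
    (γ : ℝ) (hγ0 : 0 ≤ γ) (hγ1 : γ ≤ 1)
    (Cp : ℝ) (hpB : ∀ i : ℕ, p i ≤ Cp)
    (Cq : ℝ) (hqO : ∀ i : ℕ, q i ≤ Cq * ((i : ℝ) + 1))
    (Ck : ℝ) (hkO : ∀ i : ℕ, k i ≤ Ck * ((i : ℝ) + 1) ^ γ)
    (x : ℝ → ℝ) (M : ℕ → ℝ → ℝ)
    (hsol : IsSol k p q r α (Set.Ici 0) x M)
    -- `y₀ ∈ X₊^{1+γ}`: the solution is nonnegative by definition; the initial datum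
    -- has finite weighted norm
    (hmom0 : Summable (fun i : ℕ => ((i : ℝ) + 1) ^ ((1:ℝ) + γ) * M i 0)) :
    -- the solution stays in `X₊^{1+γ}` ...
    (∀ t : ℝ, 0 ≤ t → Summable (fun i : ℕ => ((i : ℝ) + 1) ^ ((1:ℝ) + γ) * M i t)) ∧
    -- ... with an exponential bound for the weighted norm on compacts
    (∀ T : ℝ, 0 < T → ∃ C1 C2 : ℝ, ∀ t ∈ Icc (0:ℝ) T,
      x t + ∑' i : ℕ, ((i : ℝ) + 1) ^ ((1:ℝ) + γ) * M i t ≤ C1 * Real.exp (C2 * t)) := by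

  set w : ℕ → ℝ := fun i => ((i : ℝ) + 1) ^ ((1:ℝ) + γ) with hw
  have hw_nonneg : ∀ i, 0 ≤ w i := fun i => Real.rpow_nonneg (by positivity) _
  have hw0 : w 0 = 1 := by simp [hw]
  have hCk0 : 0 ≤ Ck := le_trans (hk 0) (by simpa using hkO 0)
  -- the integrand of the integral equations
  set g : ℕ → ℝ → ℝ := fun i s =>
    (if i = 0 then r else k (i-1) * x s * M (i-1) s)
      - k i * x s * M i s - (p i + q i) * M i s with hg
  have hgcont : ∀ i, ContinuousOn (g i) (Set.Ici 0) := by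
    intro i
    have h1 : ContinuousOn (fun s => k i * x s * M i s) (Set.Ici 0) :=
      (continuousOn_const.mul hsol.x_cont).mul (hsol.M_cont i)
    have h2 : ContinuousOn (fun s => (p i + q i) * M i s) (Set.Ici 0) :=
      continuousOn_const.mul (hsol.M_cont i)
    have hbr : ContinuousOn (fun s => if i = 0 then r else k (i-1) * x s * M (i-1) s)
        (Set.Ici 0) := by
      by_cases hi : i = 0
      · simp only [if_pos hi]; exact continuousOn_const
      · simp only [if_neg hi]
        exact (continuousOn_const.mul hsol.x_cont).mul (hsol.M_cont _)
    exact (hbr.sub h1).sub h2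
  have hMeq : ∀ i : ℕ, ∀ t ∈ Set.Ici (0:ℝ), M i t = M i 0 + ∫ s in (0:ℝ)..t, g i s := by
    intro i t ht
    cases i with
    | zero =>
      have h0 := hsol.eq_M0 t ht
      have hint : IntervalIntegrable (fun s => k 0 * x s * M 0 s + (p 0 + q 0) * M 0 s)
          volume 0 t := by
        apply ContinuousOn.intervalIntegrable
        apply ContinuousOn.mono
          (((continuousOn_const.mul hsol.x_cont).mul (hsol.M_cont 0)).add
            (continuousOn_const.mul (hsol.M_cont 0)))
        rw [Set.uIcc_of_le ht]
        exact fun s hs => hs.1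
      have hgi : ∫ s in (0:ℝ)..t, g 0 s
          = r * t - ∫ s in (0:ℝ)..t, (k 0 * x s * M 0 s + (p 0 + q 0) * M 0 s) := by
        have heq : ∀ s, g 0 s = r - (k 0 * x s * M 0 s + (p 0 + q 0) * M 0 s) := by
          intro s; simp only [hg, if_true]; ring
        rw [intervalIntegral.integral_congr (fun s _ => heq s),
          intervalIntegral.integral_sub intervalIntegrable_const hint,
          intervalIntegral.integral_const]
        simp [mul_comm]
      rw [hgi]; linarith
    | succ n =>
      have h0 := hsol.eq_M (n+1) (Nat.succ_le_succ (Nat.zero_le n)) t ht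
      have hgi : ∀ s, g (n+1) s
          = k (n+1-1) * x s * M (n+1-1) s - k (n+1) * x s * M (n+1) s
            - (p (n+1) + q (n+1)) * M (n+1) s := by
        intro s; simp [hg]
      rw [intervalIntegral.integral_congr (fun s _ => (hgi s).symm)] at h0
      exact h0
  -- one-sided derivatives
  have hderiv : ∀ i : ℕ, ∀ t ∈ Set.Ici (0:ℝ),
      HasDerivWithinAt (M i) (g i t) (Set.Ici t) t := by
    intro i t ht
    have hGcont : Continuous (fun s : ℝ => g i (max s 0)) := by
      apply (hgcont i).comp_continuous (continuous_id.max continuous_const)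
      intro s; exact le_max_right s 0
    have hGeq : ∀ s, 0 ≤ s → g i (max s 0) = g i s := by
      intro s hs; rw [max_eq_left hs]
    have hF : HasDerivAt (fun u => M i 0 + ∫ τ in (0:ℝ)..u, g i (max τ 0)) (g i (max t 0)) t :=
      HasDerivAt.const_add _ (hGcont.integral_hasStrictDerivAt 0 t).hasDerivAt
    rw [hGeq t ht] at hF
    apply hF.hasDerivWithinAt.congr
    · intro u hu
      have hu0 : (0:ℝ) ≤ u := le_trans ht hu
      rw [hMeq i u hu0]
      congr 1
      apply intervalIntegral.integral_congr
      intro s hs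
      rw [Set.uIcc_of_le hu0] at hs
      exact (hGeq s hs.1).symm
    · rw [hMeq i t ht]
      congr 1
      apply intervalIntegral.integral_congr
      intro s hs
      rw [Set.uIcc_of_le ht] at hs
      exact (hGeq s hs.1).symm
  -- main estimate on compacts
  have key : ∀ T : ℝ, 0 ≤ T → ∃ C1 C2 : ℝ, ∀ t ∈ Set.Icc (0:ℝ) T,
      Summable (fun i : ℕ => w i * M i t) ∧
        x t + ∑' i : ℕ, w i * M i t ≤ C1 * Real.exp (C2 * t) := by
    intro T hT
    obtain ⟨C, hC⟩ := hsol.norm_bdd T (fun s hs => hs.1)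
    set X : ℝ := max C 0 with hX
    have hX0 : (0:ℝ) ≤ X := le_max_right _ _
    have hxle : ∀ t ∈ Set.Icc (0:ℝ) T, x t ≤ X := by
      intro t ht
      have h1 : 0 ≤ ∑' i : ℕ, ((i:ℝ)+1) * M i t :=
        tsum_nonneg fun i => mul_nonneg (by positivity) (hsol.M_nonneg i t ht.1)
      calc x t ≤ x t + ∑' i : ℕ, ((i:ℝ)+1) * M i t := le_add_of_nonneg_right h1
        _ ≤ C := hC t ht
        _ ≤ X := le_max_left _ _
    set K : ℝ := 4 * Ck * X + 1 with hK
    have hK0 : (0:ℝ) < K := by positivity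
    set A0 : ℝ := ∑' i : ℕ, w i * M i 0 with hA0
    have hA0' : (0:ℝ) ≤ A0 :=
      tsum_nonneg fun i => mul_nonneg (hw_nonneg i) (hsol.M_nonneg i 0 (Set.mem_Ici.2 le_rfl))
    have main : ∀ N : ℕ, ∀ t ∈ Set.Icc (0:ℝ) T,
        ∑ i ∈ Finset.range N, w i * M i t ≤ gronwallBound A0 K r t := by
      intro N
      have hcont : ContinuousOn (fun t => ∑ i ∈ Finset.range N, w i * M i t)
          (Set.Icc (0:ℝ) T) := by
        apply continuousOn_finset_sum
        intro i _
        exact continuousOn_const.mul ((hsol.M_cont i).mono fun s hs => hs.1)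
      have hder : ∀ t ∈ Set.Ico (0:ℝ) T,
          HasDerivWithinAt (fun t => ∑ i ∈ Finset.range N, w i * M i t)
            (∑ i ∈ Finset.range N, w i * g i t) (Set.Ici t) t := by
        intro t ht
        exact HasDerivWithinAt.fun_sum fun i _ => (hderiv i t ht.1).const_mul (w i)
      have hinit : ∑ i ∈ Finset.range N, w i * M i 0 ≤ A0 :=
        Summable.sum_le_tsum _ (fun i _ => mul_nonneg (hw_nonneg i) (hsol.M_nonneg i 0 (Set.mem_Ici.2 le_rfl))) hmom0
      have hbnd : ∀ t ∈ Set.Ico (0:ℝ) T,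
          ∑ i ∈ Finset.range N, w i * g i t
            ≤ K * (∑ i ∈ Finset.range N, w i * M i t) + r := by
        intro t ht
        have ht' : t ∈ Set.Icc (0:ℝ) T := ⟨ht.1, ht.2.le⟩
        have hx0' : (0:ℝ) ≤ x t := hsol.x_nonneg t ht.1
        have hxX : x t ≤ X := hxle t ht'
        set a : ℕ → ℝ := fun i => w i * (k i * x t * M i t) with ha
        set b : ℕ → ℝ := fun j => w (j+1) * (k j * x t * M j t) with hb
        set u : ℕ → ℝ := fun i =>
          w i * (if i = 0 then r else k (i-1) * x t * M (i-1) t) with hu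
        have hb0 : ∀ j, 0 ≤ b j := fun j =>
          mul_nonneg (hw_nonneg _)
            (mul_nonneg (mul_nonneg (hk j) hx0') (hsol.M_nonneg j t ht.1))
        have h1 : ∀ i, w i * g i t ≤ u i - a i := by
          intro i
          have hM : 0 ≤ M i t := hsol.M_nonneg i t ht.1
          have hpos : 0 ≤ w i * ((p i + q i) * M i t) :=
            mul_nonneg (hw_nonneg i) (mul_nonneg (add_nonneg (hp i) (hq i)) hM)
          have hexp : w i * g i t = u i - a i - w i * ((p i + q i) * M i t) := by
            simp only [hg, hu, ha]; ring
          linarith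
        have h2 : ∑ i ∈ Finset.range N, u i ≤ r + ∑ j ∈ Finset.range N, b j := by
          cases N with
          | zero =>
            simp only [Finset.range_zero, Finset.sum_empty, add_zero]
            linarith
          | succ m =>
            rw [Finset.sum_range_succ' u m]
            have hu0 : u 0 = r := by simp [hu, hw0]
            have huj : ∀ j, u (j+1) = b j := by
              intro j; simp only [hu, hb, Nat.add_sub_cancel, if_neg (Nat.succ_ne_zero j)]
            rw [hu0, Finset.sum_congr rfl fun j _ => huj j]
            have hmono : ∑ j ∈ Finset.range m, b j ≤ ∑ j ∈ Finset.range (m+1), b j :=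
              Finset.sum_le_sum_of_subset_of_nonneg
                (Finset.range_subset_range.2 (Nat.le_succ m)) (fun j _ _ => hb0 j)
            linarith
        have h3 : ∀ j : ℕ, b j - a j ≤ K * (w j * M j t) := by
          intro j
          have hM : 0 ≤ M j t := hsol.M_nonneg j t ht.1
          have hj1 : (1:ℝ) ≤ (j:ℝ) + 1 := by
            have := Nat.cast_nonneg (α := ℝ) j; linarith
          have hrp : (0:ℝ) ≤ ((j:ℝ)+1) ^ γ := Real.rpow_nonneg (by positivity) γ
          have hdiff : w (j+1) - w j ≤ 4 * ((j:ℝ)+1) ^ γ := by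
            have hcast : w (j+1) = (((j:ℝ)+1) + 1) ^ ((1:ℝ)+γ) := by
              simp only [hw]; norm_num
            rw [hcast]
            exact rpow_succ_sub_le' hγ0 hγ1 ((j:ℝ)+1) hj1
          have hc0 : 0 ≤ k j * x t * M j t :=
            mul_nonneg (mul_nonneg (hk j) hx0') hM
          have e1 : k j * x t ≤ (Ck * ((j:ℝ)+1) ^ γ) * X :=
            mul_le_mul (hkO j) hxX hx0' (by positivity)
          have e2 : k j * x t * M j t ≤ (Ck * ((j:ℝ)+1) ^ γ) * X * M j t :=
            mul_le_mul_of_nonneg_right e1 hM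
          have hgg : ((j:ℝ)+1) ^ γ * ((j:ℝ)+1) ^ γ = ((j:ℝ)+1) ^ (γ+γ) :=
            (Real.rpow_add (by positivity) γ γ).symm
          have hge : ((j:ℝ)+1) ^ (γ+γ) ≤ ((j:ℝ)+1) ^ ((1:ℝ)+γ) :=
            Real.rpow_le_rpow_of_exponent_le hj1 (by linarith)
          have hwM : 0 ≤ w j * M j t := mul_nonneg (hw_nonneg j) hM
          calc b j - a j = (w (j+1) - w j) * (k j * x t * M j t) := by
                simp only [ha, hb]; ring
            _ ≤ (4 * ((j:ℝ)+1) ^ γ) * (k j * x t * M j t) :=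
                mul_le_mul_of_nonneg_right hdiff hc0
            _ ≤ (4 * ((j:ℝ)+1) ^ γ) * ((Ck * ((j:ℝ)+1) ^ γ) * X * M j t) :=
                mul_le_mul_of_nonneg_left e2 (by positivity)
            _ = (4 * Ck * X) * (((j:ℝ)+1) ^ γ * ((j:ℝ)+1) ^ γ) * M j t := by ring
            _ = (4 * Ck * X) * ((j:ℝ)+1) ^ (γ+γ) * M j t := by rw [hgg]
            _ ≤ (4 * Ck * X) * ((j:ℝ)+1) ^ ((1:ℝ)+γ) * M j t := by
                apply mul_le_mul_of_nonneg_right _ hM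
                exact mul_le_mul_of_nonneg_left hge (by positivity)
            _ = (4 * Ck * X) * (w j * M j t) := by simp only [hw]; ring
            _ ≤ K * (w j * M j t) := by
                apply mul_le_mul_of_nonneg_right _ hwM
                simp only [hK]; linarith
        calc ∑ i ∈ Finset.range N, w i * g i t
            ≤ ∑ i ∈ Finset.range N, (u i - a i) := Finset.sum_le_sum fun i _ => h1 i
          _ = ∑ i ∈ Finset.range N, u i - ∑ i ∈ Finset.range N, a i :=
              Finset.sum_sub_distrib _ _
          _ ≤ (r + ∑ j ∈ Finset.range N, b j) - ∑ i ∈ Finset.range N, a i := by linarith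
          _ = r + ∑ j ∈ Finset.range N, (b j - a j) := by rw [Finset.sum_sub_distrib]; ring
          _ ≤ r + ∑ j ∈ Finset.range N, K * (w j * M j t) := by
              have := Finset.sum_le_sum fun j (_ : j ∈ Finset.range N) => h3 j
              linarith
          _ = K * (∑ i ∈ Finset.range N, w i * M i t) + r := by
              rw [Finset.mul_sum]; ring
      have hgron := le_gronwallBound_of_liminf_deriv_right_le hcont
        (fun t ht r' hr' => (hder t ht).liminf_right_slope_le hr') hinit hbnd
      intro t ht
      simpa using hgron t ht
    refine ⟨X + A0 + r / K, K, ?_⟩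
    intro t ht
    have hnn : ∀ i : ℕ, 0 ≤ w i * M i t := fun i =>
      mul_nonneg (hw_nonneg i) (hsol.M_nonneg i t ht.1)
    have hSum : Summable (fun i : ℕ => w i * M i t) :=
      summable_of_sum_range_le hnn (fun N => main N t ht)
    refine ⟨hSum, ?_⟩
    have htsum : ∑' i : ℕ, w i * M i t ≤ gronwallBound A0 K r t :=
      Real.tsum_le_of_sum_range_le hnn (fun N => main N t ht)
    have hgb : gronwallBound A0 K r t
        = A0 * Real.exp (K*t) + r/K * (Real.exp (K*t) - 1) := by
      rw [gronwallBound_of_K_ne_0 hK0.ne']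
    have hexp1 : 1 ≤ Real.exp (K*t) := Real.one_le_exp (mul_nonneg hK0.le ht.1)
    have hrK : (0:ℝ) ≤ r / K := div_nonneg hr hK0.le
    have hXe : (0:ℝ) ≤ X * (Real.exp (K*t) - 1) :=
      mul_nonneg hX0 (by linarith)
    have hxt : x t ≤ X := hxle t ht
    rw [hgb] at htsum
    have : x t + ∑' i : ℕ, w i * M i t
        ≤ X + (A0 * Real.exp (K*t) + r/K * (Real.exp (K*t) - 1)) := add_le_add hxt htsum
    calc x t + ∑' i : ℕ, w i * M i t
        ≤ X + (A0 * Real.exp (K*t) + r/K * (Real.exp (K*t) - 1)) := this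
      _ ≤ (X + A0 + r/K) * Real.exp (K*t) := by nlinarith
  constructor
  · intro t ht
    obtain ⟨C1, C2, h⟩ := key t ht
    exact (h t ⟨ht, le_rfl⟩).1
  · intro T hT
    obtain ⟨C1, C2, h⟩ := key T hT.le
    exact ⟨C1, C2, fun t ht => (h t ht).2⟩
end
end
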